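/- arXiv:1610.00510 — 13 statements merged into one kernel-verified Lean document; each statement's English description precedes it below -/
import Mathlib

section
/- Let g : ℝ → ℝ be a bounded continuous function. Then (4!/(2π)⁴) · ∫ g(2 sin((θ₂ − θ₁)/2)) dθ₁dθ₂dθ₃dθ₄ over the ordered region 0 < θ₁ < θ₂ < θ₃ < θ₄ < 2π equals ∫₀² g(z) · (4/(π√(4−z²))) · [1 − 3·arcsin(z/2)·(π − arcsin(z/2))/π²] dz. (That is, the side s₂ = 2 sin((θ₂−θ₁)/2) of a uniform cyclic quadrilateral has density (4/(π√(4−z²)))[1 − 3 arcsin(z/2)(π − arcsin(z/2))/π²] on [0,2].) -/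
open MeasureTheory Real intervalIntegral Set

noncomputable section

/-- generic integrability helper -/
lemma integrable_of_bound {α : Type*} [MeasurableSpace α] {μ : Measure α} {f : α → ℝ}
    {s : Set α} {C : ℝ}
    (hmeas : AEStronglyMeasurable f μ) (hs : MeasurableSet s) (hμs : μ s < ⊤)
    (hsupp : ∀ a, f a ≠ 0 → a ∈ s) (hbound : ∀ a, |f a| ≤ C) : Integrable f μ := by
  refine Integrable.mono' (g := s.indicator fun _ => C) ?_ hmeas ?_
  · exact (integrable_indicator_iff hs).2 (integrableOn_const hμs.ne)
  · filter_upwards with a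
    rw [Real.norm_eq_abs]
    by_cases h : a ∈ s
    · simpa [Set.indicator_of_mem h] using hbound a
    · have hf0 : f a = 0 := by
        by_contra h'; exact h (hsupp a h')
      simp [hf0, Set.indicator_of_notMem h]

section OneD

variable {g : ℝ → ℝ}

/-- derivative helper: d/du (2 sin(u/2)) = cos(u/2) -/
lemma hasDerivAt_two_sin_half (u : ℝ) :
    HasDerivAt (fun u : ℝ => 2 * Real.sin (u / 2)) (Real.cos (u / 2)) u := by
  have h1 : HasDerivAt (fun u : ℝ => u / 2) (1 / 2) u := (hasDerivAt_id u).div_const 2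
  have h2 := (Real.hasDerivAt_sin (u / 2)).comp u h1
  have h3 := h2.const_mul (2 : ℝ)
  refine h3.congr_deriv ?_
  ring

lemma image_two_sin_half : (fun u : ℝ => 2 * Real.sin (u / 2)) '' (Set.Ioo 0 π) = Set.Ioo (0:ℝ) 2 := by
  ext z
  constructor
  · rintro ⟨u, ⟨hu0, huπ⟩, rfl⟩
    have h1 : (0:ℝ) < u / 2 := by linarith
    have h2 : u / 2 < π / 2 := by linarith
    have hs0 : 0 < Real.sin (u / 2) :=
      Real.sin_pos_of_pos_of_lt_pi h1 (by linarith [Real.pi_pos])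
    have hs1 : Real.sin (u / 2) < 1 := by
      have := Real.strictMonoOn_sin (a := u / 2) (b := π / 2)
        ⟨by linarith, le_of_lt h2⟩ ⟨by linarith [Real.pi_pos], le_refl _⟩ h2
      simpa [Real.sin_pi_div_two] using this
    constructor <;> nlinarith
  · rintro ⟨hz0, hz2⟩
    refine ⟨2 * Real.arcsin (z / 2), ⟨?_, ?_⟩, ?_⟩
    · have := Real.arcsin_pos.2 (by linarith : (0:ℝ) < z / 2)
      linarith
    · have := Real.arcsin_lt_pi_div_two.2 (by linarith : z / 2 < 1)
      linarith
    · have : Real.sin (2 * Real.arcsin (z / 2) / 2) = z / 2 := by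
        rw [show 2 * Real.arcsin (z / 2) / 2 = Real.arcsin (z / 2) by ring]
        exact Real.sin_arcsin (by linarith) (by linarith)
      show 2 * Real.sin (2 * Real.arcsin (z / 2) / 2) = z
      rw [this]; ring

lemma injOn_two_sin_half : Set.InjOn (fun u : ℝ => 2 * Real.sin (u / 2)) (Set.Ioo 0 π) := by
  have : StrictMonoOn (fun u : ℝ => 2 * Real.sin (u / 2)) (Set.Ioo 0 π) := by
    intro x hx y hy hxy
    have hx2 : x / 2 ∈ Set.Icc (-(π/2)) (π/2) := ⟨by linarith [hx.1, Real.pi_pos], by linarith [hx.2]⟩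
    have hy2 : y / 2 ∈ Set.Icc (-(π/2)) (π/2) := ⟨by linarith [hy.1, Real.pi_pos], by linarith [hy.2]⟩
    have := Real.strictMonoOn_sin hx2 hy2 (by linarith)
    simpa using by linarith [this]
  exact this.injOn

/-- Substitution z = 2 sin(u/2) for the RHS density integral. -/
lemma rhs_subst (hg : Continuous g) :
    (∫ z in (0:ℝ)..2, g z * (4 / (π * Real.sqrt (4 - z ^ 2))) *
      (1 - 3 * Real.arcsin (z / 2) * (π - Real.arcsin (z / 2)) / π ^ 2)) =
    ∫ u in Set.Ioo (0:ℝ) π, g (2 * Real.sin (u / 2)) * ((4*π^2 - 6*π*u + 3*u^2) / (2*π^3)) := by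
  have hπ := Real.pi_pos
  rw [intervalIntegral.integral_of_le (by norm_num : (0:ℝ) ≤ 2),
    MeasureTheory.integral_Ioc_eq_integral_Ioo, ← image_two_sin_half]
  rw [MeasureTheory.integral_image_eq_integral_abs_deriv_smul measurableSet_Ioo
    (fun x _ => (hasDerivAt_two_sin_half x).hasDerivWithinAt) injOn_two_sin_half]
  refine MeasureTheory.setIntegral_congr_fun measurableSet_Ioo (fun u hu => ?_)
  obtain ⟨hu0, huπ⟩ := hu
  have hc : 0 < Real.cos (u / 2) :=
    Real.cos_pos_of_mem_Ioo ⟨by linarith, by linarith⟩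
  have hs : 0 < Real.sin (u / 2) :=
    Real.sin_pos_of_pos_of_lt_pi (by linarith) (by linarith)
  have hsqrt : Real.sqrt (4 - (2 * Real.sin (u / 2)) ^ 2) = 2 * Real.cos (u / 2) := by
    have h4 : 4 - (2 * Real.sin (u / 2)) ^ 2 = (2 * Real.cos (u / 2)) ^ 2 := by
      nlinarith [Real.sin_sq_add_cos_sq (u / 2)]
    rw [h4, Real.sqrt_sq (by linarith)]
  have harcsin : Real.arcsin (2 * Real.sin (u / 2) / 2) = u / 2 := by
    rw [show 2 * Real.sin (u / 2) / 2 = Real.sin (u / 2) by ring]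
    exact Real.arcsin_sin (by linarith) (by linarith)
  rw [smul_eq_mul, hsqrt, harcsin, abs_of_pos hc]
  have hπ' : (π : ℝ) ≠ 0 := ne_of_gt hπ
  have hc' : Real.cos (u / 2) ≠ 0 := ne_of_gt hc
  field_simp
  ring

/-- reflection: fold [0,2π] to [0,π]. -/
lemma reflect_lemma (hg : Continuous g) :
    (∫ u in (0:ℝ)..(2*π), g (2 * Real.sin (u / 2)) * (2*π - u)^3) =
    ∫ u in (0:ℝ)..π, g (2 * Real.sin (u / 2)) * ((2*π - u)^3 + u^3) := by
  have hπ := Real.pi_pos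
  have hcont : Continuous fun u : ℝ => g (2 * Real.sin (u / 2)) * (2*π - u)^3 := by
    exact ((hg.comp (by continuity)).mul (by continuity))
  have hsplit := intervalIntegral.integral_add_adjacent_intervals
    (a := (0:ℝ)) (b := π) (c := 2*π) (μ := volume) (hcont.intervalIntegrable 0 π) (hcont.intervalIntegrable π (2*π))
  have hsub : (∫ u in π..(2*π), g (2 * Real.sin (u / 2)) * (2*π - u)^3) =
      ∫ u in (0:ℝ)..π, g (2 * Real.sin (u / 2)) * u^3 := by
    have := intervalIntegral.integral_comp_sub_left
      (a := 0) (b := π) (fun v => g (2 * Real.sin (v / 2)) * (2*π - v)^3) (2*π)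
    rw [show 2*π - π = π by ring, show 2*π - 0 = 2*π by ring] at this
    rw [← this]
    refine intervalIntegral.integral_congr (fun x _ => ?_)
    have h1 : (2*π - x) / 2 = π - x / 2 := by ring
    rw [h1, Real.sin_pi_sub]
    ring_nf
  have hcont2 : Continuous fun u : ℝ => g (2 * Real.sin (u / 2)) * u^3 :=
    (hg.comp (by continuity)).mul (by continuity)
  have hadd : (∫ u in (0:ℝ)..π, g (2 * Real.sin (u / 2)) * ((2*π - u)^3 + u^3)) =
      (∫ u in (0:ℝ)..π, g (2 * Real.sin (u / 2)) * (2*π - u)^3) +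
      ∫ u in (0:ℝ)..π, g (2 * Real.sin (u / 2)) * u^3 := by
    rw [← intervalIntegral.integral_add
      (hcont.intervalIntegrable 0 π) (hcont2.intervalIntegrable 0 π)]
    refine intervalIntegral.integral_congr (fun x _ => ?_)
    ring
  rw [hadd, ← hsub, hsplit]

/-- integration by parts step. -/
lemma byparts_lemma (hg : Continuous g) :
    (∫ t in (0:ℝ)..(2*π), (∫ u in (0:ℝ)..t, g (2 * Real.sin (u / 2))) * ((2*π - t)^2 / 2)) =
    ∫ u in (0:ℝ)..(2*π), g (2 * Real.sin (u / 2)) * ((2*π - u)^3 / 6) := by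
  have hπ := Real.pi_pos
  set h : ℝ → ℝ := fun u => g (2 * Real.sin (u / 2)) with hh
  have hhc : Continuous h := hg.comp (by continuity)
  have hu : ∀ t ∈ Set.uIcc (0:ℝ) (2*π),
      HasDerivAt (fun t => ∫ u in (0:ℝ)..t, h u) (h t) t := by
    intro t _
    exact intervalIntegral.integral_hasDerivAt_right (hhc.intervalIntegrable 0 t)
      hhc.aestronglyMeasurable.stronglyMeasurableAtFilter hhc.continuousAt
  have hv : ∀ t ∈ Set.uIcc (0:ℝ) (2*π),
      HasDerivAt (fun t => -((2*π - t)^3 / 6)) ((2*π - t)^2 / 2) t := by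
    intro t _
    have h1 : HasDerivAt (fun t : ℝ => 2*π - t) (-1) t := by
      simpa using (hasDerivAt_id t).const_sub (2*π)
    have h2 := ((h1.pow 3).div_const 6).neg
    refine h2.congr_deriv ?_
    norm_num
    ring
  have hib := intervalIntegral.integral_mul_deriv_eq_deriv_mul hu hv
    (hhc.intervalIntegrable 0 (2*π))
    ((by continuity : Continuous fun t : ℝ => (2*π - t)^2 / 2).intervalIntegrable 0 (2*π))
  have e2 : (∫ x in (0:ℝ)..(2*π), h x * -((2*π - x)^3/6)) =
      -∫ x in (0:ℝ)..(2*π), h x * ((2*π - x)^3/6) := by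
    rw [← intervalIntegral.integral_neg]
    refine intervalIntegral.integral_congr (fun x _ => ?_)
    ring
  rw [hib, intervalIntegral.integral_same, e2]
  ring

end OneD

section Fubini

/-- the ordered region -/
def Sq : Set (ℝ × ℝ × ℝ × ℝ) :=
  {p | 0 < p.1 ∧ p.1 < p.2.1 ∧ p.2.1 < p.2.2.1 ∧ p.2.2.1 < p.2.2.2 ∧ p.2.2.2 < 2 * π}

lemma measurableSet_Sq : MeasurableSet Sq := by
  have m1 : Measurable fun p : ℝ × ℝ × ℝ × ℝ => p.1 := measurable_fst
  have m2 : Measurable fun p : ℝ × ℝ × ℝ × ℝ => p.2.1 := measurable_fst.comp measurable_snd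
  have m3 : Measurable fun p : ℝ × ℝ × ℝ × ℝ => p.2.2.1 :=
    measurable_fst.comp (measurable_snd.comp measurable_snd)
  have m4 : Measurable fun p : ℝ × ℝ × ℝ × ℝ => p.2.2.2 :=
    measurable_snd.comp (measurable_snd.comp measurable_snd)
  exact (measurableSet_lt measurable_const m1).inter ((measurableSet_lt m1 m2).inter
    ((measurableSet_lt m2 m3).inter ((measurableSet_lt m3 m4).inter
      (measurableSet_lt m4 measurable_const))))

variable {g : ℝ → ℝ}

lemma fubini4 (hg : Continuous g) {C : ℝ} (hC : ∀ x, |g x| ≤ C) :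
    (∫ p in Sq, g (2 * Real.sin ((p.2.1 - p.1) / 2))) =
    ∫ t in (0:ℝ)..(2*π), (∫ u in (0:ℝ)..t, g (2 * Real.sin (u / 2))) * ((2*π - t)^2 / 2) := by
  have hπ := Real.pi_pos
  have hC0 : 0 ≤ C := le_trans (abs_nonneg (g 0)) (hC 0)
  set T : ℝ := 2 * π with hTdef
  have hT0 : 0 < T := by positivity
  set G : ℝ × ℝ × ℝ × ℝ → ℝ := fun p => g (2 * Real.sin ((p.2.1 - p.1) / 2)) with hGdef
  have hGc : Continuous G := by
    apply hg.comp
    apply continuous_const.mul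
    apply Real.continuous_sin.comp
    exact ((continuous_fst.comp continuous_snd).sub continuous_fst).div_const 2
  set h : ℝ → ℝ := fun u => g (2 * Real.sin (u / 2)) with hhdef
  have hhc : Continuous h := hg.comp (by continuity)
  have hhC : ∀ u, |h u| ≤ C := fun u => hC _
  have hS := measurableSet_Sq
  -- innermost integral over w
  have step4 : ∀ x y z : ℝ, (∫ w, Sq.indicator G (x, y, z, w)) =
      if 0 < x ∧ x < y ∧ y < z then h (y - x) * max (T - z) 0 else 0 := by
    intro x y z
    by_cases P : 0 < x ∧ x < y ∧ y < z
    · have hfun : (fun w => Sq.indicator G (x, y, z, w)) =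
          (Set.Ioo z T).indicator (fun _ => h (y - x)) := by
        funext w
        by_cases hw : w ∈ Set.Ioo z T
        · rw [Set.indicator_of_mem hw]
          have hmem : (x, y, z, w) ∈ Sq := ⟨P.1, P.2.1, P.2.2, hw.1, hw.2⟩
          rw [Set.indicator_of_mem hmem]
        · rw [Set.indicator_of_notMem hw, Set.indicator_of_notMem]
          intro hmem
          exact hw ⟨hmem.2.2.2.1, hmem.2.2.2.2⟩
      rw [hfun, MeasureTheory.integral_indicator_const _ measurableSet_Ioo,
        Real.volume_real_Ioo, smul_eq_mul, if_pos P]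
      rw [mul_comm]
    · have hfun : (fun w => Sq.indicator G (x, y, z, w)) = fun _ => (0:ℝ) := by
        funext w
        rw [Set.indicator_of_notMem]
        intro hmem
        exact P ⟨hmem.1, hmem.2.1, hmem.2.2.1⟩
      rw [hfun, MeasureTheory.integral_zero, if_neg P]
  -- integral over z
  have hIoo : ∀ y : ℝ, (∫ z in Set.Ioo y T, (T - z)) = (max (T - y) 0)^2 / 2 := by
    intro y
    by_cases hy : y ≤ T
    · rw [← MeasureTheory.integral_Ioc_eq_integral_Ioo,
        ← intervalIntegral.integral_of_le hy]
      have := intervalIntegral.integral_comp_sub_left (a := y) (b := T) (fun v => v) T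
      rw [sub_self] at this
      rw [this, integral_id, max_eq_left (by linarith)]
      ring
    · rw [Set.Ioo_eq_empty (by intro hlt; exact hy (le_of_lt hlt)),
        MeasureTheory.setIntegral_empty, max_eq_right (by linarith), ]
      norm_num
  have step5 : ∀ x y : ℝ,
      (∫ z, if 0 < x ∧ x < y ∧ y < z then h (y - x) * max (T - z) 0 else 0) =
      if 0 < x ∧ x < y then h (y - x) * ((max (T - y) 0)^2 / 2) else 0 := by
    intro x y
    by_cases Q : 0 < x ∧ x < y
    · have hfun : (fun z => if 0 < x ∧ x < y ∧ y < z then h (y - x) * max (T - z) 0 else 0) =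
          (Set.Ioo y T).indicator (fun z => h (y - x) * (T - z)) := by
        funext z
        by_cases hz : z ∈ Set.Ioo y T
        · rw [Set.indicator_of_mem hz, if_pos ⟨Q.1, Q.2, hz.1⟩,
            max_eq_left (by linarith [hz.2])]
        · rw [Set.indicator_of_notMem hz]
          by_cases hz1 : y < z
          · have hz2 : T ≤ z := by
              by_contra hlt
              exact hz ⟨hz1, lt_of_not_ge hlt⟩
            rw [if_pos ⟨Q.1, Q.2, hz1⟩, max_eq_right (by linarith), mul_zero]
          · rw [if_neg (by rintro ⟨_, _, hzz⟩; exact hz1 hzz)]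
      rw [hfun, MeasureTheory.integral_indicator measurableSet_Ioo, if_pos Q]
      rw [MeasureTheory.integral_const_mul, hIoo y]
    · have hfun : (fun z => if 0 < x ∧ x < y ∧ y < z then h (y - x) * max (T - z) 0 else 0) =
          fun _ => (0:ℝ) := by
        funext z
        rw [if_neg (by rintro ⟨h1, h2, _⟩; exact Q ⟨h1, h2⟩)]
      rw [hfun, MeasureTheory.integral_zero, if_neg Q]
  -- integrability at each level
  have habs : ∀ (p : ℝ × ℝ × ℝ × ℝ), |Sq.indicator G p| ≤ C := by
    intro p
    by_cases hp : p ∈ Sq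
    · rw [Set.indicator_of_mem hp]; exact hC _
    · rw [Set.indicator_of_notMem hp, abs_zero]; exact hC0
  have hI4 : Integrable (Sq.indicator G) := by
    refine integrable_of_bound (C := C)
      ((hGc.stronglyMeasurable.indicator hS).aestronglyMeasurable)
      (measurableSet_Icc (a := ((0:ℝ),(0:ℝ),(0:ℝ),(0:ℝ))) (b := (T,T,T,T)))
      (IsCompact.measure_lt_top isCompact_Icc) ?_ habs
    intro p hp
    have hpS : p ∈ Sq := by
      by_contra hns; exact hp (Set.indicator_of_notMem hns G)
    obtain ⟨h1, h2, h3, h4, h5⟩ := hpS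
    simp only [Set.mem_Icc, Prod.le_def]
    and_intros <;> linarith
  have hslice3 : ∀ x : ℝ, Integrable (fun q : ℝ × ℝ × ℝ => Sq.indicator G (x, q)) := by
    intro x
    have hrew : (fun q : ℝ × ℝ × ℝ => Sq.indicator G (x, q)) =
        (Prod.mk x ⁻¹' Sq).indicator (fun q => G (x, q)) := rfl
    rw [hrew]
    refine integrable_of_bound (C := C)
      (((hGc.comp (Continuous.prodMk_right x)).stronglyMeasurable.indicator
        (hS.preimage measurable_prodMk_left)).aestronglyMeasurable)
      (measurableSet_Icc (a := ((0:ℝ),(0:ℝ),(0:ℝ))) (b := (T,T,T)))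
      (IsCompact.measure_lt_top isCompact_Icc) ?_ ?_
    · intro q hq
      have hqS : (x, q) ∈ Sq := by
        by_contra hns
        exact hq (Set.indicator_of_notMem hns _)
      obtain ⟨h1, h2, h3, h4, h5⟩ := hqS
      simp only [Set.mem_Icc, Prod.le_def]
      and_intros <;> linarith
    · intro q
      by_cases hq : q ∈ Prod.mk x ⁻¹' Sq
      · rw [Set.indicator_of_mem hq]; exact hC _
      · rw [Set.indicator_of_notMem hq, abs_zero]; exact hC0
  have hslice2 : ∀ x y : ℝ, Integrable (fun r : ℝ × ℝ => Sq.indicator G (x, y, r)) := by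
    intro x y
    have hmk : Measurable (fun r : ℝ × ℝ => (x, y, r)) :=
      (measurable_prodMk_left (x := x)).comp (measurable_prodMk_left (x := y))
    have hrew : (fun r : ℝ × ℝ => Sq.indicator G (x, y, r)) =
        ((fun r : ℝ × ℝ => (x, y, r)) ⁻¹' Sq).indicator (fun r => G (x, y, r)) := rfl
    rw [hrew]
    refine integrable_of_bound (C := C)
      (((hGc.comp ((Continuous.prodMk_right x).comp (Continuous.prodMk_right y))).stronglyMeasurable.indicator
        (hS.preimage hmk)).aestronglyMeasurable)
      (measurableSet_Icc (a := ((0:ℝ),(0:ℝ))) (b := (T,T)))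
      (IsCompact.measure_lt_top isCompact_Icc) ?_ ?_
    · intro r hr
      have hrS : (x, y, r) ∈ Sq := by
        by_contra hns
        exact hr (Set.indicator_of_notMem hns _)
      obtain ⟨h1, h2, h3, h4, h5⟩ := hrS
      simp only [Set.mem_Icc, Prod.le_def]
      and_intros <;> linarith
    · intro r
      by_cases hr : r ∈ (fun r : ℝ × ℝ => (x, y, r)) ⁻¹' Sq
      · rw [Set.indicator_of_mem hr]; exact hC _
      · rw [Set.indicator_of_notMem hr, abs_zero]; exact hC0
  -- Fubini chain
  have e0 : (∫ p in Sq, G p) = ∫ p, Sq.indicator G p :=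
    (MeasureTheory.integral_indicator hS).symm
  have e1 : (∫ p, Sq.indicator G p) = ∫ x, ∫ q : ℝ × ℝ × ℝ, Sq.indicator G (x, q) := by
    rw [MeasureTheory.Measure.volume_eq_prod] at hI4 ⊢
    exact MeasureTheory.integral_prod _ hI4
  have e2 : ∀ x : ℝ, (∫ q : ℝ × ℝ × ℝ, Sq.indicator G (x, q)) =
      ∫ y, ∫ r : ℝ × ℝ, Sq.indicator G (x, y, r) := by
    intro x
    have := hslice3 x
    rw [MeasureTheory.Measure.volume_eq_prod] at this ⊢
    exact MeasureTheory.integral_prod _ this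
  have e3 : ∀ x y : ℝ, (∫ r : ℝ × ℝ, Sq.indicator G (x, y, r)) =
      ∫ z, ∫ w, Sq.indicator G (x, y, z, w) := by
    intro x y
    have := hslice2 x y
    rw [MeasureTheory.Measure.volume_eq_prod] at this ⊢
    exact MeasureTheory.integral_prod _ this
  have e4 : ∀ x y : ℝ, (∫ r : ℝ × ℝ, Sq.indicator G (x, y, r)) =
      if 0 < x ∧ x < y then h (y - x) * ((max (T - y) 0)^2 / 2) else 0 := by
    intro x y
    rw [e3 x y, ← step5 x y]
    exact MeasureTheory.integral_congr_ae (Filter.Eventually.of_forall (fun z => step4 x y z))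
  have e5 : ∀ x : ℝ, (∫ q : ℝ × ℝ × ℝ, Sq.indicator G (x, q)) =
      ∫ y, (if 0 < x ∧ x < y then h (y - x) * ((max (T - y) 0)^2 / 2) else 0) := by
    intro x
    rw [e2 x]
    exact MeasureTheory.integral_congr_ae (Filter.Eventually.of_forall (fun y => e4 x y))
  -- swap the two remaining integrals
  have hswapint : Integrable (Function.uncurry fun x y : ℝ =>
      (if 0 < x ∧ x < y then h (y - x) * ((max (T - y) 0)^2 / 2) else 0))
      ((volume : Measure ℝ).prod volume) := by
    rw [← MeasureTheory.Measure.volume_eq_prod]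
    have hrew : (Function.uncurry fun x y : ℝ =>
        (if 0 < x ∧ x < y then h (y - x) * ((max (T - y) 0)^2 / 2) else 0)) =
        ({p : ℝ × ℝ | 0 < p.1 ∧ p.1 < p.2}).indicator
          (fun p => h (p.2 - p.1) * ((max (T - p.2) 0)^2 / 2)) := by
      funext p
      obtain ⟨px, py⟩ := p
      simp [Function.uncurry, Set.indicator_apply]
    have hmset : MeasurableSet {p : ℝ × ℝ | 0 < p.1 ∧ p.1 < p.2} :=
      (measurableSet_lt measurable_const measurable_fst).inter
        (measurableSet_lt measurable_fst measurable_snd)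
    have hcont : Continuous fun p : ℝ × ℝ => h (p.2 - p.1) * ((max (T - p.2) 0)^2 / 2) := by
      apply (hhc.comp (continuous_snd.sub continuous_fst)).mul
      apply Continuous.div_const
      exact ((continuous_const.sub continuous_snd).max continuous_const).pow 2
    rw [hrew]
    refine integrable_of_bound (C := C * (T^2 / 2))
      ((hcont.stronglyMeasurable.indicator hmset).aestronglyMeasurable)
      (measurableSet_Icc (a := ((0:ℝ),(0:ℝ))) (b := (T,T)))
      (IsCompact.measure_lt_top isCompact_Icc) ?_ ?_
    · intro p hp
      have hpm : p ∈ {p : ℝ × ℝ | 0 < p.1 ∧ p.1 < p.2} := by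
        by_contra hns
        exact hp (Set.indicator_of_notMem hns _)
      have h1 := hpm.1
      have h2 := hpm.2
      have hval := hp
      rw [Set.indicator_of_mem hpm] at hval
      have hy : p.2 < T := by
        by_contra hge
        push_neg at hge
        rw [max_eq_right (by linarith)] at hval
        simp at hval
      simp only [Set.mem_Icc, Prod.le_def]
      and_intros <;> linarith
    · intro p
      by_cases hp : p ∈ {p : ℝ × ℝ | 0 < p.1 ∧ p.1 < p.2}
      · rw [Set.indicator_of_mem hp]
        obtain ⟨h1, h2⟩ := hp
        rw [abs_mul]
        have hm0 : 0 ≤ max (T - p.2) 0 := le_max_right _ _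
        have hmT : max (T - p.2) 0 ≤ T := by
          apply max_le (by linarith) (le_of_lt hT0)
        have habs2 : |(max (T - p.2) 0)^2 / 2| = (max (T - p.2) 0)^2 / 2 := by
          rw [abs_of_nonneg]; positivity
        rw [habs2]
        have hhb := hhC (p.2 - p.1)
        have h0h : 0 ≤ |h (p.2 - p.1)| := abs_nonneg _
        have hsq : (max (T - p.2) 0)^2 ≤ T^2 := by nlinarith
        calc |h (p.2 - p.1)| * ((max (T - p.2) 0)^2 / 2)
            ≤ C * ((max (T - p.2) 0)^2 / 2) :=
              mul_le_mul_of_nonneg_right hhb (by positivity)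
          _ ≤ C * (T^2 / 2) := mul_le_mul_of_nonneg_left (by linarith) hC0
      · rw [Set.indicator_of_notMem hp, abs_zero]
        positivity
  have hswap := MeasureTheory.integral_integral_swap (μ := (volume : Measure ℝ))
      (ν := (volume : Measure ℝ)) (f := fun x y : ℝ =>
      (if 0 < x ∧ x < y then h (y - x) * ((max (T - y) 0)^2 / 2) else 0)) hswapint
  -- inner x-integral for fixed y
  have step7 : ∀ y : ℝ,
      (∫ x, if 0 < x ∧ x < y then h (y - x) * ((max (T - y) 0)^2 / 2) else 0) =
      (Set.Ioc 0 T).indicator (fun y => (∫ u in (0:ℝ)..y, h u) * ((T - y)^2 / 2)) y := by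
    intro y
    by_cases hy0 : 0 < y
    · have hfun : (fun x => if 0 < x ∧ x < y then h (y - x) * ((max (T - y) 0)^2 / 2) else 0) =
          (Set.Ioo 0 y).indicator (fun x => h (y - x) * ((max (T - y) 0)^2 / 2)) := by
        funext x
        by_cases hx : x ∈ Set.Ioo 0 y
        · rw [Set.indicator_of_mem hx, if_pos ⟨hx.1, hx.2⟩]
        · rw [Set.indicator_of_notMem hx, if_neg (fun hP => hx ⟨hP.1, hP.2⟩)]
      rw [hfun, MeasureTheory.integral_indicator measurableSet_Ioo,
        MeasureTheory.integral_mul_const]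
      have hx2 : (∫ x in Set.Ioo 0 y, h (y - x)) = ∫ u in (0:ℝ)..y, h u := by
        rw [← MeasureTheory.integral_Ioc_eq_integral_Ioo,
          ← intervalIntegral.integral_of_le (le_of_lt hy0)]
        have := intervalIntegral.integral_comp_sub_left (a := (0:ℝ)) (b := y) h y
        rw [sub_self, sub_zero] at this
        exact this
      rw [hx2]
      by_cases hyT : y ≤ T
      · rw [Set.indicator_of_mem (show y ∈ Set.Ioc 0 T from ⟨hy0, hyT⟩), max_eq_left (by linarith)]
      · rw [Set.indicator_of_notMem (fun hm => hyT hm.2), max_eq_right (by linarith)]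
        norm_num
    · have hfun : (fun x => if 0 < x ∧ x < y then h (y - x) * ((max (T - y) 0)^2 / 2) else 0) =
          fun _ => (0:ℝ) := by
        funext x
        rw [if_neg]
        rintro ⟨h1, h2⟩
        exact hy0 (lt_trans h1 h2)
      rw [hfun, MeasureTheory.integral_zero,
        Set.indicator_of_notMem (fun hm => hy0 hm.1)]
  -- assemble
  calc (∫ p in Sq, G p) = ∫ p, Sq.indicator G p := e0
    _ = ∫ x, ∫ q : ℝ × ℝ × ℝ, Sq.indicator G (x, q) := e1
    _ = ∫ x, ∫ y, (if 0 < x ∧ x < y then h (y - x) * ((max (T - y) 0)^2 / 2) else 0) :=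
        MeasureTheory.integral_congr_ae (Filter.Eventually.of_forall e5)
    _ = ∫ y, ∫ x, (if 0 < x ∧ x < y then h (y - x) * ((max (T - y) 0)^2 / 2) else 0) := hswap
    _ = ∫ y, (Set.Ioc 0 T).indicator (fun y => (∫ u in (0:ℝ)..y, h u) * ((T - y)^2 / 2)) y :=
        MeasureTheory.integral_congr_ae (Filter.Eventually.of_forall step7)
    _ = ∫ y in Set.Ioc 0 T, (∫ u in (0:ℝ)..y, h u) * ((T - y)^2 / 2) :=
        MeasureTheory.integral_indicator measurableSet_Ioc
    _ = ∫ t in (0:ℝ)..T, (∫ u in (0:ℝ)..t, h u) * ((T - t)^2 / 2) :=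
        (intervalIntegral.integral_of_le (le_of_lt hT0)).symm

end Fubini

end

theorem side_s2_density (g : ℝ → ℝ) (hg : Continuous g)
    (hb : ∃ C, ∀ x, |g x| ≤ C) :
    ((Nat.factorial 4 : ℝ) / (2 * π) ^ 4) * ∫ p in {p : ℝ × ℝ × ℝ × ℝ |
        0 < p.1 ∧ p.1 < p.2.1 ∧ p.2.1 < p.2.2.1 ∧ p.2.2.1 < p.2.2.2 ∧ p.2.2.2 < 2 * π},
      g (2 * Real.sin ((p.2.1 - p.1) / 2)) =
    ∫ z in (0:ℝ)..2, g z * (4 / (π * Real.sqrt (4 - z ^ 2))) *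
      (1 - 3 * Real.arcsin (z / 2) * (π - Real.arcsin (z / 2)) / π ^ 2) := by
  obtain ⟨C, hC⟩ := hb
  have hπ := Real.pi_pos
  have hπ' : (π : ℝ) ≠ 0 := ne_of_gt hπ
  have hfact : (Nat.factorial 4 : ℝ) = 24 := by norm_num [Nat.factorial]
  rw [show {p : ℝ × ℝ × ℝ × ℝ |
        0 < p.1 ∧ p.1 < p.2.1 ∧ p.2.1 < p.2.2.1 ∧ p.2.2.1 < p.2.2.2 ∧ p.2.2.2 < 2 * π} = Sq
      from rfl]
  rw [fubini4 hg hC, byparts_lemma hg]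
  have c1 : (∫ u in (0:ℝ)..(2*π), g (2 * Real.sin (u / 2)) * ((2*π - u)^3 / 6)) =
      (1/6) * ∫ u in (0:ℝ)..(2*π), g (2 * Real.sin (u / 2)) * (2*π - u)^3 := by
    rw [← intervalIntegral.integral_const_mul]
    refine intervalIntegral.integral_congr (fun x _ => ?_)
    ring
  rw [c1, reflect_lemma hg]
  have c2 : (∫ u in (0:ℝ)..π, g (2 * Real.sin (u / 2)) * ((2*π - u)^3 + u^3)) =
      ∫ u in Set.Ioo (0:ℝ) π, g (2 * Real.sin (u / 2)) * ((2*π - u)^3 + u^3) := by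
    rw [intervalIntegral.integral_of_le (le_of_lt hπ), MeasureTheory.integral_Ioc_eq_integral_Ioo]
  rw [c2, rhs_subst hg, hfact]
  rw [← MeasureTheory.integral_const_mul, ← MeasureTheory.integral_const_mul]
  refine MeasureTheory.setIntegral_congr_fun measurableSet_Ioo (fun u hu => ?_)
  have h2π : (2*π)^4 ≠ 0 := by positivity
  field_simp
  ring
end

section
/- Let g : ℝ → ℝ be a bounded continuous function. Then (4!/(2π)⁴) · ∫ g(2 sin((θ₃ − θ₁)/2)) dθ₁dθ₂dθ₃dθ₄ over the ordered region 0 < θ₁ < θ₂ < θ₃ < θ₄ < 2π equals ∫₀² g(z) · (12/(π√(4−z²))) · arcsin(z/2)·(π − arcsin(z/2))/π² dz. (That is, the diagonal d₂ = 2 sin((θ₃−θ₁)/2) of a uniform cyclic quadrilateral has density (12/(π√(4−z²))) arcsin(z/2)(π − arcsin(z/2))/π² on [0,2].) -/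
open MeasureTheory Real intervalIntegral

lemma integrable_of_bdd_supp {α : Type*} [MeasureSpace α] {f : α → ℝ}
    (hm : AEStronglyMeasurable f volume) {s : Set α} (hs : MeasurableSet s)
    (hμ : volume s ≠ ⊤) (h0 : ∀ x, x ∉ s → f x = 0) {C : ℝ}
    (hC : ∀ x ∈ s, |f x| ≤ C) : Integrable f volume := by
  have hf : f = s.indicator f := by
    funext x
    by_cases hx : x ∈ s
    · simp [Set.indicator_of_mem hx]
    · simp [Set.indicator_of_notMem hx, h0 x hx]
  rw [hf, integrable_indicator_iff hs]
  apply Measure.integrableOn_of_bounded hμ hm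
  filter_upwards [ae_restrict_mem hs] with x hx
  simpa [Real.norm_eq_abs] using hC x hx

lemma vol_prod_lt_top {α β : Type*} [MeasureSpace α] [MeasureSpace β]
    [SigmaFinite (volume : Measure β)] {s : Set α} {t : Set β}
    (hs : volume s < ⊤) (ht : volume t < ⊤) : volume (s ×ˢ t) < ⊤ := by
  rw [MeasureTheory.Measure.volume_eq_prod, Measure.prod_prod]
  exact ENNReal.mul_lt_top hs ht

lemma integral_ramp (b : ℝ) :
    (∫ a : ℝ, (Set.Ioi (0:ℝ)).indicator (fun a => max (b - a) 0) a) = max b 0 ^ 2 / 2 := by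
  have h1 : (Set.Ioi (0:ℝ)).indicator (fun a => max (b - a) 0)
      = (Set.Ioo (0:ℝ) b).indicator (fun a => b - a) := by
    funext a
    by_cases ha : 0 < a
    · by_cases hab : a < b
      · rw [Set.indicator_of_mem (Set.mem_Ioi.2 ha), Set.indicator_of_mem (Set.mem_Ioo.2 ⟨ha, hab⟩)]
        exact max_eq_left (by linarith)
      · rw [Set.indicator_of_mem (Set.mem_Ioi.2 ha),
          Set.indicator_of_notMem (fun h => hab (Set.mem_Ioo.1 h).2)]
        exact max_eq_right (by linarith)
    · rw [Set.indicator_of_notMem (by simpa using ha),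
        Set.indicator_of_notMem (fun h => ha (Set.mem_Ioo.1 h).1)]
  rw [h1, MeasureTheory.integral_indicator measurableSet_Ioo]
  rcases le_or_gt b 0 with hb | hb
  · rw [Set.Ioo_eq_empty (by intro h; linarith)]
    simp [max_eq_right hb]
  · rw [← MeasureTheory.integral_Ioc_eq_integral_Ioo, ← intervalIntegral.integral_of_le hb.le]
    have h2 : (∫ a in (0:ℝ)..b, (b - a)) = b ^ 2 / 2 := by
      rw [intervalIntegral.integral_sub intervalIntegrable_const intervalIntegral.intervalIntegrable_id]
      simp [integral_id]
      ring
    rw [h2, max_eq_left hb.le]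

lemma indicator_Ioo_integral {f : ℝ → ℝ} {a b : ℝ} (hab : a ≤ b) :
    (∫ x, (Set.Ioo a b).indicator f x) = ∫ x in a..b, f x := by
  rw [MeasureTheory.integral_indicator measurableSet_Ioo, ← integral_Ioc_eq_integral_Ioo,
    intervalIntegral.integral_of_le hab]

lemma fourfold (g : ℝ → ℝ) (hg : Continuous g) {C : ℝ} (hb : ∀ x, |g x| ≤ C) :
    (∫ p in {p : ℝ × ℝ × ℝ × ℝ |
        0 < p.1 ∧ p.1 < p.2.1 ∧ p.2.1 < p.2.2.1 ∧ p.2.2.1 < p.2.2.2 ∧ p.2.2.2 < 2 * π},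
      g (2 * Real.sin ((p.2.2.1 - p.1) / 2))) =
    ∫ u in (0:ℝ)..(2 * π), u * (2 * π - u) ^ 2 / 2 * g (2 * Real.sin (u / 2)) := by
  have hπ : (0:ℝ) < π := Real.pi_pos
  have hC0 : (0:ℝ) ≤ C := le_trans (abs_nonneg _) (hb 0)
  set c : ℝ := 2 * π with hcdef
  have hc0 : (0:ℝ) < c := by positivity
  set S : Set (ℝ × ℝ × ℝ × ℝ) :=
    {p | 0 < p.1 ∧ p.1 < p.2.1 ∧ p.2.1 < p.2.2.1 ∧ p.2.2.1 < p.2.2.2 ∧ p.2.2.2 < c} with hSdef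
  set f₀ : ℝ × ℝ × ℝ × ℝ → ℝ := fun p => g (2 * Real.sin ((p.2.2.1 - p.1) / 2)) with hf₀def
  have hf₀c : Continuous f₀ := hg.comp (by fun_prop)
  have hS : MeasurableSet S := by
    have h2 : Measurable fun p : ℝ × ℝ × ℝ × ℝ => p.2.1 := by fun_prop
    have h3 : Measurable fun p : ℝ × ℝ × ℝ × ℝ => p.2.2.1 := by fun_prop
    have h4 : Measurable fun p : ℝ × ℝ × ℝ × ℝ => p.2.2.2 := by fun_prop
    have : S = {p : ℝ × ℝ × ℝ × ℝ | 0 < p.1} ∩ ({p | p.1 < p.2.1} ∩ ({p | p.2.1 < p.2.2.1}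
        ∩ ({p | p.2.2.1 < p.2.2.2} ∩ {p | p.2.2.2 < c}))) := by
      ext p; simp [hSdef, Set.mem_setOf_eq, and_assoc]
    rw [this]
    exact (measurableSet_lt measurable_const measurable_fst).inter
      ((measurableSet_lt measurable_fst h2).inter ((measurableSet_lt h2 h3).inter
        ((measurableSet_lt h3 h4).inter (measurableSet_lt h4 measurable_const))))
  -- the indicator function
  set F : ℝ × ℝ × ℝ × ℝ → ℝ := S.indicator f₀ with hFdef
  have hFmeas : Measurable F := hf₀c.measurable.indicator hS
  -- K3 after integrating out the last variable
  set T3 : Set (ℝ × ℝ × ℝ) := {x | 0 < x.1 ∧ x.1 < x.2.1 ∧ x.2.1 < x.2.2} with hT3def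
  have hT3 : MeasurableSet T3 := by
    have h2 : Measurable fun x : ℝ × ℝ × ℝ => x.2.1 := by fun_prop
    have h3 : Measurable fun x : ℝ × ℝ × ℝ => x.2.2 := by fun_prop
    have : T3 = {x : ℝ × ℝ × ℝ | 0 < x.1} ∩ ({x | x.1 < x.2.1} ∩ {x | x.2.1 < x.2.2}) := by
      ext x; simp [hT3def, Set.mem_setOf_eq, and_assoc]
    rw [this]
    exact (measurableSet_lt measurable_const measurable_fst).inter
      ((measurableSet_lt measurable_fst h2).inter (measurableSet_lt h2 h3))
  set K3 : ℝ × ℝ × ℝ → ℝ :=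
    T3.indicator (fun x => max (c - x.2.2) 0 * g (2 * Real.sin ((x.2.2 - x.1) / 2))) with hK3def
  have hK3meas : Measurable K3 := by
    apply Measurable.indicator _ hT3
    fun_prop
  -- innermost integral
  have inner4 : ∀ a b c' : ℝ, (∫ d : ℝ, F (a, b, c', d)) = K3 (a, b, c') := by
    intro a b c'
    by_cases h : 0 < a ∧ a < b ∧ b < c'
    · have hfun : (fun d => F (a, b, c', d))
          = (Set.Ioo c' c).indicator (fun _ => g (2 * Real.sin ((c' - a) / 2))) := by
        funext d
        by_cases hd : c' < d ∧ d < c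
        · rw [hFdef, Set.indicator_of_mem (show (a,b,c',d) ∈ S from ⟨h.1, h.2.1, h.2.2, hd.1, hd.2⟩),
            Set.indicator_of_mem (Set.mem_Ioo.2 hd)]
        · rw [hFdef, Set.indicator_of_notMem (fun hm => hd ⟨hm.2.2.2.1, hm.2.2.2.2⟩),
            Set.indicator_of_notMem (fun hm => hd (Set.mem_Ioo.1 hm))]
      rw [hfun, MeasureTheory.integral_indicator_const _ measurableSet_Ioo, hK3def,
        Set.indicator_of_mem (show (a,b,c') ∈ T3 from h)]
      simp [Real.volume_Ioo, ENNReal.toReal_ofReal']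
    · have hfun : (fun d => F (a, b, c', d)) = fun _ => (0:ℝ) := by
        funext d
        exact Set.indicator_of_notMem (fun hm => h ⟨hm.1, hm.2.1, hm.2.2.1⟩) _
      rw [hfun, hK3def, Set.indicator_of_notMem (show (a,b,c') ∉ T3 from h)]
      simp
  -- boxes
  have hbox1 : volume (Set.Ioo (0:ℝ) c) < ⊤ := measure_Ioo_lt_top
  have hbox2 : volume ((Set.Ioo (0:ℝ) c) ×ˢ (Set.Ioo (0:ℝ) c)) < ⊤ := vol_prod_lt_top hbox1 hbox1
  have hbox3 : volume ((Set.Ioo (0:ℝ) c) ×ˢ ((Set.Ioo (0:ℝ) c) ×ˢ (Set.Ioo (0:ℝ) c))) < ⊤ :=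
    vol_prod_lt_top hbox1 hbox2
  have hbox4 : volume ((Set.Ioo (0:ℝ) c) ×ˢ ((Set.Ioo (0:ℝ) c) ×ˢ ((Set.Ioo (0:ℝ) c)
      ×ˢ (Set.Ioo (0:ℝ) c)))) < ⊤ := vol_prod_lt_top hbox1 hbox3
  have hSsub : S ⊆ (Set.Ioo (0:ℝ) c) ×ˢ ((Set.Ioo (0:ℝ) c) ×ˢ ((Set.Ioo (0:ℝ) c)
      ×ˢ (Set.Ioo (0:ℝ) c))) := by
    rintro ⟨a, b, c', d⟩ ⟨h1, h2, h3, h4, h5⟩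
    exact ⟨⟨h1, by linarith⟩, ⟨by linarith, by linarith⟩, ⟨by linarith, by linarith⟩,
      ⟨by linarith, h5⟩⟩
  have hFint : Integrable F volume := by
    refine integrable_of_bdd_supp hFmeas.aestronglyMeasurable hS
      ((lt_of_le_of_lt (measure_mono hSsub) hbox4)).ne (fun p hp => ?_) (C := C) (fun p hp => ?_)
    · exact Set.indicator_of_notMem hp f₀
    · rw [hFdef, Set.indicator_of_mem hp]; exact hb _
  have step2 : (∫ p, F p) = ∫ a : ℝ, ∫ q : ℝ × ℝ × ℝ, F (a, q) := by
    have h := MeasureTheory.integral_prod F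
      ((MeasureTheory.Measure.volume_eq_prod ℝ (ℝ × ℝ × ℝ)) ▸ hFint)
    rwa [← MeasureTheory.Measure.volume_eq_prod] at h
  have keyA : ∀ a : ℝ, (∫ q : ℝ × ℝ × ℝ, F (a, q))
      = (if 0 < a then ∫ u : ℝ, max u 0 * (max (c - u - a) 0 * g (2 * Real.sin (u / 2)))
          else 0) := by
    intro a
    have hs1 : MeasurableSet ((fun q : ℝ × ℝ × ℝ => (a, q)) ⁻¹' S) :=
      hS.preimage measurable_prodMk_left
    have hsub1 : ((fun q : ℝ × ℝ × ℝ => (a, q)) ⁻¹' S)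
        ⊆ (Set.Ioo (0:ℝ) c) ×ˢ ((Set.Ioo (0:ℝ) c) ×ˢ (Set.Ioo (0:ℝ) c)) := by
      rintro ⟨b, c', d⟩ ⟨h1, h2, h3, h4, h5⟩
      exact ⟨⟨by linarith, by linarith⟩, ⟨by linarith, by linarith⟩, ⟨by linarith, h5⟩⟩
    have hint1 : Integrable (fun q : ℝ × ℝ × ℝ => F (a, q)) volume := by
      refine integrable_of_bdd_supp ((hFmeas.comp measurable_prodMk_left).aestronglyMeasurable)
        hs1 ((lt_of_le_of_lt (measure_mono hsub1) hbox3)).ne (fun q hq => ?_) (C := C)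
        (fun q hq => ?_)
      · exact Set.indicator_of_notMem (show ((a : ℝ), q) ∉ S from hq) f₀
      · rw [hFdef, Set.indicator_of_mem (show ((a : ℝ), q) ∈ S from hq)]; exact hb _
    have e1 : (∫ q : ℝ × ℝ × ℝ, F (a, q)) = ∫ b : ℝ, ∫ r : ℝ × ℝ, F (a, b, r) := by
      have h := MeasureTheory.integral_prod (fun q : ℝ × ℝ × ℝ => F (a, q))
        ((MeasureTheory.Measure.volume_eq_prod ℝ (ℝ × ℝ)) ▸ hint1)
      rwa [← MeasureTheory.Measure.volume_eq_prod] at h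
    have e2 : ∀ b : ℝ, (∫ r : ℝ × ℝ, F (a, b, r)) = ∫ c' : ℝ, K3 (a, b, c') := by
      intro b
      have hmk : Measurable (fun r : ℝ × ℝ => ((a : ℝ), (b, r))) := by fun_prop
      have hs2 : MeasurableSet ((fun r : ℝ × ℝ => ((a : ℝ), (b, r))) ⁻¹' S) := hS.preimage hmk
      have hsub2 : ((fun r : ℝ × ℝ => ((a : ℝ), (b, r))) ⁻¹' S)
          ⊆ (Set.Ioo (0:ℝ) c) ×ˢ (Set.Ioo (0:ℝ) c) := by
        rintro ⟨c', d⟩ ⟨h1, h2, h3, h4, h5⟩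
        exact ⟨⟨by linarith, by linarith⟩, ⟨by linarith, h5⟩⟩
      have hint2 : Integrable (fun r : ℝ × ℝ => F (a, b, r)) volume := by
        refine integrable_of_bdd_supp ((hFmeas.comp hmk).aestronglyMeasurable)
          hs2 ((lt_of_le_of_lt (measure_mono hsub2) hbox2)).ne (fun r hr => ?_) (C := C)
          (fun r hr => ?_)
        · exact Set.indicator_of_notMem (show ((a : ℝ), (b, r)) ∉ S from hr) f₀
        · rw [hFdef, Set.indicator_of_mem (show ((a : ℝ), (b, r)) ∈ S from hr)]; exact hb _
      have h := MeasureTheory.integral_prod (fun r : ℝ × ℝ => F (a, b, r))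
        ((MeasureTheory.Measure.volume_eq_prod ℝ ℝ) ▸ hint2)
      rw [← MeasureTheory.Measure.volume_eq_prod] at h
      rw [h]
      simp only [inner4]
    rw [e1]
    simp only [e2]
    by_cases h0 : 0 < a
    · rw [if_pos h0]
      have hmk2 : Measurable (fun p : ℝ × ℝ => ((a : ℝ), (p.1, p.2))) := by fun_prop
      have hswap : (∫ b : ℝ, ∫ c' : ℝ, K3 (a, b, c')) = ∫ c' : ℝ, ∫ b : ℝ, K3 (a, b, c') := by
        apply MeasureTheory.integral_integral_swap
        have huncfun : Function.uncurry (fun b c' => K3 (a, b, c'))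
            = K3 ∘ (fun p : ℝ × ℝ => ((a : ℝ), (p.1, p.2))) := rfl
        rw [huncfun, ← MeasureTheory.Measure.volume_eq_prod]
        have hs2m : MeasurableSet {p : ℝ × ℝ | a < p.1 ∧ p.1 < p.2 ∧ p.2 < c} := by
          have : {p : ℝ × ℝ | a < p.1 ∧ p.1 < p.2 ∧ p.2 < c}
              = {p : ℝ × ℝ | a < p.1} ∩ ({p | p.1 < p.2} ∩ {p | p.2 < c}) := by
            ext p; simp [Set.mem_setOf_eq, and_assoc]
          rw [this]
          exact (measurableSet_lt measurable_const measurable_fst).inter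
            ((measurableSet_lt measurable_fst measurable_snd).inter
              (measurableSet_lt measurable_snd measurable_const))
        have hsub : {p : ℝ × ℝ | a < p.1 ∧ p.1 < p.2 ∧ p.2 < c}
            ⊆ (Set.Ioo (0:ℝ) c) ×ˢ (Set.Ioo (0:ℝ) c) := by
          rintro ⟨b, c'⟩ ⟨h1, h2, h3⟩
          exact ⟨⟨by linarith, by linarith⟩, ⟨by linarith, h3⟩⟩
        refine integrable_of_bdd_supp ((hK3meas.comp hmk2).aestronglyMeasurable) hs2m
          ((lt_of_le_of_lt (measure_mono hsub) hbox2)).ne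
          (fun p hp => ?_) (C := c * C) (fun p hp => ?_)
        · show K3 (a, p.1, p.2) = 0
          by_cases hm : (a, p.1, p.2) ∈ T3
          · rw [hK3def, Set.indicator_of_mem hm]
            obtain ⟨hm1, hm2, hm3⟩ := hm
            have hcle : ¬ p.2 < c := fun hlt => hp ⟨hm2, hm3, hlt⟩
            push_neg at hcle
            rw [max_eq_right (by linarith)]
            ring
          · rw [hK3def, Set.indicator_of_notMem hm]
        · obtain ⟨hp1, hp2, hp3⟩ := hp
          show |K3 (a, p.1, p.2)| ≤ c * C
          by_cases hm : (a, p.1, p.2) ∈ T3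
          · rw [hK3def, Set.indicator_of_mem hm]
            rw [abs_mul]
            have h1 : |max (c - p.2) 0| ≤ c := by
              rw [abs_of_nonneg (le_max_right _ _)]
              exact max_le (by linarith) hc0.le
            exact mul_le_mul h1 (hb _) (abs_nonneg _) hc0.le
          · rw [hK3def, Set.indicator_of_notMem hm]
            simp only [abs_zero]
            positivity
      rw [hswap]
      have e3 : ∀ c' : ℝ, (∫ b : ℝ, K3 (a, b, c'))
          = max (c' - a) 0 * (max (c - c') 0 * g (2 * Real.sin ((c' - a) / 2))) := by
        intro c'
        have hfun : (fun b => K3 (a, b, c'))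
            = (Set.Ioo a c').indicator
              (fun _ => max (c - c') 0 * g (2 * Real.sin ((c' - a) / 2))) := by
          funext b
          by_cases hbm : a < b ∧ b < c'
          · rw [hK3def, Set.indicator_of_mem (show (a,b,c') ∈ T3 from ⟨h0, hbm.1, hbm.2⟩),
              Set.indicator_of_mem (Set.mem_Ioo.2 hbm)]
          · rw [hK3def,
              Set.indicator_of_notMem (show (a,b,c') ∉ T3 from fun hm => hbm ⟨hm.2.1, hm.2.2⟩),
              Set.indicator_of_notMem (fun hm => hbm (Set.mem_Ioo.1 hm))]
        rw [hfun, MeasureTheory.integral_indicator_const _ measurableSet_Ioo]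
        simp [Real.volume_Ioo, ENNReal.toReal_ofReal']
      simp only [e3]
      rw [← MeasureTheory.integral_add_right_eq_self
        (fun x : ℝ => max (x - a) 0 * (max (c - x) 0 * g (2 * Real.sin ((x - a) / 2)))) a]
      congr 1
      funext u
      simp only [add_sub_cancel_right]
      rw [sub_add_eq_sub_sub]
    · rw [if_neg h0]
      have hz : ∀ b c' : ℝ, K3 (a, b, c') = 0 := fun b c' =>
        Set.indicator_of_notMem (show (a,b,c') ∉ T3 from fun hm => h0 hm.1) _
      simp [hz]
  -- assemble
  rw [show (∫ p in S, f₀ p) = ∫ p, F p from (MeasureTheory.integral_indicator hS).symm, step2]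
  simp only [keyA]
  set W : ℝ × ℝ → ℝ := Set.indicator {p : ℝ × ℝ | 0 < p.1}
      (fun p => max p.2 0 * (max (c - p.2 - p.1) 0 * g (2 * Real.sin (p.2 / 2)))) with hWdef
  have hWmeas : Measurable W := by
    apply Measurable.indicator _ (measurableSet_lt measurable_const measurable_fst)
    fun_prop
  have eqW : ∀ a : ℝ,
      (if 0 < a then ∫ u : ℝ, max u 0 * (max (c - u - a) 0 * g (2 * Real.sin (u / 2))) else 0)
      = ∫ u : ℝ, W (a, u) := by
    intro a
    by_cases h0 : 0 < a
    · rw [if_pos h0]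
      congr 1
      funext u
      rw [hWdef, Set.indicator_of_mem (show (a,u) ∈ {p : ℝ × ℝ | 0 < p.1} from h0)]
    · rw [if_neg h0]
      have hz : ∀ u : ℝ, W (a, u) = 0 := fun u =>
        Set.indicator_of_notMem (show (a,u) ∉ {p : ℝ × ℝ | 0 < p.1} from h0) _
      simp [hz]
  simp only [eqW]
  have hswap2 : (∫ a : ℝ, ∫ u : ℝ, W (a, u)) = ∫ u : ℝ, ∫ a : ℝ, W (a, u) := by
    apply MeasureTheory.integral_integral_swap
    have huncfun : Function.uncurry (fun a u => W (a, u)) = W := rfl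
    rw [huncfun, ← MeasureTheory.Measure.volume_eq_prod]
    have hs3m : MeasurableSet {p : ℝ × ℝ | 0 < p.1 ∧ 0 < p.2 ∧ p.1 + p.2 < c} := by
      have : {p : ℝ × ℝ | 0 < p.1 ∧ 0 < p.2 ∧ p.1 + p.2 < c}
          = {p : ℝ × ℝ | 0 < p.1} ∩ ({p | 0 < p.2} ∩ {p | p.1 + p.2 < c}) := by
        ext p; simp [Set.mem_setOf_eq, and_assoc]
      rw [this]
      exact (measurableSet_lt measurable_const measurable_fst).inter
        ((measurableSet_lt measurable_const measurable_snd).inter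
          (measurableSet_lt (measurable_fst.add measurable_snd) measurable_const))
    have hsub3 : {p : ℝ × ℝ | 0 < p.1 ∧ 0 < p.2 ∧ p.1 + p.2 < c}
        ⊆ (Set.Ioo (0:ℝ) c) ×ˢ (Set.Ioo (0:ℝ) c) := by
      rintro ⟨a, u⟩ ⟨h1, h2, h3⟩
      exact ⟨⟨h1, by linarith⟩, ⟨h2, by linarith⟩⟩
    refine integrable_of_bdd_supp hWmeas.aestronglyMeasurable hs3m
      ((lt_of_le_of_lt (measure_mono hsub3) hbox2)).ne (fun p hp => ?_) (C := c * (c * C))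
      (fun p hp => ?_)
    · by_cases hm : (0:ℝ) < p.1
      · rw [hWdef, Set.indicator_of_mem (show p ∈ {p : ℝ × ℝ | 0 < p.1} from hm)]
        by_cases hu : 0 < p.2
        · have hns : ¬ p.1 + p.2 < c := fun hlt => hp ⟨hm, hu, hlt⟩
          push_neg at hns
          rw [max_eq_right (by linarith : c - p.2 - p.1 ≤ 0)]
          ring
        · push_neg at hu
          rw [max_eq_right (hu : p.2 ≤ 0)]
          ring
      · exact Set.indicator_of_notMem (show p ∉ {p : ℝ × ℝ | 0 < p.1} from hm) _
    · obtain ⟨h1, h2, h3⟩ := hp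
      rw [hWdef, Set.indicator_of_mem (show p ∈ {p : ℝ × ℝ | 0 < p.1} from h1)]
      rw [abs_mul, abs_mul]
      have b1 : |max p.2 0| ≤ c := by
        rw [abs_of_nonneg (le_max_right _ _)]
        exact max_le (by linarith) hc0.le
      have b2 : |max (c - p.2 - p.1) 0| ≤ c := by
        rw [abs_of_nonneg (le_max_right _ _)]
        exact max_le (by linarith) hc0.le
      exact mul_le_mul b1 (mul_le_mul b2 (hb _) (abs_nonneg _) hc0.le) (by positivity) hc0.le
  rw [hswap2]
  have e4 : ∀ u : ℝ, (∫ a : ℝ, W (a, u))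
      = (max u 0 * g (2 * Real.sin (u / 2))) * (max (c - u) 0 ^ 2 / 2) := by
    intro u
    have hfun : (fun a => W (a, u)) = fun a => (max u 0 * g (2 * Real.sin (u / 2)))
        * (Set.Ioi (0:ℝ)).indicator (fun a => max ((c - u) - a) 0) a := by
      funext a
      by_cases h0 : 0 < a
      · rw [hWdef, Set.indicator_of_mem (show (a,u) ∈ {p : ℝ × ℝ | 0 < p.1} from h0),
          Set.indicator_of_mem (Set.mem_Ioi.2 h0)]
        ring
      · rw [hWdef, Set.indicator_of_notMem (show (a,u) ∉ {p : ℝ × ℝ | 0 < p.1} from h0),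
          Set.indicator_of_notMem (by simpa using h0)]
        ring
    rw [hfun, MeasureTheory.integral_const_mul, integral_ramp]
  simp only [e4]
  have hfun2 : (fun u : ℝ => (max u 0 * g (2 * Real.sin (u / 2))) * (max (c - u) 0 ^ 2 / 2))
      = (Set.Ioo (0:ℝ) c).indicator (fun u => u * (c - u) ^ 2 / 2 * g (2 * Real.sin (u / 2))) := by
    funext u
    by_cases h1 : 0 < u
    · by_cases h2 : u < c
      · rw [Set.indicator_of_mem (Set.mem_Ioo.2 ⟨h1, h2⟩), max_eq_left h1.le,
          max_eq_left (by linarith : (0:ℝ) ≤ c - u)]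
        ring
      · rw [Set.indicator_of_notMem (fun hm => h2 (Set.mem_Ioo.1 hm).2),
          max_eq_right (by linarith : c - u ≤ 0)]
        ring
    · rw [Set.indicator_of_notMem (fun hm => h1 (Set.mem_Ioo.1 hm).1),
        max_eq_right (by linarith : u ≤ 0)]
      ring
  rw [hfun2, indicator_Ioo_integral hc0.le]


lemma onedim (g : ℝ → ℝ) (hg : Continuous g) :
    (∫ u in (0:ℝ)..(2*π), u * (2*π - u)^2 / 2 * g (2 * Real.sin (u/2)))
    = ∫ t in (0:ℝ)..(π/2), 8 * π * (t * (π - t)) * g (2 * Real.sin t) := by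
  have hπ := Real.pi_pos
  have hcont : Continuous fun u : ℝ => u * (2*π - u)^2 / 2 * g (2 * Real.sin (u/2)) :=
    Continuous.mul (by fun_prop) (hg.comp (by fun_prop))
  set f : ℝ → ℝ := fun u => u * (2*π - u)^2 / 2 * g (2 * Real.sin (u/2)) with hfdef
  have hsplit : (∫ u in (0:ℝ)..(2*π), f u)
      = (∫ u in (0:ℝ)..π, f u) + ∫ u in π..(2*π), f u :=
    (intervalIntegral.integral_add_adjacent_intervals
      (hcont.intervalIntegrable _ _) (hcont.intervalIntegrable _ _)).symm
  have hrefl : (∫ u in π..(2*π), f u) = ∫ u in (0:ℝ)..π, f (2*π - u) := by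
    rw [intervalIntegral.integral_comp_sub_left f (2*π), show 2*π - π = π from by ring, sub_zero]
  have hI2 : IntervalIntegrable (fun u : ℝ => f (2*π - u)) volume 0 π := by
    exact (hcont.comp (by fun_prop : Continuous fun u : ℝ => 2*π - u)).intervalIntegrable _ _
  rw [hsplit, hrefl, ← intervalIntegral.integral_add (hcont.intervalIntegrable _ _) hI2]
  have hmid : (∫ u in (0:ℝ)..π, (f u + f (2*π - u)))
      = ∫ u in (0:ℝ)..π, 4*π*((u/2)*(π - u/2))*g (2*Real.sin (u/2)) := by
    apply intervalIntegral.integral_congr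
    intro u _
    have hs : Real.sin ((2*π - u)/2) = Real.sin (u/2) := by
      rw [show (2*π - u)/2 = π - u/2 by ring, Real.sin_pi_sub]
    simp only [hfdef, hs]
    ring
  rw [hmid,
    show (∫ u in (0:ℝ)..π, 4*π*((u/2)*(π - u/2))*g (2*Real.sin (u/2)))
      = (2:ℝ) • ∫ t in ((0:ℝ)/2)..(π/2), 4*π*(t*(π - t))*g (2*Real.sin t) from
      intervalIntegral.integral_comp_div (fun t => 4*π*(t*(π - t))*g (2*Real.sin t)) two_ne_zero,
    show (0:ℝ)/2 = 0 by norm_num, smul_eq_mul, ← intervalIntegral.integral_const_mul]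
  apply intervalIntegral.integral_congr
  intro t _
  ring

lemma rhsdim (g : ℝ → ℝ) (hg : Continuous g) :
    (∫ z in (0:ℝ)..2, g z * (12 / (π * Real.sqrt (4 - z ^ 2))) *
      (Real.arcsin (z / 2) * (π - Real.arcsin (z / 2)) / π ^ 2))
    = ∫ t in (0:ℝ)..(π/2), 12 / π ^ 3 * (t * (π - t)) * g (2 * Real.sin t) := by
  have hπ := Real.pi_pos
  set h : ℝ → ℝ := fun z => g z * (12 / (π * Real.sqrt (4 - z ^ 2))) *
      (Real.arcsin (z / 2) * (π - Real.arcsin (z / 2)) / π ^ 2) with hhdef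
  have himg : (fun t : ℝ => 2 * Real.sin t) '' (Set.Ioo 0 (π/2)) = Set.Ioo (0:ℝ) 2 := by
    ext z
    constructor
    · rintro ⟨t, ht, rfl⟩
      have h1 : (0:ℝ) < Real.sin t := Real.sin_pos_of_pos_of_lt_pi ht.1 (by linarith [ht.2])
      have h2 : Real.sin t < 1 := by
        have hm := Real.strictMonoOn_sin (a := t) (b := π/2)
          ⟨by linarith [ht.1], ht.2.le⟩ ⟨by linarith, le_refl _⟩ ht.2
        rwa [Real.sin_pi_div_two] at hm
      simp only [Set.mem_Ioo]
      constructor <;> [linarith; linarith]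
    · rintro ⟨h1, h2⟩
      refine ⟨Real.arcsin (z/2), ⟨?_, ?_⟩, ?_⟩
      · exact Real.arcsin_pos.2 (by linarith)
      · have := Real.arcsin_lt_pi_div_two (x := z/2)
        exact this.2 (by linarith)
      · show 2 * Real.sin (Real.arcsin (z/2)) = z
        rw [Real.sin_arcsin (by linarith) (by linarith)]
        ring
  have hder : ∀ t ∈ Set.Ioo (0:ℝ) (π/2), HasDerivWithinAt (fun t : ℝ => 2 * Real.sin t)
      (2 * Real.cos t) (Set.Ioo (0:ℝ) (π/2)) t := fun t _ =>
    ((Real.hasDerivAt_sin t).const_mul 2).hasDerivWithinAt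
  have hinj : Set.InjOn (fun t : ℝ => 2 * Real.sin t) (Set.Ioo (0:ℝ) (π/2)) := by
    intro x hx y hy hxy
    have hx' : x ∈ Set.Icc (-(π/2)) (π/2) := ⟨by linarith [hx.1], hx.2.le⟩
    have hy' : y ∈ Set.Icc (-(π/2)) (π/2) := ⟨by linarith [hy.1], hy.2.le⟩
    have hxy' : 2 * Real.sin x = 2 * Real.sin y := hxy
    exact Real.injOn_sin hx' hy' (by linarith)
  have h02 : (0:ℝ) ≤ 2 := by norm_num
  rw [intervalIntegral.integral_of_le h02, MeasureTheory.integral_Ioc_eq_integral_Ioo,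
    show Set.Ioo (0:ℝ) 2 = (fun t : ℝ => 2 * Real.sin t) '' (Set.Ioo 0 (π/2)) from himg.symm,
    MeasureTheory.integral_image_eq_integral_abs_deriv_smul measurableSet_Ioo hder hinj h]
  rw [show (∫ t in (0:ℝ)..(π/2), 12 / π ^ 3 * (t * (π - t)) * g (2 * Real.sin t))
      = ∫ t in Set.Ioo (0:ℝ) (π/2), 12 / π ^ 3 * (t * (π - t)) * g (2 * Real.sin t) by
    rw [intervalIntegral.integral_of_le (by positivity), MeasureTheory.integral_Ioc_eq_integral_Ioo]]
  apply MeasureTheory.setIntegral_congr_fun measurableSet_Ioo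
  intro t ht
  have hcos : (0:ℝ) < Real.cos t := Real.cos_pos_of_mem_Ioo ⟨by linarith [ht.1], ht.2⟩
  have hsin : Real.sqrt (4 - (2 * Real.sin t) ^ 2) = 2 * Real.cos t := by
    rw [show (4:ℝ) - (2 * Real.sin t) ^ 2 = (2 * Real.cos t) ^ 2 from by
      have := Real.sin_sq_add_cos_sq t; nlinarith]
    exact Real.sqrt_sq (by positivity)
  have harc : Real.arcsin (2 * Real.sin t / 2) = t := by
    rw [show 2 * Real.sin t / 2 = Real.sin t by ring]
    exact Real.arcsin_sin (by linarith [ht.1]) (by linarith [ht.2])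
  simp only [hhdef, smul_eq_mul, hsin, harc]
  rw [abs_of_pos (by positivity : (0:ℝ) < 2 * Real.cos t)]
  field_simp

theorem diagonal_d2_density (g : ℝ → ℝ) (hg : Continuous g)
    (hb : ∃ C, ∀ x, |g x| ≤ C) :
    ((Nat.factorial 4 : ℝ) / (2 * π) ^ 4) * ∫ p in {p : ℝ × ℝ × ℝ × ℝ |
        0 < p.1 ∧ p.1 < p.2.1 ∧ p.2.1 < p.2.2.1 ∧ p.2.2.1 < p.2.2.2 ∧ p.2.2.2 < 2 * π},
      g (2 * Real.sin ((p.2.2.1 - p.1) / 2)) =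
    ∫ z in (0:ℝ)..2, g z * (12 / (π * Real.sqrt (4 - z ^ 2))) *
      (Real.arcsin (z / 2) * (π - Real.arcsin (z / 2)) / π ^ 2) := by
  obtain ⟨C, hbC⟩ := hb
  rw [fourfold g hg hbC, onedim g hg, rhsdim g hg, ← intervalIntegral.integral_const_mul]
  apply intervalIntegral.integral_congr
  intro t _
  have hπ := Real.pi_pos
  have h24 : (Nat.factorial 4 : ℝ) = 24 := by norm_num [Nat.factorial]
  rw [h24]
  field_simp
  ring
end

section
/- ∫₀² s · (3/(π√(4−s²))) · [1 − 2·arcsin(s/2)·(π − arcsin(s/2))/π²] ds = 6/π − 24/π³. (That is, the expected length of an arbitrary side of a uniform cyclic quadrilateral is 6/π − 24/π³.) -/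
open Real intervalIntegral
open MeasureTheory Set

noncomputable def Fside (s : ℝ) : ℝ :=
  (3 / π) * (-(Real.sqrt (4 - s ^ 2)) + (2 / π ^ 2) *
    ((π * Real.arcsin (s / 2) - (Real.arcsin (s / 2)) ^ 2 + 2) * Real.sqrt (4 - s ^ 2)
      + (2 * Real.arcsin (s / 2) - π) * s))

lemma sqrt4sub (s : ℝ) (h0 : 0 ≤ s) (h2 : s ≤ 2) :
    Real.sqrt (4 - s ^ 2) = 2 * Real.sqrt (1 - (s / 2) ^ 2) := by
  rw [show (4 - s ^ 2 : ℝ) = 4 * (1 - (s / 2) ^ 2) by ring,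
    Real.sqrt_mul (by norm_num), show (4:ℝ) = 2 ^ 2 by norm_num, Real.sqrt_sq (by norm_num)]

lemma Fside_deriv {s : ℝ} (hs : s ∈ Ioo (0:ℝ) 2) :
    HasDerivAt Fside
      (s * (3 / (π * Real.sqrt (4 - s ^ 2))) *
        (1 - 2 * Real.arcsin (s / 2) * (π - Real.arcsin (s / 2)) / π ^ 2)) s := by
  obtain ⟨h0, h2⟩ := hs
  have hpos : 0 < 4 - s ^ 2 := by nlinarith
  have hCpos : 0 < Real.sqrt (4 - s ^ 2) := Real.sqrt_pos.2 hpos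
  set C := Real.sqrt (4 - s ^ 2) with hC
  set u := Real.arcsin (s / 2) with hu
  have hC2 : C ^ 2 = 4 - s ^ 2 := Real.sq_sqrt hpos.le
  have hCder : HasDerivAt (fun x => Real.sqrt (4 - x ^ 2)) (-s / C) s := by
    have h1 : HasDerivAt (fun x : ℝ => 4 - x ^ 2) (-(2 * s)) s := by
      simpa using ((hasDerivAt_pow 2 s).const_sub 4)
    have := h1.sqrt (by positivity)
    convert this using 1
    rw [← hC]
    field_simp
  have huder : HasDerivAt (fun x => Real.arcsin (x / 2)) (1 / C) s := by
    have hne1 : s / 2 ≠ -1 := by intro h; linarith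
    have hne2 : s / 2 ≠ 1 := by intro h; linarith
    have h1 := (Real.hasDerivAt_arcsin hne1 hne2).comp s
      ((hasDerivAt_id s).div_const 2)
    have heq : Real.sqrt (1 - (s / 2) ^ 2) = C / 2 := by
      rw [hC, sqrt4sub s h0.le h2.le]; ring
    refine h1.congr_deriv ?_
    rw [heq]
    field_simp
  have hsq : HasDerivAt (fun x => (Real.arcsin (x / 2)) ^ 2) (2 * u * (1 / C)) s := by
    have := (hasDerivAt_pow 2 u).comp s huder
    refine this.congr_deriv ?_
    simp [hu, mul_comm, mul_assoc, mul_left_comm]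
  have hπ : π ≠ 0 := Real.pi_ne_zero
  have hCne : C ≠ 0 := hCpos.ne'
  have h1 : HasDerivAt (fun x => π * Real.arcsin (x / 2) - (Real.arcsin (x / 2)) ^ 2 + 2)
      (π * (1 / C) - 2 * u * (1 / C)) s :=
    ((huder.const_mul π).sub hsq).add_const 2
  have h2 := h1.mul hCder
  have h3 : HasDerivAt (fun x => (2 * Real.arcsin (x / 2) - π) * x)
      ((2 * (1 / C)) * s + (2 * u - π) * 1) s :=
    ((huder.const_mul 2).sub_const π).mul (hasDerivAt_id s)
  have h4 := ((h2.add h3).const_mul (2 / π ^ 2))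
  have h5 := (hCder.neg.add h4).const_mul (3 / π)
  unfold Fside
  refine h5.congr_deriv ?_
  rw [hu, hC]
  field_simp
  ring

lemma side_integrand_integrable :
    IntervalIntegrable (fun s => s * (3 / (π * Real.sqrt (4 - s ^ 2))) *
      (1 - 2 * Real.arcsin (s / 2) * (π - Real.arcsin (s / 2)) / π ^ 2)) volume 0 2 := by
  have hg0 : IntervalIntegrable (fun x : ℝ => x ^ (-(1/2) : ℝ)) volume 0 2 :=
    intervalIntegral.intervalIntegrable_rpow' (by norm_num)
  have hg1 : IntervalIntegrable (fun x : ℝ => (2 - x) ^ (-(1/2) : ℝ)) volume 0 2 := by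
    simpa using (hg0.comp_sub_left 2).symm
  have hg : IntervalIntegrable (fun x : ℝ => 6 / (π * Real.sqrt 2) * (2 - x) ^ (-(1/2) : ℝ))
      volume 0 2 := hg1.const_mul _
  have harcsin : Continuous fun s : ℝ => Real.arcsin (s / 2) :=
    Real.continuous_arcsin.comp (continuous_id.div_const 2)
  have hsqc : Continuous fun s : ℝ => Real.sqrt (4 - s ^ 2) :=
    Real.continuous_sqrt.comp (by continuity)
  refine hg.mono_fun' ?_ ?_
  · apply Measurable.aestronglyMeasurable
    exact (measurable_id.mul (measurable_const.div
        (measurable_const.mul hsqc.measurable))).mul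
      (measurable_const.sub ((((measurable_const.mul harcsin.measurable).mul
        (measurable_const.sub harcsin.measurable))).div measurable_const))
  · refine (ae_restrict_iff' measurableSet_uIoc).2
      (Filter.Eventually.of_forall fun x hx => ?_)
    rw [uIoc_of_le (by norm_num : (0:ℝ) ≤ 2)] at hx
    beta_reduce
    obtain ⟨hx0, hx2⟩ := hx
    rcases eq_or_lt_of_le hx2 with h | h
    · subst h
      norm_num [Real.sqrt_eq_zero', Real.zero_rpow]
    · -- 0 < x < 2
      have hpos : (0:ℝ) < 4 - x ^ 2 := by nlinarith
      set A := Real.sqrt (4 - x ^ 2) with hA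
      set S := Real.sqrt (2 - x) with hS
      have hApos : 0 < A := Real.sqrt_pos.2 hpos
      have hSpos : 0 < S := Real.sqrt_pos.2 (by linarith)
      have hs2 : Real.sqrt 2 > 0 := by positivity
      have hAS : Real.sqrt 2 * S ≤ A := by
        rw [hA, hS, show (4 - x^2:ℝ) = (2+x)*(2-x) by ring,
          Real.sqrt_mul (by linarith)]
        exact mul_le_mul_of_nonneg_right (Real.sqrt_le_sqrt (by linarith)) (Real.sqrt_nonneg _)
      set u := Real.arcsin (x / 2) with hu
      have hu0 : 0 ≤ u := Real.arcsin_nonneg.2 (by linarith)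
      have hu1 : u ≤ π / 2 := Real.arcsin_le_pi_div_two _
      set B := 1 - 2 * u * (π - u) / π ^ 2 with hB
      have hπ : 0 < π := Real.pi_pos
      have hB0 : 0 ≤ B := by
        rw [hB]
        rw [sub_nonneg, div_le_one (by positivity)]
        nlinarith
      have hB1 : B ≤ 1 := by
        rw [hB]
        have : 0 ≤ 2 * u * (π - u) / π ^ 2 := by
          apply div_nonneg _ (by positivity)
          nlinarith
        linarith
      have hfx : 0 ≤ x * (3 / (π * A)) * B := by positivity
      rw [Real.norm_of_nonneg hfx]
      have hrpow : (2 - x) ^ (-(1/2) : ℝ) = S⁻¹ := by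
        rw [Real.rpow_neg (by linarith), hS, Real.sqrt_eq_rpow]
      rw [hrpow]
      have hinv : (π * A)⁻¹ ≤ (π * (Real.sqrt 2 * S))⁻¹ := by
        apply inv_anti₀ (by positivity)
        nlinarith
      calc x * (3 / (π * A)) * B = (3 * x * B) * (π * A)⁻¹ := by
            rw [div_eq_mul_inv]; ring
        _ ≤ 6 * (π * (Real.sqrt 2 * S))⁻¹ := by
            apply mul_le_mul _ hinv (by positivity) (by norm_num)
            nlinarith
        _ = 6 / (π * Real.sqrt 2) * S⁻¹ := by
            rw [div_eq_mul_inv, mul_inv, mul_inv, mul_inv]; ring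

theorem side_mean :
    ∫ s in (0:ℝ)..2, s * (3 / (π * Real.sqrt (4 - s ^ 2))) *
      (1 - 2 * Real.arcsin (s / 2) * (π - Real.arcsin (s / 2)) / π ^ 2) =
    6 / π - 24 / π ^ 3 := by
  have hcont : ContinuousOn Fside (Icc 0 2) := by
    apply Continuous.continuousOn
    unfold Fside
    have harcsin : Continuous fun s : ℝ => Real.arcsin (s / 2) :=
      Real.continuous_arcsin.comp (continuous_id.div_const 2)
    have hsqc : Continuous fun s : ℝ => Real.sqrt (4 - s ^ 2) :=
      Real.continuous_sqrt.comp (by continuity)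
    exact continuous_const.mul (hsqc.neg.add (continuous_const.mul
      ((((continuous_const.mul harcsin).sub (harcsin.pow 2)).add continuous_const).mul hsqc |>.add
        (((continuous_const.mul harcsin).sub continuous_const).mul continuous_id))))
  have hderiv : ∀ x ∈ Ioo (0:ℝ) 2, HasDerivWithinAt Fside
      (x * (3 / (π * Real.sqrt (4 - x ^ 2))) *
        (1 - 2 * Real.arcsin (x / 2) * (π - Real.arcsin (x / 2)) / π ^ 2)) (Ioi x) x :=
    fun x hx => (Fside_deriv hx).hasDerivWithinAt
  rw [integral_eq_sub_of_hasDeriv_right_of_le (by norm_num) hcont hderiv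
    side_integrand_integrable]
  have h4 : Real.sqrt 4 = 2 := by
    rw [show (4:ℝ) = 2 ^ 2 by norm_num, Real.sqrt_sq (by norm_num)]
  have hπ : π ≠ 0 := Real.pi_ne_zero
  have hF2 : Fside 2 = 0 := by
    simp only [Fside]
    norm_num [Real.arcsin_one]
    ring
  have hF0 : Fside 0 = -(6 / π) + 24 / π ^ 3 := by
    simp only [Fside]
    norm_num [Real.arcsin_zero, h4]
    field_simp
    ring
  rw [hF2, hF0]
  ring
end

section
/- ∫₀² z · (12/(π√(4−z²))) · arcsin(z/2)·(π − arcsin(z/2))/π² dz = 48/π³. (That is, the expected length of a diagonal of a uniform cyclic quadrilateral is 48/π³.) -/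
open Real intervalIntegral

set_option maxHeartbeats 1000000 in
theorem diagonal_mean :
    ∫ z in (0:ℝ)..2, z * (12 / (π * Real.sqrt (4 - z ^ 2))) *
      (Real.arcsin (z / 2) * (π - Real.arcsin (z / 2)) / π ^ 2) =
    48 / π ^ 3 := by
  have hπ : (0:ℝ) < π := Real.pi_pos
  set g : ℝ → ℝ := fun z => z * (12 / (π * Real.sqrt (4 - z ^ 2))) *
      (Real.arcsin (z / 2) * (π - Real.arcsin (z / 2)) / π ^ 2) with hgdef
  set F : ℝ → ℝ := fun z =>
    24 / π ^ 3 *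
      (π * Real.sin (Real.arcsin (z / 2)) -
        π * Real.arcsin (z / 2) * Real.cos (Real.arcsin (z / 2)) +
        Real.arcsin (z / 2) ^ 2 * Real.cos (Real.arcsin (z / 2)) -
        2 * Real.arcsin (z / 2) * Real.sin (Real.arcsin (z / 2)) -
        2 * Real.cos (Real.arcsin (z / 2))) with hFdef
  -- integrability of g
  have hbint : IntervalIntegrable (fun z : ℝ => 12 / π * (2 - z) ^ (-(1/2) : ℝ))
      MeasureTheory.volume 0 2 := by
    have h0 : IntervalIntegrable (fun x : ℝ => x ^ (-(1/2) : ℝ))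
        MeasureTheory.volume 0 2 := intervalIntegral.intervalIntegrable_rpow' (by norm_num)
    have h1 := h0.comp_sub_left 2
    norm_num at h1
    exact (h1.const_mul _).symm
  have hgint : IntervalIntegrable g MeasureTheory.volume 0 2 := by
    apply hbint.mono_fun
    · apply Measurable.aestronglyMeasurable
      have h1 : Measurable fun z : ℝ => Real.sqrt (4 - z ^ 2) :=
        Real.continuous_sqrt.measurable.comp (by fun_prop)
      have h2 : Measurable fun z : ℝ => Real.arcsin (z / 2) :=
        Real.continuous_arcsin.measurable.comp (by fun_prop)
      exact (measurable_id.mul (measurable_const.div (measurable_const.mul h1))).mul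
        ((h2.mul (measurable_const.sub h2)).div measurable_const)
    · rw [Filter.EventuallyLE, MeasureTheory.ae_restrict_iff' measurableSet_uIoc]
      refine MeasureTheory.ae_of_all _ fun z hz => ?_
      rw [Set.uIoc_of_le (by norm_num : (0:ℝ) ≤ 2)] at hz
      obtain ⟨hz0, hz2⟩ := hz
      have hznn : (0:ℝ) ≤ z := hz0.le
      rcases eq_or_lt_of_le hz2 with rfl | hz2
      · simp only [hgdef, Real.norm_eq_abs]
        norm_num
      · -- 0 < z < 2
        have h4 : (0:ℝ) < 4 - z ^ 2 := by nlinarith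
        have hs : 0 < Real.sqrt (4 - z ^ 2) := Real.sqrt_pos.2 h4
        have hb : (0:ℝ) < 2 - z := by linarith
        have ha : 0 < Real.sqrt (2 - z) := Real.sqrt_pos.2 hb
        have hu0 : 0 ≤ Real.arcsin (z / 2) := Real.arcsin_nonneg.2 (by linarith)
        have hu1 : Real.arcsin (z / 2) ≤ π / 2 := Real.arcsin_le_pi_div_two _
        have hgz : 0 ≤ g z := by
          apply mul_nonneg (mul_nonneg hznn (by positivity))
          apply div_nonneg (mul_nonneg hu0 (by linarith)) (by positivity)
        rw [Real.norm_eq_abs, Real.norm_eq_abs, abs_of_nonneg hgz,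
          abs_of_nonneg (by positivity)]
        have hsq : Real.sqrt (2 - z) ≤ Real.sqrt (4 - z ^ 2) := by
          apply Real.sqrt_le_sqrt; nlinarith
        have hrpow : (2 - z) ^ (-(1/2) : ℝ) = (Real.sqrt (2 - z))⁻¹ := by
          rw [show (-(1/2) : ℝ) = -(1/2 : ℝ) from rfl, Real.rpow_neg hb.le,
            ← Real.sqrt_eq_rpow]
        rw [hrpow]
        have key : z * (Real.arcsin (z / 2) * (π - Real.arcsin (z / 2))) ≤ π ^ 2 := by
          nlinarith [sq_nonneg (π - Real.arcsin (z/2)), sq_nonneg (Real.arcsin (z/2)),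
            mul_nonneg hu0 (by linarith : (0:ℝ) ≤ π - Real.arcsin (z/2))]
        have hgz' : g z = 12 * (z * (Real.arcsin (z / 2) * (π - Real.arcsin (z / 2)))) /
            (π ^ 3 * Real.sqrt (4 - z ^ 2)) := by
          simp only [hgdef]
          field_simp
        have hrhs : 12 / π * (Real.sqrt (2 - z))⁻¹ = 12 / (π * Real.sqrt (2 - z)) := by
          field_simp
        rw [hgz', hrhs, div_le_div_iff₀ (by positivity) (by positivity)]
        nlinarith [mul_le_mul_of_nonneg_right key (mul_pos hπ ha).le,
          mul_le_mul_of_nonneg_left hsq (by positivity : (0:ℝ) ≤ 12 * π ^ 3),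
          mul_nonneg (mul_nonneg hznn hu0) (by linarith : (0:ℝ) ≤ π - Real.arcsin (z/2))]
  -- derivative
  have hderiv : ∀ x ∈ Set.Ioo (0:ℝ) 2, HasDerivAt F (g x) x := by
    intro x hx
    obtain ⟨hx0, hx2⟩ := hx
    have h4 : (0:ℝ) < 4 - x ^ 2 := by nlinarith
    have hs : 0 < Real.sqrt (4 - x ^ 2) := Real.sqrt_pos.2 h4
    have hne1 : x / 2 ≠ -1 := by intro h; nlinarith [h]
    have hne2 : x / 2 ≠ 1 := by intro h; nlinarith [h]
    have hlin : HasDerivAt (fun z : ℝ => z / 2) (1/2) x := (hasDerivAt_id x).div_const 2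
    have hu0 : HasDerivAt (fun z : ℝ => Real.arcsin (z / 2))
        (1 / Real.sqrt (1 - (x/2) ^ 2) * (1/2)) x :=
      by have := (Real.hasDerivAt_arcsin hne1 hne2).comp x hlin; exact this
    have hsqrt : Real.sqrt (1 - (x/2) ^ 2) = Real.sqrt (4 - x ^ 2) / 2 := by
      rw [show (1 - (x/2)^2 : ℝ) = (4 - x^2) / 4 by ring, Real.sqrt_div h4.le,
        show (4:ℝ) = 2^2 by norm_num, Real.sqrt_sq (by norm_num : (0:ℝ) ≤ 2)]
    have hval : 1 / Real.sqrt (1 - (x/2) ^ 2) * (1/2) = 1 / Real.sqrt (4 - x ^ 2) := by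
      rw [hsqrt]; field_simp
    rw [hval] at hu0
    have hsin : HasDerivAt (fun z : ℝ => Real.sin (Real.arcsin (z / 2)))
        (Real.cos (Real.arcsin (x / 2)) * (1 / Real.sqrt (4 - x ^ 2))) x :=
      (Real.hasDerivAt_sin _).comp x hu0
    have hcos : HasDerivAt (fun z : ℝ => Real.cos (Real.arcsin (z / 2)))
        (-Real.sin (Real.arcsin (x / 2)) * (1 / Real.sqrt (4 - x ^ 2))) x :=
      (Real.hasDerivAt_cos _).comp x hu0
    have HD := ((((hsin.const_mul π).sub ((hu0.const_mul π).mul hcos)).add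
        ((hu0.pow 2).mul hcos)).sub ((hu0.const_mul 2).mul hsin)).sub
        (hcos.const_mul 2) |>.const_mul (24 / π ^ 3)
    refine HD.congr_deriv ?_
    have hsinval : Real.sin (Real.arcsin (x / 2)) = x / 2 :=
      Real.sin_arcsin (by linarith) (by linarith)
    rw [hsinval]
    simp only [hgdef, Pi.pow_apply]
    field_simp
    ring
  -- FTC
  rw [show (48:ℝ) / π ^ 3 = F 2 - F 0 by
    simp only [hFdef]
    norm_num [Real.arcsin_one, Real.arcsin_zero]
    field_simp
    ring]
  have h2 : Continuous fun z : ℝ => Real.arcsin (z / 2) :=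
    Real.continuous_arcsin.comp (by fun_prop)
  have hFcont : Continuous F :=
    continuous_const.mul (((((continuous_const.mul
      (Real.continuous_sin.comp h2)).sub ((continuous_const.mul h2).mul
      (Real.continuous_cos.comp h2))).add ((h2.pow 2).mul
      (Real.continuous_cos.comp h2))).sub ((continuous_const.mul h2).mul
      (Real.continuous_sin.comp h2))).sub (continuous_const.mul
      (Real.continuous_cos.comp h2)))
  exact intervalIntegral.integral_eq_sub_of_hasDerivAt_of_le (by norm_num)
    hFcont.continuousOn hderiv hgint
end

section
/- ∫₀² z² · (12/(π√(4−z²))) · arcsin(z/2)·(π − arcsin(z/2))/π² dz = 2 + 6/π². (That is, the second moment of a diagonal of a uniform cyclic quadrilateral is 2 + 6/π².) -/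
open Real intervalIntegral

set_option maxHeartbeats 1000000

noncomputable def diagF (z : ℝ) : ℝ :=
  12 / π ^ 3 * (π * Real.arcsin (z / 2) * Real.arcsin (z / 2)
    - 2 / 3 * (Real.arcsin (z / 2) * Real.arcsin (z / 2) * Real.arcsin (z / 2))
    - (π * Real.arcsin (z / 2) - Real.arcsin (z / 2) * Real.arcsin (z / 2)) *
        (z * Real.sqrt (4 - z ^ 2) / 2)
    - (π - 2 * Real.arcsin (z / 2)) * (1 - z * z / 2) / 2
    - z * Real.sqrt (4 - z ^ 2) / 4)

lemma diagF_deriv {z : ℝ} (hz : z ∈ Set.Ioo (0:ℝ) 2) :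
    HasDerivAt diagF
      (z ^ 2 * (12 / (π * Real.sqrt (4 - z ^ 2))) *
        (Real.arcsin (z / 2) * (π - Real.arcsin (z / 2)) / π ^ 2)) z := by
  obtain ⟨hz0, hz2⟩ := hz
  have h4 : (0:ℝ) < 4 - z ^ 2 := by nlinarith
  have hupos : 0 < Real.sqrt (4 - z ^ 2) := Real.sqrt_pos.mpr h4
  set u := Real.sqrt (4 - z ^ 2) with hu_def
  have husq : u ^ 2 = 4 - z ^ 2 := Real.sq_sqrt h4.le
  have hne : z / 2 ≠ -1 := by intro h; nlinarith [h]
  have hne' : z / 2 ≠ 1 := by intro h; nlinarith [h]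
  have hπ : (0:ℝ) < π := Real.pi_pos
  -- derivative of arcsin (z/2)
  have hs : HasDerivAt (fun z : ℝ => Real.arcsin (z / 2)) (1 / u) z := by
    have h1 : HasDerivAt (fun z : ℝ => z / 2) (1 / 2) z := (hasDerivAt_id z).div_const 2
    have h2 := (Real.hasDerivAt_arcsin hne hne').comp z h1
    refine h2.congr_deriv (Eq.symm ?_)
    have hsq : Real.sqrt (1 - (z / 2) ^ 2) = u / 2 := by
      rw [show (1 : ℝ) - (z/2)^2 = (4 - z^2) / 4 by ring, Real.sqrt_div h4.le,
        show Real.sqrt 4 = 2 by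
          rw [show (4:ℝ) = 2^2 by norm_num, Real.sqrt_sq (by norm_num : (0:ℝ) ≤ 2)]]
    rw [hsq]
    field_simp
  -- derivative of sqrt (4 - z^2)
  have hu' : HasDerivAt (fun z : ℝ => Real.sqrt (4 - z ^ 2)) (-z / u) z := by
    have h1 : HasDerivAt (fun z : ℝ => 4 - z ^ 2) (-(2 * z)) z := by
      simpa using ((hasDerivAt_pow 2 z).const_sub 4)
    have h2 := (Real.hasDerivAt_sqrt h4.ne').comp z h1
    refine h2.congr_deriv (Eq.symm ?_)
    rw [← hu_def]
    field_simp
  have hid : HasDerivAt (fun z : ℝ => z) 1 z := hasDerivAt_id z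
  have hzu : HasDerivAt (fun z : ℝ => z * Real.sqrt (4 - z ^ 2)) (1 * u + z * (-z / u)) z :=
    hid.mul hu'
  have hpis : HasDerivAt (fun z : ℝ => π * Real.arcsin (z / 2)) (π * (1 / u)) z := hs.const_mul π
  have h1 : HasDerivAt (fun z : ℝ => π * Real.arcsin (z / 2) * Real.arcsin (z / 2))
      (π * (1 / u) * Real.arcsin (z / 2) + π * Real.arcsin (z / 2) * (1 / u)) z := hpis.mul hs
  have hss : HasDerivAt (fun z : ℝ => Real.arcsin (z / 2) * Real.arcsin (z / 2))
      (1 / u * Real.arcsin (z / 2) + Real.arcsin (z / 2) * (1 / u)) z := hs.mul hs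
  have h2 := ((hss.mul hs).const_mul (2 / 3 : ℝ))
  have h3 := (hpis.sub hss).mul (hzu.div_const 2)
  have h4' := (((hasDerivAt_const z π).sub (hs.const_mul 2)).mul
      ((hasDerivAt_const z (1:ℝ)).sub ((hid.mul hid).div_const 2))).div_const 2
  have h5 := hzu.div_const 4
  have H := ((((h1.sub h2).sub h3).sub h4').sub h5).const_mul (12 / π ^ 3 : ℝ)
  refine H.congr_deriv (Eq.symm ?_)
  have hune : u ≠ 0 := hupos.ne'
  have hπne : π ≠ 0 := hπ.ne'
  simp only [Pi.sub_apply, Pi.mul_apply]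
  field_simp
  ring_nf
  linear_combination ((12:ℝ) + 24 * Real.arcsin (z * (1/2)) * π - 24 * Real.arcsin (z * (1/2))^2) * husq

lemma diag_bound {x : ℝ} (hx : x ∈ Set.uIoc (0:ℝ) 2) :
    ‖x ^ 2 * (12 / (π * Real.sqrt (4 - x ^ 2))) *
      (Real.arcsin (x / 2) * (π - Real.arcsin (x / 2)) / π ^ 2)‖ ≤
    ‖24 * (2 - x) ^ (-(1/2) : ℝ)‖ := by
  rw [Set.uIoc_of_le (by norm_num : (0:ℝ) ≤ 2)] at hx
  obtain ⟨hx0, hx2⟩ := hx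
  have hπ : (0:ℝ) < π := Real.pi_pos
  have h2x : (0:ℝ) ≤ 2 - x := by linarith
  have hRnn : (0:ℝ) ≤ 24 * (2 - x) ^ (-(1/2) : ℝ) := by positivity
  rw [Real.norm_eq_abs, Real.norm_eq_abs, abs_of_nonneg hRnn]
  rcases eq_or_lt_of_le hx2 with h | h
  · rw [h]
    norm_num [Real.zero_rpow]
  · set s := Real.arcsin (x / 2) with hs_def
    set u := Real.sqrt (4 - x ^ 2) with hu_def
    have h4 : (0:ℝ) < 4 - x ^ 2 := by nlinarith
    have hu : 0 < u := Real.sqrt_pos.mpr h4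
    have hs0 : 0 ≤ s := Real.arcsin_nonneg.mpr (by linarith)
    have hs2 : s ≤ π / 2 := Real.arcsin_le_pi_div_two _
    have hsx : 0 < Real.sqrt (2 - x) := Real.sqrt_pos.mpr (by linarith)
    have hsqrtle : Real.sqrt (2 - x) ≤ u := Real.sqrt_le_sqrt (by nlinarith)
    have hgx : x ^ 2 * (12 / (π * u)) * (s * (π - s) / π ^ 2)
        = 12 * x ^ 2 * s * (π - s) / (π ^ 3 * u) := by
      field_simp
    have hnn : 0 ≤ x ^ 2 * (12 / (π * u)) * (s * (π - s) / π ^ 2) := by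
      have : 0 ≤ π - s := by linarith
      positivity
    rw [abs_of_nonneg hnn, hgx]
    have e1 : x ^ 2 ≤ 4 := by nlinarith
    have A : x ^ 2 * s ≤ 4 * (π / 2) := mul_le_mul e1 hs2 hs0 (by norm_num)
    have B : x ^ 2 * s * (π - s) ≤ 4 * (π / 2) * π :=
      mul_le_mul A (by linarith) (by linarith) (by positivity)
    have hnum : 12 * x ^ 2 * s * (π - s) ≤ 24 * π ^ 2 := by nlinarith
    have hden : π ^ 2 * Real.sqrt (2 - x) ≤ π ^ 3 * u := by
      nlinarith [mul_nonneg (sq_nonneg π) (sub_nonneg.mpr hsqrtle),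
        mul_nonneg (mul_nonneg (sq_nonneg π) (by linarith [Real.pi_gt_three] : (0:ℝ) ≤ π - 1)) hu.le]
    have hstep : 12 * x ^ 2 * s * (π - s) / (π ^ 3 * u)
        ≤ 24 * π ^ 2 / (π ^ 2 * Real.sqrt (2 - x)) :=
      div_le_div₀ (by positivity) hnum (by positivity) hden
    have hfin : 24 * π ^ 2 / (π ^ 2 * Real.sqrt (2 - x)) = 24 * (2 - x) ^ (-(1/2) : ℝ) := by
      rw [Real.rpow_neg h2x, ← Real.sqrt_eq_rpow]
      field_simp
    calc 12 * x ^ 2 * s * (π - s) / (π ^ 3 * u)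
        ≤ 24 * π ^ 2 / (π ^ 2 * Real.sqrt (2 - x)) := hstep
      _ = 24 * (2 - x) ^ (-(1/2) : ℝ) := hfin

theorem diagonal_second_moment :
    ∫ z in (0:ℝ)..2, z ^ 2 * (12 / (π * Real.sqrt (4 - z ^ 2))) *
      (Real.arcsin (z / 2) * (π - Real.arcsin (z / 2)) / π ^ 2) =
    2 + 6 / π ^ 2 := by
  have hπ : (0:ℝ) < π := Real.pi_pos
  have hbound : IntervalIntegrable (fun x : ℝ => 24 * (2 - x) ^ (-(1/2) : ℝ)) MeasureTheory.volume 0 2 := by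
    have h := (intervalIntegrable_rpow' (by norm_num : (-1:ℝ) < -(1/2)) (a := 0) (b := 2)).comp_sub_left 2
    rw [show (2:ℝ) - 0 = 2 by norm_num, show (2:ℝ) - 2 = 0 by norm_num] at h
    exact (h.symm.const_mul 24)
  have hmeas : MeasureTheory.AEStronglyMeasurable
      (fun z : ℝ => z ^ 2 * (12 / (π * Real.sqrt (4 - z ^ 2))) *
        (Real.arcsin (z / 2) * (π - Real.arcsin (z / 2)) / π ^ 2))
      (MeasureTheory.volume.restrict (Set.uIoc (0:ℝ) 2)) := by
    apply Measurable.aestronglyMeasurable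
    have m1 : Measurable fun z : ℝ => (12:ℝ) / (π * Real.sqrt (4 - z ^ 2)) :=
      measurable_const.div
        (continuous_const.mul ((continuous_const.sub (continuous_pow 2)).sqrt)).measurable
    have m2 : Continuous fun z : ℝ => Real.arcsin (z / 2) :=
      Real.continuous_arcsin.comp (continuous_id.div_const 2)
    exact ((measurable_id.pow_const 2).mul m1).mul
      (((m2.mul (continuous_const.sub m2)).measurable).div_const (π ^ 2))
  have hint : IntervalIntegrable
      (fun z : ℝ => z ^ 2 * (12 / (π * Real.sqrt (4 - z ^ 2))) *
        (Real.arcsin (z / 2) * (π - Real.arcsin (z / 2)) / π ^ 2)) MeasureTheory.volume 0 2 := by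
    apply hbound.mono_fun hmeas
    exact (MeasureTheory.ae_restrict_iff' measurableSet_uIoc).mpr
      (Filter.Eventually.of_forall fun x hx => diag_bound hx)
  have hcont : ContinuousOn diagF (Set.Icc (0:ℝ) 2) := by
    apply Continuous.continuousOn
    unfold diagF
    continuity
  have hderiv : ∀ x ∈ Set.Ioo (0:ℝ) 2, HasDerivWithinAt diagF
      (x ^ 2 * (12 / (π * Real.sqrt (4 - x ^ 2))) *
        (Real.arcsin (x / 2) * (π - Real.arcsin (x / 2)) / π ^ 2)) (Set.Ioi x) x :=
    fun x hx => (diagF_deriv hx).hasDerivWithinAt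
  rw [intervalIntegral.integral_eq_sub_of_hasDeriv_right_of_le (by norm_num : (0:ℝ) ≤ 2)
    hcont hderiv hint]
  have h2v : diagF 2 = 2 := by
    unfold diagF
    rw [show (4:ℝ) - 2 ^ 2 = 0 by norm_num, Real.sqrt_zero,
      show (2:ℝ) / 2 = 1 by norm_num, Real.arcsin_one]
    field_simp [Real.pi_ne_zero]
    ring
  have h0v : diagF 0 = -(6 / π ^ 2) := by
    unfold diagF
    rw [show (0:ℝ) / 2 = 0 by norm_num, Real.arcsin_zero]
    field_simp [Real.pi_ne_zero]
    ring
  rw [h2v, h0v]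
  ring
end

section
/- (3/(2π⁴)) · ∫₀^{2π} ∫_{θ₁}^{2π} ∫_{θ₂}^{2π} ∫_{θ₃}^{2π} [2 sin((θ₄ − θ₁)/2)]·[2 sin((θ₂ − θ₁)/2)] dθ₄ dθ₃ dθ₂ dθ₁ = −24/π² + 384/π⁴. (That is, the expected product E(s₁s₂) of the adjacent sides s₁ and s₂ of a uniform cyclic quadrilateral equals −24/π² + 384/π⁴, using that s₁ = 2 sin((θ₁ − θ₀)/2) = 2 sin(π − (θ₄ − θ₁)/2) = 2 sin((θ₄ − θ₁)/2).) -/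
open Real intervalIntegral

private lemma lem1 (t1 t3 : ℝ) :
    (∫ t4 in t3..(2 * π), 2 * Real.sin ((t4 - t1) / 2)) =
      4 * Real.cos (t1 / 2) + 4 * Real.cos ((t3 - t1) / 2) := by
  have h : ∀ x ∈ Set.uIcc t3 (2 * π),
      HasDerivAt (fun y => -4 * Real.cos ((y - t1) / 2)) (2 * Real.sin ((x - t1) / 2)) x := by
    intro x _
    have h1 : HasDerivAt (fun y : ℝ => (y - t1) / 2) (1 / 2) x := by
      simpa using ((hasDerivAt_id x).sub_const t1).div_const 2
    have h2 := ((Real.hasDerivAt_cos ((x - t1) / 2)).comp x h1).const_mul (-4 : ℝ)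
    refine h2.congr_deriv ?_
    ring
  have hint : IntervalIntegrable (fun x => 2 * Real.sin ((x - t1) / 2))
      MeasureTheory.volume t3 (2 * π) :=
    (Continuous.intervalIntegrable (by fun_prop) _ _)
  rw [intervalIntegral.integral_eq_sub_of_hasDerivAt h hint]
  have : (2 * π - t1) / 2 = π - t1 / 2 := by ring
  rw [this, Real.cos_pi_sub]
  ring

private lemma lem2 (t1 t2 : ℝ) :
    (∫ t3 in t2..(2 * π), (4 * Real.cos (t1 / 2) + 4 * Real.cos ((t3 - t1) / 2))) =
      4 * Real.cos (t1 / 2) * (2 * π - t2) + 8 * Real.sin (t1 / 2)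
        - 8 * Real.sin ((t2 - t1) / 2) := by
  have h : ∀ x ∈ Set.uIcc t2 (2 * π),
      HasDerivAt (fun y => 4 * Real.cos (t1 / 2) * y + 8 * Real.sin ((y - t1) / 2))
        (4 * Real.cos (t1 / 2) + 4 * Real.cos ((x - t1) / 2)) x := by
    intro x _
    have h1 : HasDerivAt (fun y : ℝ => (y - t1) / 2) (1 / 2) x := by
      simpa using ((hasDerivAt_id x).sub_const t1).div_const 2
    have h2 := ((Real.hasDerivAt_sin ((x - t1) / 2)).comp x h1).const_mul (8 : ℝ)
    have h3 := (hasDerivAt_id x).const_mul (4 * Real.cos (t1 / 2))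
    refine (h3.add h2).congr_deriv ?_
    ring
  have hint : IntervalIntegrable (fun x => 4 * Real.cos (t1 / 2) + 4 * Real.cos ((x - t1) / 2))
      MeasureTheory.volume t2 (2 * π) :=
    (Continuous.intervalIntegrable (by fun_prop) _ _)
  rw [intervalIntegral.integral_eq_sub_of_hasDerivAt h hint]
  have : (2 * π - t1) / 2 = π - t1 / 2 := by ring
  rw [this, Real.sin_pi_sub]
  ring

private lemma lem3 (t1 : ℝ) :
    (∫ t2 in t1..(2 * π),
        (4 * Real.cos (t1 / 2) * (2 * π - t2) + 8 * Real.sin (t1 / 2)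
          - 8 * Real.sin ((t2 - t1) / 2)) * (2 * Real.sin ((t2 - t1) / 2))) =
      32 * π * Real.cos (t1 / 2) - 16 * t1 * Real.cos (t1 / 2) - 16 * π + 8 * t1
        + 32 * Real.sin (t1 / 2) - 16 * Real.sin (t1 / 2) * Real.cos (t1 / 2) := by
  set c := Real.cos (t1 / 2) with hc
  set s := Real.sin (t1 / 2) with hs
  have h : ∀ x ∈ Set.uIcc t1 (2 * π),
      HasDerivAt (fun y =>
          -16 * c * (2 * π - y) * Real.cos ((y - t1) / 2)
          - 32 * c * Real.sin ((y - t1) / 2)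
          - 32 * s * Real.cos ((y - t1) / 2)
          - 8 * y + 8 * Real.sin (2 * ((y - t1) / 2)))
        ((4 * c * (2 * π - x) + 8 * s - 8 * Real.sin ((x - t1) / 2))
          * (2 * Real.sin ((x - t1) / 2))) x := by
    intro x _
    have h1 : HasDerivAt (fun y : ℝ => (y - t1) / 2) (1 / 2) x := by
      simpa using ((hasDerivAt_id x).sub_const t1).div_const 2
    have hcos := (Real.hasDerivAt_cos ((x - t1) / 2)).comp x h1
    have hsin := (Real.hasDerivAt_sin ((x - t1) / 2)).comp x h1
    have h2 : HasDerivAt (fun y : ℝ => 2 * ((y - t1) / 2)) 1 x := by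
      simpa using h1.const_mul (2 : ℝ)
    have hsin2 := (Real.hasDerivAt_sin (2 * ((x - t1) / 2))).comp x h2
    have hlin : HasDerivAt (fun y : ℝ => -16 * c * (2 * π - y)) (16 * c) x := by
      have h0 := ((hasDerivAt_const x (2 * π)).sub (hasDerivAt_id x)).const_mul (-16 * c)
      refine h0.congr_deriv ?_
      ring
    have hprod := hlin.mul hcos
    have H := ((((hprod.sub (hsin.const_mul (32 * c))).sub
        (hcos.const_mul (32 * s))).sub ((hasDerivAt_id x).const_mul 8)).add
        (hsin2.const_mul 8))
    have H' : HasDerivAt (fun y =>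
          -16 * c * (2 * π - y) * Real.cos ((y - t1) / 2)
          - 32 * c * Real.sin ((y - t1) / 2)
          - 32 * s * Real.cos ((y - t1) / 2)
          - 8 * y + 8 * Real.sin (2 * ((y - t1) / 2)))
        (16 * c * Real.cos ((x - t1) / 2)
          + (-16 * c * (2 * π - x)) * (-Real.sin ((x - t1) / 2) * (1 / 2))
          - 32 * c * (Real.cos ((x - t1) / 2) * (1 / 2))
          - 32 * s * (-Real.sin ((x - t1) / 2) * (1 / 2))
          - 8 * 1 + 8 * (Real.cos (2 * ((x - t1) / 2)) * 1)) x := H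
    convert H' using 1
    rw [Real.cos_two_mul' ((x - t1) / 2)]
    linear_combination (-8:ℝ) * Real.sin_sq_add_cos_sq ((x - t1) / 2)
  have hint : IntervalIntegrable (fun x =>
      (4 * c * (2 * π - x) + 8 * s - 8 * Real.sin ((x - t1) / 2))
        * (2 * Real.sin ((x - t1) / 2))) MeasureTheory.volume t1 (2 * π) :=
    (Continuous.intervalIntegrable (by fun_prop) _ _)
  rw [intervalIntegral.integral_eq_sub_of_hasDerivAt h hint]
  have e1 : (2 * π - t1) / 2 = π - t1 / 2 := by ring
  have e3 : (t1 - t1) / 2 = 0 := by ring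
  rw [e1, e3]
  have e2 : (2 : ℝ) * (π - t1 / 2) = 2 * π - t1 := by ring
  rw [e2]
  have e4 : Real.sin (2 * π - t1) = -Real.sin t1 := by
    rw [Real.sin_sub, Real.sin_two_pi, Real.cos_two_pi]; ring
  have e5 : Real.sin t1 = 2 * s * c := by
    rw [hs, hc, ← Real.sin_two_mul]; congr 1; ring
  rw [Real.cos_pi_sub, Real.sin_pi_sub, e4, e5]
  simp only [mul_zero, Real.sin_zero, Real.cos_zero]
  ring

private lemma lem4 :
    (∫ t1 in (0:ℝ)..(2 * π),
        (32 * π * Real.cos (t1 / 2) - 16 * t1 * Real.cos (t1 / 2) - 16 * π + 8 * t1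
          + 32 * Real.sin (t1 / 2) - 16 * Real.sin (t1 / 2) * Real.cos (t1 / 2))) =
      256 - 16 * π ^ 2 := by
  have h : ∀ x ∈ Set.uIcc (0:ℝ) (2 * π),
      HasDerivAt (fun y =>
          64 * π * Real.sin (y / 2) - 16 * (2 * y * Real.sin (y / 2) + 4 * Real.cos (y / 2))
          - 16 * π * y + 4 * y ^ 2 - 64 * Real.cos (y / 2) + 8 * Real.cos (2 * (y / 2)))
        (32 * π * Real.cos (x / 2) - 16 * x * Real.cos (x / 2) - 16 * π + 8 * x
          + 32 * Real.sin (x / 2) - 16 * Real.sin (x / 2) * Real.cos (x / 2)) x := by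
    intro x _
    have h1 : HasDerivAt (fun y : ℝ => y / 2) (1 / 2) x := (hasDerivAt_id x).div_const 2
    have hcos := (Real.hasDerivAt_cos (x / 2)).comp x h1
    have hsin := (Real.hasDerivAt_sin (x / 2)).comp x h1
    have h2 : HasDerivAt (fun y : ℝ => 2 * (y / 2)) 1 x := by
      simpa using h1.const_mul (2 : ℝ)
    have hcos2 := (Real.hasDerivAt_cos (2 * (x / 2))).comp x h2
    have hysin : HasDerivAt (fun y : ℝ => 2 * y * Real.sin (y / 2))
        (2 * Real.sin (x / 2) + 2 * x * (Real.cos (x / 2) * (1 / 2))) x := by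
      have h0 := ((hasDerivAt_id x).const_mul (2 : ℝ)).mul hsin
      refine h0.congr_deriv ?_
      simp only [Function.comp_apply, id_eq]
      ring
    have hsq : HasDerivAt (fun y : ℝ => 4 * y ^ 2) (4 * (2 * x)) x := by
      have h0 := (hasDerivAt_pow 2 x).const_mul (4 : ℝ)
      refine h0.congr_deriv ?_
      push_cast; ring
    have H := ((((((hsin.const_mul (64 * π)).sub
        ((hysin.add (hcos.const_mul 4)).const_mul 16)).sub
        ((hasDerivAt_id x).const_mul (16 * π))).add hsq).sub
        (hcos.const_mul 64)).add (hcos2.const_mul 8))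
    have H' : HasDerivAt (fun y =>
          64 * π * Real.sin (y / 2) - 16 * (2 * y * Real.sin (y / 2) + 4 * Real.cos (y / 2))
          - 16 * π * y + 4 * y ^ 2 - 64 * Real.cos (y / 2) + 8 * Real.cos (2 * (y / 2)))
        (64 * π * (Real.cos (x / 2) * (1 / 2))
          - 16 * ((2 * Real.sin (x / 2) + 2 * x * (Real.cos (x / 2) * (1 / 2)))
              + 4 * (-Real.sin (x / 2) * (1 / 2)))
          - 16 * π * 1 + 4 * (2 * x) - 64 * (-Real.sin (x / 2) * (1 / 2))
          + 8 * (-Real.sin (2 * (x / 2)) * 1)) x := H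
    convert H' using 1
    rw [Real.sin_two_mul]
    ring
  have hint : IntervalIntegrable (fun x =>
      32 * π * Real.cos (x / 2) - 16 * x * Real.cos (x / 2) - 16 * π + 8 * x
        + 32 * Real.sin (x / 2) - 16 * Real.sin (x / 2) * Real.cos (x / 2))
      MeasureTheory.volume 0 (2 * π) :=
    (Continuous.intervalIntegrable (by fun_prop) _ _)
  rw [intervalIntegral.integral_eq_sub_of_hasDerivAt h hint]
  have e1 : (2 * π) / 2 = π := by ring
  rw [e1]
  have e2 : (2 : ℝ) * π = 2 * π := rfl
  rw [e2]
  simp only [Real.sin_pi, Real.cos_pi, mul_zero, zero_div, Real.sin_zero, Real.cos_zero,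
    Real.cos_two_pi]
  ring

theorem expected_product_s1_s2 :
    (3 / (2 * π ^ 4)) *
      ∫ θ₁ in (0:ℝ)..(2 * π), ∫ θ₂ in θ₁..(2 * π), ∫ θ₃ in θ₂..(2 * π), ∫ θ₄ in θ₃..(2 * π),
        (2 * Real.sin ((θ₄ - θ₁) / 2)) * (2 * Real.sin ((θ₂ - θ₁) / 2)) =
    -24 / π ^ 2 + 384 / π ^ 4 := by
  have key : (∫ θ₁ in (0:ℝ)..(2 * π), ∫ θ₂ in θ₁..(2 * π), ∫ θ₃ in θ₂..(2 * π),
      ∫ θ₄ in θ₃..(2 * π),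
        (2 * Real.sin ((θ₄ - θ₁) / 2)) * (2 * Real.sin ((θ₂ - θ₁) / 2))) =
      256 - 16 * π ^ 2 := by
    rw [← lem4]
    apply intervalIntegral.integral_congr
    intro t1 _
    simp only
    rw [← lem3 t1]
    apply intervalIntegral.integral_congr
    intro t2 _
    simp only
    simp only [intervalIntegral.integral_mul_const, lem1, lem2]
  rw [key]
  have hπ : π ≠ 0 := Real.pi_ne_zero
  field_simp
  ring
end

section
/- Let g : ℝ × ℝ → ℝ be a bounded continuous function. Then 6 · ∫ g(ξ₁ + ξ₂, ξ₂ + ξ₃) dξ₁dξ₂dξ₃ over the simplex {ξ₁ > 0, ξ₂ > 0, ξ₃ > 0, ξ₁ + ξ₂ + ξ₃ < 1} equals ∫₀¹ ∫₀¹ g(u, v) · 6·min{u, 1−u, v, 1−v} du dv. (That is, if (ξ₁,ξ₂,ξ₃) is uniform on the 3-dimensional simplex, then the pair (η₁, η₂) = (ξ₁ + ξ₂, ξ₂ + ξ₃) has joint density 6·min{η₁, 1−η₁, η₂, 1−η₂} on the unit square — the bivariate tent distribution.) -/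
open MeasureTheory Real intervalIntegral Set

noncomputable def tentHomeo : ((ℝ × ℝ) × ℝ) ≃ₜ (ℝ × ℝ × ℝ) where
  toFun p := (p.1.1 - p.2, p.2, p.1.2 - p.2)
  invFun q := ((q.1 + q.2.1, q.2.2 + q.2.1), q.2.1)
  left_inv p := by ext <;> simp
  right_inv q := by ext <;> simp
  continuous_toFun := by fun_prop
  continuous_invFun := by fun_prop

lemma tent_mp : MeasurePreserving (⇑tentHomeo)
    (volume : Measure ((ℝ × ℝ) × ℝ)) (volume : Measure (ℝ × ℝ × ℝ)) := by
  have m1 : MeasurePreserving (Prod.swap : ((ℝ × ℝ) × ℝ) → ℝ × (ℝ × ℝ)) volume volume :=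
    Measure.measurePreserving_swap
  have msk : MeasurePreserving (fun p : ℝ × (ℝ × ℝ) => (p.1, (p.2.1 - p.1, p.2.2 - p.1)))
      (volume : Measure (ℝ × (ℝ × ℝ))) volume := by
    rw [Measure.volume_eq_prod ℝ (ℝ × ℝ)]
    have hsk := MeasurePreserving.skew_product (f := (id : ℝ → ℝ))
      (g := fun (a : ℝ) (y : ℝ × ℝ) => (y.1 - a, y.2 - a))
      (μa := (volume : Measure ℝ)) (μb := (volume : Measure ℝ))
      (μc := (volume : Measure (ℝ × ℝ))) (μd := (volume : Measure (ℝ × ℝ)))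
      (MeasurePreserving.id _) (by fun_prop) (ae_of_all _ fun a => ?_)
    · simpa using hsk
    · have h : (fun y : ℝ × ℝ => (y.1 - a, y.2 - a)) = (fun y : ℝ × ℝ => y + (-(a, a))) := by
        funext y; simp [Prod.ext_iff, sub_eq_add_neg]
      change Measure.map (fun y : ℝ × ℝ => (y.1 - a, y.2 - a)) volume = volume
      rw [h]
      exact map_add_right_eq_self volume _
  have m2 : MeasurePreserving (Prod.swap : ℝ × (ℝ × ℝ) → (ℝ × ℝ) × ℝ) volume volume :=
    Measure.measurePreserving_swap
  have m3 : MeasurePreserving (⇑(MeasurableEquiv.prodAssoc : ((ℝ × ℝ) × ℝ) ≃ᵐ ℝ × ℝ × ℝ))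
      volume volume := volume_preserving_prodAssoc
  have m4 : MeasurePreserving (Prod.map (id : ℝ → ℝ) (Prod.swap : ℝ × ℝ → ℝ × ℝ))
      (volume : Measure (ℝ × (ℝ × ℝ))) volume :=
    (MeasurePreserving.id _).prod (Measure.measurePreserving_swap)
  have comp := m4.comp (m3.comp (m2.comp (msk.comp m1)))
  have he : ⇑tentHomeo = (Prod.map (id : ℝ → ℝ) (Prod.swap : ℝ × ℝ → ℝ × ℝ)) ∘
      (⇑(MeasurableEquiv.prodAssoc : ((ℝ × ℝ) × ℝ) ≃ᵐ ℝ × ℝ × ℝ)) ∘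
      (Prod.swap : ℝ × (ℝ × ℝ) → (ℝ × ℝ) × ℝ) ∘
      (fun p : ℝ × (ℝ × ℝ) => (p.1, (p.2.1 - p.1, p.2.2 - p.1))) ∘
      (Prod.swap : ((ℝ × ℝ) × ℝ) → ℝ × (ℝ × ℝ)) := by
    funext p; rfl
  rw [he]; exact comp

def tentT : Set ((ℝ × ℝ) × ℝ) :=
  {p | p.2 < p.1.1 ∧ 0 < p.2 ∧ p.2 < p.1.2 ∧ p.1.1 + p.1.2 - p.2 < 1}

lemma tentT_meas : MeasurableSet tentT := by
  have h : tentT = {p : (ℝ × ℝ) × ℝ | p.2 < p.1.1} ∩ ({p | 0 < p.2} ∩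
      ({p | p.2 < p.1.2} ∩ {p | p.1.1 + p.1.2 - p.2 < 1})) := by
    ext p; simp [tentT, and_assoc]
  rw [h]
  exact (measurableSet_lt (by fun_prop) (by fun_prop)).inter
    ((measurableSet_lt (by fun_prop) (by fun_prop)).inter
      ((measurableSet_lt (by fun_prop) (by fun_prop)).inter
        (measurableSet_lt (by fun_prop) (by fun_prop))))

lemma tentT_sub : tentT ⊆ (Ioo (0:ℝ) 1 ×ˢ Ioo (0:ℝ) 1) ×ˢ Ioo (0:ℝ) 1 := by
  rintro ⟨⟨u, v⟩, w⟩ ⟨h1, h2, h3, h4⟩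
  simp only [Set.mem_prod, Set.mem_Ioo] at *
  refine ⟨⟨⟨?_, ?_⟩, ?_, ?_⟩, ?_, ?_⟩ <;> linarith

lemma tentT_vol : volume tentT < ⊤ := by
  refine (measure_mono tentT_sub).trans_lt ?_
  rw [Measure.volume_eq_prod, Measure.prod_prod, Measure.volume_eq_prod, Measure.prod_prod]
  simp [Real.volume_Ioo]

lemma tent_len_eq {u v : ℝ} (hu : u ∈ Icc (0:ℝ) 1) (hv : v ∈ Icc (0:ℝ) 1) :
    max (min u v - max 0 (u + v - 1)) 0 = min (min u (1 - u)) (min v (1 - v)) := by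
  obtain ⟨h1, h2⟩ := hu; obtain ⟨h3, h4⟩ := hv
  simp only [min_def, max_def]
  split_ifs <;> linarith

lemma tent_len_zero_left {u : ℝ} (v : ℝ) (hu : u ∉ Ioc (0:ℝ) 1) :
    max (min u v - max 0 (u + v - 1)) 0 = 0 := by
  simp only [Set.mem_Ioc, not_and_or, not_lt, not_le] at hu
  apply max_eq_right
  rcases hu with h | h
  · have := min_le_left u v; have := le_max_left (0:ℝ) (u + v - 1); linarith
  · have := min_le_right u v; have := le_max_right (0:ℝ) (u + v - 1); linarith

lemma tent_len_zero_right (u : ℝ) {v : ℝ} (hv : v ∉ Ioc (0:ℝ) 1) :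
    max (min u v - max 0 (u + v - 1)) 0 = 0 := by
  simp only [Set.mem_Ioc, not_and_or, not_lt, not_le] at hv
  apply max_eq_right
  rcases hv with h | h
  · have := min_le_right u v; have := le_max_left (0:ℝ) (u + v - 1); linarith
  · have := min_le_left u v; have := le_max_right (0:ℝ) (u + v - 1); linarith

theorem bivariate_tent_from_simplex (g : ℝ × ℝ → ℝ) (hg : Continuous g)
    (hb : ∃ C, ∀ p, |g p| ≤ C) :
    6 * ∫ ξ in {ξ : ℝ × ℝ × ℝ |
        0 < ξ.1 ∧ 0 < ξ.2.1 ∧ 0 < ξ.2.2 ∧ ξ.1 + ξ.2.1 + ξ.2.2 < 1},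
      g (ξ.1 + ξ.2.1, ξ.2.1 + ξ.2.2) =
    ∫ u in (0:ℝ)..1, ∫ v in (0:ℝ)..1,
      g (u, v) * (6 * min (min u (1 - u)) (min v (1 - v))) := by
  obtain ⟨C, hC⟩ := hb
  have hC0 : 0 ≤ C := (abs_nonneg _).trans (hC 0)
  set len : ℝ → ℝ → ℝ := fun u v => max (min u v - max 0 (u + v - 1)) 0 with hlen
  set S : Set (ℝ × ℝ × ℝ) := {ξ : ℝ × ℝ × ℝ |
      0 < ξ.1 ∧ 0 < ξ.2.1 ∧ 0 < ξ.2.2 ∧ ξ.1 + ξ.2.1 + ξ.2.2 < 1} with hS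
  -- step 1 : change of variables
  have emb : MeasurableEmbedding (⇑tentHomeo) :=
    tentHomeo.toMeasurableEquiv.measurableEmbedding
  have key := tent_mp.setIntegral_preimage_emb emb
    (fun ξ : ℝ × ℝ × ℝ => g (ξ.1 + ξ.2.1, ξ.2.1 + ξ.2.2)) S
  have happ : ∀ p : (ℝ × ℝ) × ℝ, ⇑tentHomeo p = (p.1.1 - p.2, p.2, p.1.2 - p.2) :=
    fun _ => rfl
  have hpre : ⇑tentHomeo ⁻¹' S = tentT := by
    ext ⟨⟨u, v⟩, w⟩
    simp only [Set.mem_preimage, happ, hS, Set.mem_setOf_eq, tentT]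
    constructor <;> rintro ⟨a, b, c, d⟩ <;>
      refine ⟨by linarith, by linarith, by linarith, by linarith⟩
  have hfun : ∀ p : (ℝ × ℝ) × ℝ,
      g ((tentHomeo p).1 + (tentHomeo p).2.1, (tentHomeo p).2.1 + (tentHomeo p).2.2)
        = g p.1 := by
    rintro ⟨⟨u, v⟩, w⟩
    show g (u - w + w, w + (v - w)) = g (u, v)
    norm_num
  have step1 : (∫ ξ in S, g (ξ.1 + ξ.2.1, ξ.2.1 + ξ.2.2)) =
      ∫ p in tentT, g p.1 := by
    rw [← key, hpre]
    exact setIntegral_congr_fun tentT_meas fun p _ => hfun p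
  -- step 2 : Fubini over the last coordinate
  have I1 : Integrable (tentT.indicator fun p : (ℝ × ℝ) × ℝ => g p.1) volume := by
    rw [integrable_indicator_iff tentT_meas]
    refine Measure.integrableOn_of_bounded (M := C) tentT_vol.ne
      (hg.comp continuous_fst).aestronglyMeasurable (ae_of_all _ fun x => ?_)
    rw [Real.norm_eq_abs]; exact hC _
  have memiff : ∀ u v w : ℝ, ((u, v), w) ∈ tentT ↔
      w ∈ Ioo (max 0 (u + v - 1)) (min u v) := by
    intro u v w
    simp only [tentT, Set.mem_setOf_eq, Set.mem_Ioo, max_lt_iff, lt_min_iff]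
    constructor
    · rintro ⟨a, b, c, d⟩
      exact ⟨⟨b, by linarith⟩, a, c⟩
    · rintro ⟨⟨b, e⟩, a, c⟩
      exact ⟨a, b, c, by linarith⟩
  have inner : ∀ x : ℝ × ℝ,
      (∫ w : ℝ, tentT.indicator (fun p : (ℝ × ℝ) × ℝ => g p.1) (x, w)) =
      g x * len x.1 x.2 := by
    intro x
    have hx : (fun w : ℝ => tentT.indicator (fun p : (ℝ × ℝ) × ℝ => g p.1) (x, w)) =
        (Ioo (max 0 (x.1 + x.2 - 1)) (min x.1 x.2)).indicator (fun _ => g x) := by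
      funext w
      by_cases h : ((x.1, x.2), w) ∈ tentT
      · rw [Set.indicator_of_mem (by simpa using h),
          Set.indicator_of_mem ((memiff x.1 x.2 w).1 h)]
      · rw [Set.indicator_of_notMem (by simpa using h),
          Set.indicator_of_notMem fun hw => h ((memiff x.1 x.2 w).2 hw)]
    rw [hx, integral_indicator_const _ measurableSet_Ioo, Real.volume_real_Ioo, smul_eq_mul,
      mul_comm]
  have step2 : (∫ p in tentT, g (p.1 : ℝ × ℝ)) =
      ∫ x : ℝ × ℝ, g x * len x.1 x.2 := by
    rw [← MeasureTheory.integral_indicator tentT_meas,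
      show (volume : Measure ((ℝ × ℝ) × ℝ)) =
        (volume : Measure (ℝ × ℝ)).prod (volume : Measure ℝ) from rfl,
      integral_prod _ (by rwa [Measure.volume_eq_prod] at I1)]
    exact integral_congr_ae (ae_of_all _ fun x => inner x)
  -- step 3 : Fubini to iterated integrals
  have hQ0l : ∀ u v : ℝ, u ∉ Ioc (0:ℝ) 1 → g (u, v) * len u v = 0 := by
    intro u v hu; rw [hlen]; simp only
    rw [tent_len_zero_left v hu, mul_zero]
  have hQ0r : ∀ u v : ℝ, v ∉ Ioc (0:ℝ) 1 → g (u, v) * len u v = 0 := by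
    intro u v hv; rw [hlen]; simp only
    rw [tent_len_zero_right u hv, mul_zero]
  have lenmeas : Continuous fun x : ℝ × ℝ => len x.1 x.2 := by
    rw [hlen]; fun_prop
  have I2 : Integrable (fun x : ℝ × ℝ => g x * len x.1 x.2) volume := by
    have hsupp : (fun x : ℝ × ℝ => g x * len x.1 x.2) =
        (Ioc (0:ℝ) 1 ×ˢ Ioc (0:ℝ) 1).indicator (fun x : ℝ × ℝ => g x * len x.1 x.2) := by
      refine (Set.indicator_eq_self.2 fun x hx => ?_).symm
      by_contra hxn
      simp only [Set.mem_prod, not_and_or] at hxn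
      rcases hxn with h | h
      · exact hx (hQ0l x.1 x.2 h)
      · exact hx (hQ0r x.1 x.2 h)
    rw [hsupp, integrable_indicator_iff (measurableSet_Ioc.prod measurableSet_Ioc)]
    refine Measure.integrableOn_of_bounded (M := C) ?_
      (hg.mul lenmeas).aestronglyMeasurable ?_
    · rw [Measure.volume_eq_prod, Measure.prod_prod]
      simp [Real.volume_Ioc]
    · refine ((ae_restrict_iff' (measurableSet_Ioc.prod measurableSet_Ioc)).2
        (ae_of_all _ fun x hx => ?_))
      obtain ⟨hx1, hx2⟩ := hx
      have h1 : 0 ≤ len x.1 x.2 := le_max_right _ _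
      have h2 : len x.1 x.2 ≤ 1 := by
        rw [hlen]; simp only
        refine max_le ?_ zero_le_one
        have := min_le_left x.1 x.2
        have := le_max_left (0:ℝ) (x.1 + x.2 - 1)
        have := hx1.2
        linarith
      rw [Real.norm_eq_abs, abs_mul]
      calc |g x| * |len x.1 x.2| ≤ C * 1 := by
            refine mul_le_mul (hC x) (by rwa [abs_of_nonneg h1]) (abs_nonneg _) hC0
        _ = C := mul_one C
  have step3 : (∫ x : ℝ × ℝ, g x * len x.1 x.2) =
      ∫ u : ℝ, ∫ v : ℝ, g (u, v) * len u v := by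
    rw [show (volume : Measure (ℝ × ℝ)) =
        (volume : Measure ℝ).prod (volume : Measure ℝ) from rfl,
      integral_prod _ (by rwa [Measure.volume_eq_prod] at I2)]
  -- step 4 : reduce to interval integrals
  have hinner_eq : ∀ u : ℝ, (∫ v : ℝ, g (u, v) * len u v) =
      ∫ v in (0:ℝ)..1, g (u, v) * len u v := by
    intro u
    rw [intervalIntegral.integral_of_le zero_le_one,
      setIntegral_eq_integral_of_forall_compl_eq_zero fun v hv => hQ0r u v hv]
  have houter_eq : (∫ u : ℝ, ∫ v in (0:ℝ)..1, g (u, v) * len u v) =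
      ∫ u in (0:ℝ)..1, ∫ v in (0:ℝ)..1, g (u, v) * len u v := by
    rw [intervalIntegral.integral_of_le zero_le_one,
      setIntegral_eq_integral_of_forall_compl_eq_zero]
    intro u hu
    have : (fun v => g (u, v) * len u v) = fun _ => (0:ℝ) :=
      funext fun v => hQ0l u v hu
    rw [this, intervalIntegral.integral_const, smul_zero]
  -- step 5 : identify the density on [0,1]²
  have step5 : (∫ u in (0:ℝ)..1, ∫ v in (0:ℝ)..1, g (u, v) * len u v) =
      ∫ u in (0:ℝ)..1, ∫ v in (0:ℝ)..1,
        g (u, v) * min (min u (1 - u)) (min v (1 - v)) := by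
    refine intervalIntegral.integral_congr fun u hu => ?_
    rw [Set.uIcc_of_le zero_le_one] at hu
    refine intervalIntegral.integral_congr fun v hv => ?_
    rw [Set.uIcc_of_le zero_le_one] at hv
    rw [hlen]; simp only
    rw [tent_len_eq hu hv]
  -- step 6 : pull out the constant 6 on the right
  have step6 : (∫ u in (0:ℝ)..1, ∫ v in (0:ℝ)..1,
        g (u, v) * (6 * min (min u (1 - u)) (min v (1 - v)))) =
      6 * ∫ u in (0:ℝ)..1, ∫ v in (0:ℝ)..1,
        g (u, v) * min (min u (1 - u)) (min v (1 - v)) := by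
    rw [← intervalIntegral.integral_const_mul]
    refine intervalIntegral.integral_congr fun u _ => ?_
    rw [← intervalIntegral.integral_const_mul]
    refine intervalIntegral.integral_congr fun v _ => ?_
    ring
  rw [step6, step1, step2, step3]
  congr 1
  rw [← step5, ← houter_eq]
  exact integral_congr_ae (ae_of_all _ fun u => hinner_eq u)
end

section
/- ∫₀^π ∫₀^π α · β · (6/π³)·min{α, π−α, β, π−β} dα dβ = π²/4. (Since each of α and β has marginal density 6x(π−x)/π³ on [0,π] with mean π/2, this says E(αβ) = E(α)E(β), i.e., two arbitrary adjacent angles of a uniform cyclic quadrilateral are uncorrelated: ρ(α,β) = 0.) -/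
open Real intervalIntegral

/-- Core inner integral computation. -/
lemma inner_J (m : ℝ) (hm0 : 0 ≤ m) (hm : m ≤ π / 2) :
    ∫ β in (0:ℝ)..π, β * min m (min β (π - β)) = π * m * (π - m) / 2 := by
  have hmπ : m ≤ π - m := by linarith
  have hπ : (0:ℝ) < π := Real.pi_pos
  have cont : Continuous fun β : ℝ => β * min m (min β (π - β)) := by
    fun_prop
  have hsplit :
      (∫ β in (0:ℝ)..m, β * min m (min β (π - β))) +
      (∫ β in m..(π - m), β * min m (min β (π - β))) +
      (∫ β in (π - m)..π, β * min m (min β (π - β))) =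
      ∫ β in (0:ℝ)..π, β * min m (min β (π - β)) := by
    rw [intervalIntegral.integral_add_adjacent_intervals
      (cont.intervalIntegrable _ _) (cont.intervalIntegrable _ _),
      intervalIntegral.integral_add_adjacent_intervals
      (cont.intervalIntegrable _ _) (cont.intervalIntegrable _ _)]
  have e1 : (∫ β in (0:ℝ)..m, β * min m (min β (π - β))) = m ^ 3 / 3 := by
    rw [intervalIntegral.integral_congr (g := fun β => β ^ 2)]
    · rw [integral_pow]; norm_num
    · intro β hβ
      rw [Set.uIcc_of_le hm0] at hβ
      obtain ⟨h1, h2⟩ := hβ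
      show β * min m (min β (π - β)) = β ^ 2
      rw [min_eq_left (by linarith : β ≤ π - β), min_eq_right (by linarith : β ≤ m)]
      ring
  have e2 : (∫ β in m..(π - m), β * min m (min β (π - β))) =
      m * (((π - m) ^ 2 - m ^ 2) / 2) := by
    rw [intervalIntegral.integral_congr (g := fun β => m * β)]
    · rw [intervalIntegral.integral_const_mul, integral_id]
    · intro β hβ
      rw [Set.uIcc_of_le hmπ] at hβ
      obtain ⟨h1, h2⟩ := hβ
      show β * min m (min β (π - β)) = m * β
      rw [min_eq_left (le_min (by linarith) (by linarith))]; ring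
  have e3 : (∫ β in (π - m)..π, β * min m (min β (π - β))) =
      π * ((π ^ 2 - (π - m) ^ 2) / 2) - (π ^ 3 - (π - m) ^ 3) / 3 := by
    rw [intervalIntegral.integral_congr (g := fun β => π * β - β ^ 2)]
    · rw [intervalIntegral.integral_sub
        ((by fun_prop : Continuous fun β : ℝ => π * β).intervalIntegrable _ _)
        ((by fun_prop : Continuous fun β : ℝ => β ^ 2).intervalIntegrable _ _),
        intervalIntegral.integral_const_mul, integral_id, integral_pow]
      norm_num
    · intro β hβ
      rw [Set.uIcc_of_le (by linarith : π - m ≤ π)] at hβ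
      obtain ⟨h1, h2⟩ := hβ
      show β * min m (min β (π - β)) = π * β - β ^ 2
      rw [min_eq_right (by linarith : π - β ≤ β), min_eq_right (by linarith : π - β ≤ m)]
      ring
  rw [← hsplit, e1, e2, e3]
  ring

lemma inner_full (α : ℝ) (h0 : 0 ≤ α) (h1 : α ≤ π) :
    (∫ β in (0:ℝ)..π,
      α * β * ((6 / π ^ 3) * min (min α (π - α)) (min β (π - β)))) =
    3 / π ^ 2 * (π * α ^ 2 - α ^ 3) := by
  have hπ : (0:ℝ) < π := Real.pi_pos
  set m := min α (π - α) with hm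
  have hm0 : 0 ≤ m := le_min h0 (by linarith)
  have hm2 : m ≤ π / 2 := by
    rcases le_total α (π - α) with h | h
    · rw [hm, min_eq_left h]; linarith
    · rw [hm, min_eq_right h]; linarith
  have key : m * (π - m) = α * (π - α) := by
    rcases le_total α (π - α) with h | h
    · rw [hm, min_eq_left h]
    · rw [hm, min_eq_right h]; ring
  have hc : (∫ β in (0:ℝ)..π,
      α * β * ((6 / π ^ 3) * min m (min β (π - β)))) =
      (α * (6 / π ^ 3)) * ∫ β in (0:ℝ)..π, β * min m (min β (π - β)) := by
    rw [← intervalIntegral.integral_const_mul]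
    apply intervalIntegral.integral_congr
    intro β _
    show α * β * ((6 / π ^ 3) * min m (min β (π - β))) =
      (α * (6 / π ^ 3)) * (β * min m (min β (π - β)))
    ring
  rw [hc, inner_J m hm0 hm2, mul_assoc π m, key]
  have hπ3 : π ^ 3 ≠ 0 := by positivity
  have hπ2 : π ^ 2 ≠ 0 := by positivity
  field_simp
  ring

theorem adjacent_angles_uncorrelated :
    ∫ α in (0:ℝ)..π, ∫ β in (0:ℝ)..π,
      α * β * ((6 / π ^ 3) * min (min α (π - α)) (min β (π - β))) =
    π ^ 2 / 4 := by
  have hπ : (0:ℝ) < π := Real.pi_pos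
  rw [intervalIntegral.integral_congr
    (g := fun α => 3 / π ^ 2 * (π * α ^ 2 - α ^ 3))
    (fun α hα => by
      rw [Set.uIcc_of_le (le_of_lt hπ)] at hα
      simpa using inner_full α hα.1 hα.2)]
  rw [intervalIntegral.integral_const_mul,
    intervalIntegral.integral_sub
      ((by fun_prop : Continuous fun α : ℝ => π * α ^ 2).intervalIntegrable _ _)
      ((by fun_prop : Continuous fun α : ℝ => α ^ 3).intervalIntegrable _ _),
    intervalIntegral.integral_const_mul, integral_pow, integral_pow]
  have hπ2 : π ^ 2 ≠ 0 := by positivity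
  field_simp
  ring
end

section
/- ∫₀^{π/4} ∫₀^{π/4} (6/π³)·min{α, π−α, β, π−β} dα dβ = 1/32, while (∫₀^{π/4} 6x(π−x)/π³ dx)² = 25/1024, and 1/32 ≠ 25/1024. (That is, although two adjacent angles α, β of a uniform cyclic quadrilateral are uncorrelated, they are dependent: P(α ≤ π/4 and β ≤ π/4) ≠ P(α ≤ π/4)·P(β ≤ π/4).) -/
open Real intervalIntegral

lemma min_cont (a : ℝ) : Continuous (fun β : ℝ => min a β) :=
  continuous_const.min continuous_id

lemma inner_int (α : ℝ) (h1 : 0 ≤ α) (h2 : α ≤ π / 4) :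
    ∫ β in (0:ℝ)..(π/4), min (min α (π - α)) (min β (π - β))
      = α * (π/4) - α^2/2 := by
  have hπ := Real.pi_pos
  have hαm : min α (π - α) = α := min_eq_left (by nlinarith)
  have hcongr : ∫ β in (0:ℝ)..(π/4), min (min α (π - α)) (min β (π - β))
      = ∫ β in (0:ℝ)..(π/4), min α β := by
    apply intervalIntegral.integral_congr
    intro β hβ
    rw [Set.uIcc_of_le (by positivity)] at hβ
    show min (min α (π - α)) (min β (π - β)) = min α β
    rw [hαm, min_eq_left (show β ≤ π - β by nlinarith [hβ.1, hβ.2])]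
  rw [hcongr]
  have hsplit : ∫ β in (0:ℝ)..(π/4), min α β
      = (∫ β in (0:ℝ)..α, min α β) + ∫ β in α..(π/4), min α β := by
    rw [intervalIntegral.integral_add_adjacent_intervals]
    · exact ((min_cont α).intervalIntegrable _ _)
    · exact ((min_cont α).intervalIntegrable _ _)
  rw [hsplit]
  have h1' : ∫ β in (0:ℝ)..α, min α β = α^2/2 := by
    have : ∫ β in (0:ℝ)..α, min α β = ∫ β in (0:ℝ)..α, β := by
      apply intervalIntegral.integral_congr
      intro β hβ
      rw [Set.uIcc_of_le h1] at hβ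
      exact min_eq_right hβ.2
    rw [this, integral_id]
    ring
  have h2' : ∫ β in α..(π/4), min α β = α * (π/4 - α) := by
    have : ∫ β in α..(π/4), min α β = ∫ β in α..(π/4), α := by
      apply intervalIntegral.integral_congr
      intro β hβ
      rw [Set.uIcc_of_le h2] at hβ
      exact min_eq_left hβ.1
    rw [this, intervalIntegral.integral_const, smul_eq_mul]
    ring
  rw [h1', h2']; ring

theorem adjacent_angles_dependent :
    (∫ α in (0:ℝ)..(π / 4), ∫ β in (0:ℝ)..(π / 4),
        (6 / π ^ 3) * min (min α (π - α)) (min β (π - β)) = 1 / 32) ∧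
    ((∫ x in (0:ℝ)..(π / 4), 6 * x * (π - x) / π ^ 3) ^ 2 = 25 / 1024) ∧
    (1 / 32 : ℝ) ≠ 25 / 1024 := by
  have hπ := Real.pi_pos
  refine ⟨?_, ?_, by norm_num⟩
  · have step1 : ∀ α : ℝ, (∫ β in (0:ℝ)..(π/4),
        (6 / π ^ 3) * min (min α (π - α)) (min β (π - β)))
        = (6 / π ^ 3) * ∫ β in (0:ℝ)..(π/4), min (min α (π - α)) (min β (π - β)) := by
      intro α; rw [intervalIntegral.integral_const_mul]
    have step2 : (∫ α in (0:ℝ)..(π / 4), ∫ β in (0:ℝ)..(π / 4),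
        (6 / π ^ 3) * min (min α (π - α)) (min β (π - β)))
        = ∫ α in (0:ℝ)..(π/4), (6 / π ^ 3) * (α * (π/4) - α^2/2) := by
      apply intervalIntegral.integral_congr
      intro α hα
      rw [Set.uIcc_of_le (by positivity)] at hα
      show (∫ β in (0:ℝ)..(π/4), (6 / π ^ 3) * min (min α (π - α)) (min β (π - β)))
        = (6 / π ^ 3) * (α * (π/4) - α^2/2)
      rw [step1, inner_int α hα.1 hα.2]
    rw [step2, intervalIntegral.integral_const_mul]
    have : (∫ α in (0:ℝ)..(π/4), (α * (π/4) - α^2/2))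
        = (∫ α in (0:ℝ)..(π/4), α) * (π/4) - (∫ α in (0:ℝ)..(π/4), α^2)/2 := by
      rw [intervalIntegral.integral_sub, intervalIntegral.integral_mul_const,
        intervalIntegral.integral_div]
      · exact (continuous_id.mul continuous_const).intervalIntegrable _ _
      · exact ((continuous_pow 2).div_const 2).intervalIntegrable _ _
    rw [this, integral_id, integral_pow]
    field_simp
    ring
  · have : (∫ x in (0:ℝ)..(π / 4), 6 * x * (π - x) / π ^ 3)
        = (6 / π^3) * ((∫ x in (0:ℝ)..(π/4), x) * π - ∫ x in (0:ℝ)..(π/4), x^2) := by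
      rw [← intervalIntegral.integral_mul_const, ← intervalIntegral.integral_sub,
        ← intervalIntegral.integral_const_mul]
      · apply intervalIntegral.integral_congr
        intro x _
        field_simp
      · exact (continuous_id.mul continuous_const).intervalIntegrable _ _
      · exact (continuous_pow 2).intervalIntegrable _ _
    rw [this, integral_id, integral_pow]
    field_simp
    ring
end

section
/- Let g, k : ℝ → ℝ be bounded continuous functions. Then (2/π²) · ∫∫ g(2 sin α)·k(2 sin β) dα dβ over the triangle {0 < α, 0 < β, α + β < π} equals [∫₀² g(a) · 2/(π√(4−a²)) da] · [∫₀² k(b) · 2/(π√(4−b²)) db]. (That is, for a uniform cyclic triangle the two sides a = 2 sin α and b = 2 sin β are independent, with joint density (4/π²)·(1/√(4−a²))·(1/√(4−b²)) on (0,2)², even though the angles α and β are dependent.) -/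
open MeasureTheory Real intervalIntegral

theorem aux_oneD (g : ℝ → ℝ) (hg : Continuous g) :
    ∫ x in Set.Ioo (0:ℝ) π, g (2 * Real.sin x) =
      π * ∫ a in (0:ℝ)..2, g a * (2 / (π * Real.sqrt (4 - a ^ 2))) := by
  have hπ : (0:ℝ) < π := pi_pos
  have hG : Continuous fun x => g (2 * Real.sin x) := hg.comp (by continuity)
  have himg : (fun x => 2 * Real.sin x) '' Set.Ioo 0 (π/2) = Set.Ioo (0:ℝ) 2 := by
    ext y
    simp only [Set.mem_image, Set.mem_Ioo]
    constructor
    · rintro ⟨x, ⟨hx0, hx1⟩, rfl⟩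
      have h1 : Real.sin x < 1 := by
        have := Real.strictMonoOn_sin (Set.mem_Icc.mpr ⟨by linarith, by linarith⟩)
          (Set.mem_Icc.mpr ⟨by linarith, le_refl _⟩) hx1
        simpa using this
      have h0 : 0 < Real.sin x := Real.sin_pos_of_pos_of_lt_pi hx0 (by linarith)
      exact ⟨by linarith, by linarith⟩
    · intro ⟨hy0, hy2⟩
      refine ⟨Real.arcsin (y/2), ⟨?_, ?_⟩, ?_⟩
      · exact Real.arcsin_pos.mpr (by linarith)
      · exact Real.arcsin_lt_pi_div_two.mpr (by linarith)
      · rw [Real.sin_arcsin (by linarith) (by linarith)]; ring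
  have hinj : Set.InjOn (fun x => 2 * Real.sin x) (Set.Ioo 0 (π/2)) := by
    intro a ha b hb hab
    have : Real.sin a = Real.sin b := by
      have : 2 * Real.sin a = 2 * Real.sin b := hab
      linarith
    exact Real.injOn_sin ⟨by linarith [ha.1], by linarith [ha.2]⟩
      ⟨by linarith [hb.1], by linarith [hb.2]⟩ this
  have hderiv : ∀ x ∈ Set.Ioo (0:ℝ) (π/2),
      HasDerivWithinAt (fun x => 2 * Real.sin x) (2 * Real.cos x) (Set.Ioo 0 (π/2)) x := by
    intro x _
    simpa [mul_comm] using ((Real.hasDerivAt_sin x).const_mul 2).hasDerivWithinAt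
  have hcov := integral_image_eq_integral_abs_deriv_smul measurableSet_Ioo hderiv hinj
    (fun a => g a * (2 / (π * Real.sqrt (4 - a ^ 2))))
  rw [himg] at hcov
  have hcongr : ∀ x ∈ Set.Ioo (0:ℝ) (π/2),
      |2 * Real.cos x| • (g (2 * Real.sin x) * (2 / (π * Real.sqrt (4 - (2 * Real.sin x) ^ 2))))
        = (2/π) * g (2 * Real.sin x) := by
    intro x ⟨hx0, hx1⟩
    have hc : 0 < Real.cos x := Real.cos_pos_of_mem_Ioo ⟨by linarith, hx1⟩
    have hsq : Real.sqrt (4 - (2 * Real.sin x) ^ 2) = 2 * Real.cos x := by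
      have h4 : 4 - (2 * Real.sin x) ^ 2 = (2 * Real.cos x) ^ 2 := by
        have := Real.sin_sq_add_cos_sq x; nlinarith
      rw [h4, Real.sqrt_sq (by linarith)]
    rw [hsq, abs_of_pos (by linarith), smul_eq_mul]
    field_simp
  rw [setIntegral_congr_fun measurableSet_Ioo hcongr, MeasureTheory.integral_const_mul] at hcov
  have h02 : ∫ a in (0:ℝ)..2, g a * (2 / (π * Real.sqrt (4 - a ^ 2)))
      = ∫ a in Set.Ioo (0:ℝ) 2, g a * (2 / (π * Real.sqrt (4 - a ^ 2))) := by
    rw [intervalIntegral.integral_of_le (by norm_num), integral_Ioc_eq_integral_Ioo]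
  have hsplit : ∫ x in Set.Ioo (0:ℝ) π, g (2 * Real.sin x)
      = 2 * ∫ x in Set.Ioo (0:ℝ) (π/2), g (2 * Real.sin x) := by
    have e1 : ∫ x in Set.Ioo (0:ℝ) π, g (2 * Real.sin x)
        = ∫ x in (0:ℝ)..π, g (2 * Real.sin x) := by
      rw [intervalIntegral.integral_of_le hπ.le, integral_Ioc_eq_integral_Ioo]
    have e2 : ∫ x in Set.Ioo (0:ℝ) (π/2), g (2 * Real.sin x)
        = ∫ x in (0:ℝ)..(π/2), g (2 * Real.sin x) := by
      rw [intervalIntegral.integral_of_le (by linarith), integral_Ioc_eq_integral_Ioo]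
    rw [e1, e2]
    have hii : ∀ a b : ℝ, IntervalIntegrable (fun x => g (2 * Real.sin x)) volume a b :=
      fun a b => hG.intervalIntegrable a b
    rw [← intervalIntegral.integral_add_adjacent_intervals (hii 0 (π/2)) (hii (π/2) π)]
    have key : ∫ x in (π/2:ℝ)..π, g (2 * Real.sin x) = ∫ x in (0:ℝ)..(π/2), g (2 * Real.sin x) := by
      have h := intervalIntegral.integral_comp_sub_left (a := (0:ℝ)) (b := π/2)
        (fun y => g (2 * Real.sin y)) π
      have hb : π - π/2 = π/2 := by ring
      have ha : π - 0 = π := by ring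
      rw [hb, ha] at h
      rw [← h]
      apply intervalIntegral.integral_congr
      intro x _
      simp [Real.sin_pi_sub]
    rw [key]; ring
  rw [hsplit, h02, hcov]
  field_simp

theorem triangle_sides_independent (g k : ℝ → ℝ) (hg : Continuous g) (hk : Continuous k)
    (hgb : ∃ C, ∀ x, |g x| ≤ C) (hkb : ∃ C, ∀ x, |k x| ≤ C) :
    (2 / π ^ 2) * ∫ p in {p : ℝ × ℝ | 0 < p.1 ∧ 0 < p.2 ∧ p.1 + p.2 < π},
      g (2 * Real.sin p.1) * k (2 * Real.sin p.2) =
    (∫ a in (0:ℝ)..2, g a * (2 / (π * Real.sqrt (4 - a ^ 2)))) *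
    (∫ b in (0:ℝ)..2, k b * (2 / (π * Real.sqrt (4 - b ^ 2)))) := by
  have hπ : (0:ℝ) < π := pi_pos
  set F : ℝ × ℝ → ℝ := fun p => g (2 * Real.sin p.1) * k (2 * Real.sin p.2) with hFdef
  set Δ : Set (ℝ × ℝ) := {p : ℝ × ℝ | 0 < p.1 ∧ 0 < p.2 ∧ p.1 + p.2 < π} with hΔdef
  set Δ' : Set (ℝ × ℝ) := {p : ℝ × ℝ | p.1 < π ∧ p.2 < π ∧ π < p.1 + p.2} with hΔ'def
  have hF : Continuous F := by fun_prop
  have hΔm : MeasurableSet Δ := by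
    apply MeasurableSet.inter
    · exact measurableSet_lt measurable_const measurable_fst
    apply MeasurableSet.inter
    · exact measurableSet_lt measurable_const measurable_snd
    · exact measurableSet_lt (measurable_fst.add measurable_snd) measurable_const
  have hΔ'm : MeasurableSet Δ' := by
    apply MeasurableSet.inter
    · exact measurableSet_lt measurable_fst measurable_const
    apply MeasurableSet.inter
    · exact measurableSet_lt measurable_snd measurable_const
    · exact measurableSet_lt measurable_const (measurable_fst.add measurable_snd)
  have hIntSq : IntegrableOn F (Set.Icc 0 π ×ˢ Set.Icc 0 π) :=
    hF.continuousOn.integrableOn_compact (isCompact_Icc.prod isCompact_Icc)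
  have hsubΔ : Δ ⊆ Set.Icc 0 π ×ˢ Set.Icc 0 π := by
    rintro ⟨x, y⟩ ⟨h1, h2, h3⟩
    exact ⟨⟨le_of_lt h1, by linarith⟩, ⟨le_of_lt h2, by linarith⟩⟩
  have hsubΔ' : Δ' ⊆ Set.Icc 0 π ×ˢ Set.Icc 0 π := by
    rintro ⟨x, y⟩ ⟨h1, h2, h3⟩
    exact ⟨⟨by linarith, le_of_lt h1⟩, ⟨by linarith, le_of_lt h2⟩⟩
  have hIntΔ : IntegrableOn F Δ := hIntSq.mono_set hsubΔ
  have hIntΔ' : IntegrableOn F Δ' := hIntSq.mono_set hsubΔ'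
  have hrefl : ∫ p in Δ', F p = ∫ p in Δ, F p := by
    have h1 : ∀ x : ℝ × ℝ, Δ.indicator F (((π, π) : ℝ × ℝ) - x) = Δ'.indicator F x := by
      intro x
      by_cases hx : x ∈ Δ'
      · have ha := hx.1; have hb := hx.2.1; have hc := hx.2.2
        have hmem : ((π, π) : ℝ × ℝ) - x ∈ Δ := by
          refine ⟨?_, ?_, ?_⟩
          · show (0:ℝ) < (((π, π) : ℝ × ℝ) - x).1
            simp only [Prod.fst_sub]; linarith
          · show (0:ℝ) < (((π, π) : ℝ × ℝ) - x).2
            simp only [Prod.snd_sub]; linarith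
          · show (((π, π) : ℝ × ℝ) - x).1 + (((π, π) : ℝ × ℝ) - x).2 < π
            simp only [Prod.fst_sub, Prod.snd_sub]; linarith
        rw [Set.indicator_of_mem hmem, Set.indicator_of_mem hx]
        show g (2 * Real.sin (π - x.1)) * k (2 * Real.sin (π - x.2)) = _
        rw [Real.sin_pi_sub, Real.sin_pi_sub]
      · have hnm : ((π, π) : ℝ × ℝ) - x ∉ Δ := by
          intro ⟨ha, hb, hc⟩
          simp only [Prod.fst_sub, Prod.snd_sub] at ha hb hc
          exact hx ⟨by linarith [ha], by linarith [hb], by linarith [hc]⟩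
        rw [Set.indicator_of_notMem hnm, Set.indicator_of_notMem hx]
    calc ∫ p in Δ', F p = ∫ x, Δ'.indicator F x := (MeasureTheory.integral_indicator hΔ'm).symm
      _ = ∫ x, Δ.indicator F (((π, π) : ℝ × ℝ) - x) := by simp_rw [h1]
      _ = ∫ x, Δ.indicator F x := integral_sub_left_eq_self (Δ.indicator F) volume ((π, π) : ℝ × ℝ)
      _ = ∫ p in Δ, F p := MeasureTheory.integral_indicator hΔm
  have hline : (volume : Measure (ℝ × ℝ)) {p : ℝ × ℝ | p.1 + p.2 = π} = 0 := by
    have hs : MeasurableSet {p : ℝ × ℝ | p.1 + p.2 = π} :=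
      (measurable_fst.add measurable_snd) (measurableSet_singleton π)
    rw [Measure.volume_eq_prod, Measure.prod_apply hs]
    have h : ∀ x : ℝ, (Prod.mk x ⁻¹' {p : ℝ × ℝ | p.1 + p.2 = π}) = {π - x} := by
      intro x; ext y
      simp only [Set.mem_preimage, Set.mem_setOf_eq, Set.mem_singleton_iff]
      constructor <;> intro h <;> linarith
    simp [h]
  have hae : (Set.Ioo 0 π ×ˢ Set.Ioo 0 π : Set (ℝ × ℝ)) =ᵐ[(volume : Measure (ℝ × ℝ))] (Δ ∪ Δ' : Set (ℝ × ℝ)) := by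
    rw [MeasureTheory.ae_eq_set]
    constructor
    · refine measure_mono_null ?_ hline
      rintro ⟨x, y⟩ ⟨⟨⟨hx0, hxπ⟩, ⟨hy0, hyπ⟩⟩, hnu⟩
      simp only [Set.mem_union, hΔdef, hΔ'def, Set.mem_setOf_eq] at hnu
      push_neg at hnu
      obtain ⟨hn1, hn2⟩ := hnu
      have := hn1 hx0 hy0
      have := hn2 hxπ hyπ
      show x + y = π
      linarith
    · have : (Δ ∪ Δ') \ (Set.Ioo 0 π ×ˢ Set.Ioo 0 π) = ∅ := by
        rw [Set.diff_eq_empty]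
        rintro ⟨x, y⟩ (⟨h1, h2, h3⟩ | ⟨h1, h2, h3⟩)
        · exact ⟨⟨h1, by linarith⟩, ⟨h2, by linarith⟩⟩
        · exact ⟨⟨by linarith, h1⟩, ⟨by linarith, h2⟩⟩
      rw [this]; simp
  have hdisj : Disjoint Δ Δ' := by
    rw [Set.disjoint_left]
    rintro ⟨x, y⟩ ⟨_, _, h3⟩ ⟨_, _, h3'⟩
    linarith
  have hsq : ∫ p in (Set.Ioo 0 π ×ˢ Set.Ioo 0 π : Set (ℝ × ℝ)), F p = 2 * ∫ p in Δ, F p := by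
    rw [setIntegral_congr_set hae, setIntegral_union hdisj hΔ'm hIntΔ hIntΔ', hrefl]
    ring
  have hprod : ∫ p in (Set.Ioo 0 π ×ˢ Set.Ioo 0 π : Set (ℝ × ℝ)), F p =
      (∫ x in Set.Ioo (0:ℝ) π, g (2 * Real.sin x)) * (∫ x in Set.Ioo (0:ℝ) π, k (2 * Real.sin x)) := by
    simp only [hFdef]
    rw [Measure.volume_eq_prod]
    exact setIntegral_prod_mul (fun x => g (2 * Real.sin x)) (fun x => k (2 * Real.sin x)) _ _
  have h1 := aux_oneD g hg
  have h2 := aux_oneD k hk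
  have hkey : 2 * ∫ p in Δ, F p =
      (π * ∫ a in (0:ℝ)..2, g a * (2 / (π * Real.sqrt (4 - a ^ 2)))) *
      (π * ∫ b in (0:ℝ)..2, k b * (2 / (π * Real.sqrt (4 - b ^ 2)))) := by
    rw [← hsq, hprod, h1, h2]
  have hI : ∫ p in Δ, F p =
      (π * ∫ a in (0:ℝ)..2, g a * (2 / (π * Real.sqrt (4 - a ^ 2)))) *
      (π * ∫ b in (0:ℝ)..2, k b * (2 / (π * Real.sqrt (4 - b ^ 2)))) / 2 := by
    linarith
  rw [hI]
  field_simp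
end

section
/- (2/π²) · ∫₀^π ∫₀^{π−β} 4 sin²α · sin²β · sin²(α + β) dα dβ = 3/8. (That is, the second moment of the area of a uniform cyclic triangle equals 3/8.) -/
open Real intervalIntegral

noncomputable def tamF (b a : ℝ) : ℝ :=
  4 * Real.sin b ^ 2 * Real.cos b ^ 2 *
      (3 * a / 8 - 3 * Real.sin a * Real.cos a / 8 - Real.sin a ^ 3 * Real.cos a / 4)
    + 2 * Real.sin b ^ 3 * Real.cos b * Real.sin a ^ 4
    + 4 * Real.sin b ^ 4 *
      (a / 8 - Real.sin a * Real.cos a / 8 + Real.sin a ^ 3 * Real.cos a / 4)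

noncomputable def tamg (b : ℝ) : ℝ :=
  3/2 * π * Real.sin b ^ 2 * Real.cos b ^ 2 - 3/2 * b * Real.sin b ^ 2 * Real.cos b ^ 2
  + 3/2 * Real.sin b ^ 3 * Real.cos b ^ 3
  + 1/2 * π * Real.sin b ^ 4 - 1/2 * b * Real.sin b ^ 4
  + 1/2 * Real.sin b ^ 5 * Real.cos b
  + Real.sin b ^ 5 * Real.cos b ^ 3 + Real.sin b ^ 7 * Real.cos b

noncomputable def tamG (b : ℝ) : ℝ :=
  3/8 * π * b - 3/16 * b ^ 2 - 3/8 * π * Real.sin b * Real.cos b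
  + 3/8 * b * Real.sin b * Real.cos b - 3/16 * Real.sin b ^ 2
  + 1/4 * π * Real.sin b ^ 3 * Real.cos b - 1/4 * b * Real.sin b ^ 3 * Real.cos b
  + 7/16 * Real.sin b ^ 4

lemma tamF_deriv (b a : ℝ) :
    HasDerivAt (tamF b) (4 * Real.sin a ^ 2 * Real.sin b ^ 2 * Real.sin (a + b) ^ 2) a := by
  have hs : HasDerivAt Real.sin (Real.cos a) a := Real.hasDerivAt_sin a
  have hc : HasDerivAt Real.cos (-Real.sin a) a := Real.hasDerivAt_cos a
  have h1 : HasDerivAt (fun y => Real.sin y * Real.cos y)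
      (Real.cos a * Real.cos a + Real.sin a * -Real.sin a) a := hs.mul hc
  have h2 : HasDerivAt (fun y => Real.sin y ^ 3)
      (3 * Real.sin a ^ 2 * Real.cos a) a := by
    simpa using hs.fun_pow 3
  have h3 : HasDerivAt (fun y => Real.sin y ^ 3 * Real.cos y)
      (3 * Real.sin a ^ 2 * Real.cos a * Real.cos a + Real.sin a ^ 3 * -Real.sin a) a :=
    h2.mul hc
  have h4 : HasDerivAt (fun y => Real.sin y ^ 4)
      (4 * Real.sin a ^ 3 * Real.cos a) a := by
    simpa using hs.fun_pow 4
  have hid : HasDerivAt (fun y : ℝ => y) 1 a := hasDerivAt_id a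
  have H : HasDerivAt (tamF b)
      (4 * Real.sin b ^ 2 * Real.cos b ^ 2 *
        (3 * 1 / 8 - 3 * (Real.cos a * Real.cos a + Real.sin a * -Real.sin a) / 8
          - (3 * Real.sin a ^ 2 * Real.cos a * Real.cos a + Real.sin a ^ 3 * -Real.sin a) / 4)
        + 2 * Real.sin b ^ 3 * Real.cos b * (4 * Real.sin a ^ 3 * Real.cos a)
        + 4 * Real.sin b ^ 4 *
        (1 / 8 - (Real.cos a * Real.cos a + Real.sin a * -Real.sin a) / 8
          + (3 * Real.sin a ^ 2 * Real.cos a * Real.cos a + Real.sin a ^ 3 * -Real.sin a) / 4)) a := by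
    unfold tamF
    have C : HasDerivAt _ _ _ := (((((hid.const_mul (3/8 : ℝ)).fun_sub (h1.const_mul (3/8 : ℝ))).fun_sub
      (h3.const_mul (1/4 : ℝ))).const_mul (4 * Real.sin b ^ 2 * Real.cos b ^ 2)).fun_add
      (h4.const_mul (2 * Real.sin b ^ 3 * Real.cos b))).fun_add
      ((((hid.const_mul (1/8 : ℝ)).fun_sub (h1.const_mul (1/8 : ℝ))).fun_add
        (h3.const_mul (1/4 : ℝ))).const_mul (4 * Real.sin b ^ 4))
    convert C using 1
    all_goals try funext y
    all_goals first | rfl | ring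
  refine H.congr_deriv ?_
  rw [Real.sin_add]
  linear_combination (-(1 + 2 * Real.sin a ^ 2) *
    (3/2 * Real.sin b ^ 2 * Real.cos b ^ 2 + 1/2 * Real.sin b ^ 4)) *
    (Real.sin_sq_add_cos_sq a)

lemma tam_inner (b : ℝ) :
    (∫ α in (0:ℝ)..(π - b), 4 * Real.sin α ^ 2 * Real.sin b ^ 2 * Real.sin (α + b) ^ 2)
      = tamg b := by
  rw [intervalIntegral.integral_eq_sub_of_hasDerivAt
      (fun a _ => tamF_deriv b a)
      (Continuous.intervalIntegrable (by continuity) _ _)]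
  unfold tamF tamg
  rw [Real.sin_pi_sub, Real.cos_pi_sub]
  simp [Real.sin_zero, Real.cos_zero]
  ring

lemma tamG_deriv (b : ℝ) : HasDerivAt tamG (tamg b) b := by
  have hs : HasDerivAt Real.sin (Real.cos b) b := Real.hasDerivAt_sin b
  have hc : HasDerivAt Real.cos (-Real.sin b) b := Real.hasDerivAt_cos b
  have h1 : HasDerivAt (fun y => Real.sin y * Real.cos y)
      (Real.cos b * Real.cos b + Real.sin b * -Real.sin b) b := hs.mul hc
  have h2 : HasDerivAt (fun y => Real.sin y ^ 2)
      (2 * Real.sin b * Real.cos b) b := by simpa using hs.fun_pow 2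
  have h3p : HasDerivAt (fun y => Real.sin y ^ 3)
      (3 * Real.sin b ^ 2 * Real.cos b) b := by simpa using hs.fun_pow 3
  have h3 : HasDerivAt (fun y => Real.sin y ^ 3 * Real.cos y)
      (3 * Real.sin b ^ 2 * Real.cos b * Real.cos b + Real.sin b ^ 3 * -Real.sin b) b :=
    h3p.mul hc
  have h4 : HasDerivAt (fun y => Real.sin y ^ 4)
      (4 * Real.sin b ^ 3 * Real.cos b) b := by simpa using hs.fun_pow 4
  have hid : HasDerivAt (fun y : ℝ => y) 1 b := hasDerivAt_id b
  have hsq : HasDerivAt (fun y : ℝ => y ^ 2) (2 * b) b := by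
    simpa using hid.fun_pow 2
  have hbsc : HasDerivAt (fun y => y * (Real.sin y * Real.cos y))
      (1 * (Real.sin b * Real.cos b)
        + b * (Real.cos b * Real.cos b + Real.sin b * -Real.sin b)) b := hid.mul h1
  have hbs3c : HasDerivAt (fun y => y * (Real.sin y ^ 3 * Real.cos y))
      (1 * (Real.sin b ^ 3 * Real.cos b)
        + b * (3 * Real.sin b ^ 2 * Real.cos b * Real.cos b + Real.sin b ^ 3 * -Real.sin b)) b :=
    hid.mul h3
  have H : HasDerivAt tamG
      (3/8 * π * 1 - 3/16 * (2 * b)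
        - 3/8 * π * (Real.cos b * Real.cos b + Real.sin b * -Real.sin b)
        + 3/8 * (1 * (Real.sin b * Real.cos b)
          + b * (Real.cos b * Real.cos b + Real.sin b * -Real.sin b))
        - 3/16 * (2 * Real.sin b * Real.cos b)
        + 1/4 * π * (3 * Real.sin b ^ 2 * Real.cos b * Real.cos b + Real.sin b ^ 3 * -Real.sin b)
        - 1/4 * (1 * (Real.sin b ^ 3 * Real.cos b)
          + b * (3 * Real.sin b ^ 2 * Real.cos b * Real.cos b + Real.sin b ^ 3 * -Real.sin b))
        + 7/16 * (4 * Real.sin b ^ 3 * Real.cos b)) b := by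
    unfold tamG
    have C : HasDerivAt _ _ _ := (((((((hid.const_mul (3/8 * π)).fun_sub (hsq.const_mul (3/16 : ℝ))).fun_sub
      (h1.const_mul (3/8 * π))).fun_add (hbsc.const_mul (3/8 : ℝ))).fun_sub
      (h2.const_mul (3/16 : ℝ))).fun_add (h3.const_mul (1/4 * π))).fun_sub
      (hbs3c.const_mul (1/4 : ℝ))).fun_add (h4.const_mul (7/16 : ℝ))
    convert C using 1
    all_goals try funext y
    all_goals first | rfl | ring
  refine H.congr_deriv ?_
  unfold tamg
  linear_combination (-(3/8) * π + 3/8 * b - 3/4 * Real.sin b ^ 2 * π + 3/4 * Real.sin b ^ 2 * b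
    - 3/2 * Real.sin b ^ 3 * Real.cos b - Real.sin b ^ 5 * Real.cos b) *
    (Real.sin_sq_add_cos_sq b)

theorem triangle_area_second_moment :
    (2 / π ^ 2) * ∫ β in (0:ℝ)..π, ∫ α in (0:ℝ)..(π - β),
      4 * Real.sin α ^ 2 * Real.sin β ^ 2 * Real.sin (α + β) ^ 2 =
    3 / 8 := by
  have h1 : (∫ β in (0:ℝ)..π, ∫ α in (0:ℝ)..(π - β),
      4 * Real.sin α ^ 2 * Real.sin β ^ 2 * Real.sin (α + β) ^ 2)
      = ∫ β in (0:ℝ)..π, tamg β := by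
    simp only [tam_inner]
  rw [h1, intervalIntegral.integral_eq_sub_of_hasDerivAt
      (fun b _ => tamG_deriv b)
      (Continuous.intervalIntegrable (by unfold tamg; continuity) _ _)]
  unfold tamG
  simp [Real.sin_pi, Real.cos_pi, Real.sin_zero, Real.cos_zero]
  have hpi : π ≠ 0 := Real.pi_ne_zero
  field_simp
  ring
end

section
/- For all α, β ∈ [0, π], the Lebesgue measure of the set {ω ∈ [0, π] : α + β > ω, α + ω > β, β + ω > α, and α + β + ω < 2π} equals 2·min{α, π−α, β, π−β}. (Consequently, if (α,β,ω) has the density f = 3/π³ on this tetrahedral region in [0,π]³, then any two of the three angles have the bivariate tent density (6/π³)·min{α, π−α, β, π−β}.) -/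
open MeasureTheory Real

theorem tent_marginal_of_tetrahedron (α β : ℝ)
    (hα : α ∈ Set.Icc 0 π) (hβ : β ∈ Set.Icc 0 π) :
    volume {ω ∈ Set.Icc (0:ℝ) π |
        α + β > ω ∧ α + ω > β ∧ β + ω > α ∧ α + β + ω < 2 * π} =
    ENNReal.ofReal (2 * min (min α (π - α)) (min β (π - β))) := by
  obtain ⟨hα0, hαπ⟩ := hα
  obtain ⟨hβ0, hβπ⟩ := hβ
  have hset : {ω ∈ Set.Icc (0:ℝ) π |
        α + β > ω ∧ α + ω > β ∧ β + ω > α ∧ α + β + ω < 2 * π} =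
      Set.Ioo (max (α - β) (β - α)) (min (α + β) (2 * π - (α + β))) := by
    ext ω
    simp only [Set.mem_setOf_eq, Set.mem_Icc, Set.mem_Ioo, max_lt_iff, lt_min_iff]
    constructor
    · rintro ⟨⟨h0, hπ⟩, h1, h2, h3, h4⟩
      exact ⟨⟨by linarith, by linarith⟩, by linarith, by linarith⟩
    · rintro ⟨⟨h1, h2⟩, h3, h4⟩
      exact ⟨⟨by linarith, by linarith⟩, by linarith, by linarith, by linarith, by linarith⟩
  rw [hset, Real.volume_Ioo]
  congr 1
  rcases le_total α β with h1 | h1 <;> rcases le_total (α + β) π with h2 | h2 <;>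
    simp only [min_def, max_def] <;> split_ifs <;> linarith
end

section
/- (3/π³) · ∫∫∫ 2 sin α · sin β · sin ω dα dβ dω, taken over the region {(α,β,ω) ∈ [0,π]³ : α + β > ω, α + ω > β, β + ω > α, α + β + ω < 2π}, equals 3/π; moreover (3/π³) · ∫∫∫ 4 sin²α · sin²β · sin²ω dα dβ dω over the same region equals 1/2 + 105/(16π²). (That is, under the density f the mean of the quadrilateral area 2 sin α sin β sin ω is 3/π — twice the mean triangle area 3/(2π) — and its second moment is 1/2 + 105/(16π²).) -/
open MeasureTheory Real

namespace QuadMomentsAux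

noncomputable def Wfun (α β : ℝ) : ℝ :=
  ∫ ω in (|α - β|)..(min (α + β) (2 * π - α - β)), Real.sin ω ^ 2

noncomputable def Fm (α : ℝ) : ℝ :=
  1/2 - Real.cos (2*α)/2 + π * Real.sin (2*α)/8 - α * Real.sin (2*α)/4 + α*π/2 - α^2/2

def S : Set (ℝ × ℝ × ℝ) := {p : ℝ × ℝ × ℝ |
  p.1 ∈ Set.Icc 0 π ∧ p.2.1 ∈ Set.Icc 0 π ∧ p.2.2 ∈ Set.Icc 0 π ∧
  p.1 + p.2.1 > p.2.2 ∧ p.1 + p.2.2 > p.2.1 ∧ p.2.1 + p.2.2 > p.1 ∧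
  p.1 + p.2.1 + p.2.2 < 2 * π}

lemma measurableSet_S : MeasurableSet S := by
  have m1 : Measurable fun p : ℝ × ℝ × ℝ => p.1 := measurable_fst
  have m2 : Measurable fun p : ℝ × ℝ × ℝ => p.2.1 := measurable_fst.comp measurable_snd
  have m3 : Measurable fun p : ℝ × ℝ × ℝ => p.2.2 := measurable_snd.comp measurable_snd
  exact (m1 measurableSet_Icc).inter ((m2 measurableSet_Icc).inter
    ((m3 measurableSet_Icc).inter ((measurableSet_lt m3 (m1.add m2)).inter
    ((measurableSet_lt m2 (m1.add m3)).inter ((measurableSet_lt m1 (m2.add m3)).inter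
    (measurableSet_lt ((m1.add m2).add m3) measurable_const))))))

lemma fubini_S (g : ℝ → ℝ) (hg : Continuous g) (c : ℝ) :
    (∫ p in S, c * g p.1 * g p.2.1 * g p.2.2) =
      ∫ α in (0:ℝ)..π, ∫ β in (0:ℝ)..π,
        c * g α * g β * ∫ ω in (|α - β|)..(min (α + β) (2 * π - α - β)), g ω := by
  set F : ℝ × ℝ × ℝ → ℝ := fun p => c * g p.1 * g p.2.1 * g p.2.2 with hF
  have hgc : Continuous F :=
    ((continuous_const.mul (hg.comp continuous_fst)).mul
      (hg.comp (continuous_fst.comp continuous_snd))).mul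
      (hg.comp (continuous_snd.comp continuous_snd))
  have hsub : S ⊆ Set.Icc ((0,0,0) : ℝ × ℝ × ℝ) (π,π,π) := by
    intro p hp
    obtain ⟨h1, h2, h3, -⟩ := hp
    exact ⟨⟨h1.1, h2.1, h3.1⟩, ⟨h1.2, h2.2, h3.2⟩⟩
  have hIntOn : IntegrableOn F S :=
    ((hgc.continuousOn).integrableOn_compact isCompact_Icc).mono_set hsub
  have lev2 : ∀ x : ℝ, (∫ y : ℝ × ℝ, S.indicator F (x, y)) =
      (Set.Icc (0:ℝ) π).indicator (fun α => ∫ β in (0:ℝ)..π,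
        c * g α * g β * ∫ ω in (|α - β|)..(min (α + β) (2 * π - α - β)), g ω) x := by
    intro x
    by_cases hx : x ∈ Set.Icc (0:ℝ) π
    · rw [Set.indicator_of_mem hx]
      have hSx : MeasurableSet {q : ℝ × ℝ | (x, q) ∈ S} :=
        measurable_prodMk_left measurableSet_S
      have hsubx : {q : ℝ × ℝ | (x, q) ∈ S} ⊆ Set.Icc ((0,0) : ℝ × ℝ) (π, π) := by
        intro q hq
        obtain ⟨-, h2, h3, -⟩ := hq
        exact ⟨⟨h2.1, h3.1⟩, ⟨h2.2, h3.2⟩⟩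
      have hcx : Continuous fun q : ℝ × ℝ => F (x, q) :=
        hgc.comp (continuous_const.prodMk continuous_id)
      have hIOx : IntegrableOn (fun q => F (x, q)) {q : ℝ × ℝ | (x, q) ∈ S} :=
        ((hcx.continuousOn).integrableOn_compact isCompact_Icc).mono_set hsubx
      have heq : (fun y : ℝ × ℝ => S.indicator F (x, y)) =
          fun y => Set.indicator {q : ℝ × ℝ | (x, q) ∈ S} (fun q => F (x, q)) y := by
        funext y
        rfl
      rw [heq]
      have hI2 : Integrable (fun y => Set.indicator {q : ℝ × ℝ | (x, q) ∈ S} (fun q => F (x, q)) y)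
          ((volume : Measure ℝ).prod (volume : Measure ℝ)) := by
        rw [← Measure.volume_eq_prod]
        exact (integrable_indicator_iff hSx).2 hIOx
      rw [Measure.volume_eq_prod, integral_prod _ hI2]
      obtain ⟨hx0, hx1⟩ := hx
      have lev3 : ∀ β : ℝ, (∫ ω : ℝ, Set.indicator {q : ℝ × ℝ | (x, q) ∈ S}
            (fun q => F (x, q)) (β, ω)) =
          (Set.Icc (0:ℝ) π).indicator (fun β => c * g x * g β *
            ∫ ω in (|x - β|)..(min (x + β) (2 * π - x - β)), g ω) β := by
        intro β
        by_cases hβ : β ∈ Set.Icc (0:ℝ) π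
        · rw [Set.indicator_of_mem hβ]
          obtain ⟨hb0, hb1⟩ := hβ
          have hsect : ∀ ω : ℝ, (β, ω) ∈ {q : ℝ × ℝ | (x, q) ∈ S} ↔
              ω ∈ Set.Ioo (|x - β|) (min (x + β) (2 * π - x - β)) := by
            intro ω
            constructor
            · intro h
              obtain ⟨-, -, -, h4, h5, h6, h7⟩ := h
              have h4' : x + β > ω := h4
              have h5' : x + ω > β := h5
              have h6' : β + ω > x := h6
              have h7' : x + β + ω < 2 * π := h7
              exact ⟨abs_sub_lt_iff.2 ⟨by linarith, by linarith⟩,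
                lt_min (by linarith) (by linarith)⟩
            · rintro ⟨hlo, hhi⟩
              obtain ⟨hm1, hm2⟩ := lt_min_iff.1 hhi
              obtain ⟨hd1, hd2⟩ := abs_sub_lt_iff.1 hlo
              have hω0 : 0 ≤ ω := le_of_lt (lt_of_le_of_lt (abs_nonneg _) hlo)
              have hωπ : ω ≤ π := by rcases le_total (x + β) π with h | h <;> linarith
              exact ⟨⟨hx0, hx1⟩, ⟨hb0, hb1⟩, ⟨hω0, hωπ⟩,
                show x + β > ω by linarith, show x + ω > β by linarith,
                show β + ω > x by linarith, show x + β + ω < 2 * π by linarith⟩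
          have heq3 : (fun ω : ℝ => Set.indicator {q : ℝ × ℝ | (x, q) ∈ S}
              (fun q => F (x, q)) (β, ω)) =
              fun ω => Set.indicator (Set.Ioo (|x - β|) (min (x + β) (2 * π - x - β)))
                (fun ω => c * g x * g β * g ω) ω := by
            funext ω
            by_cases h : ω ∈ Set.Ioo (|x - β|) (min (x + β) (2 * π - x - β))
            · rw [Set.indicator_of_mem ((hsect ω).2 h), Set.indicator_of_mem h]
            · rw [Set.indicator_of_notMem (fun hc => h ((hsect ω).1 hc)),
                Set.indicator_of_notMem h]
          have hab : |x - β| ≤ min (x + β) (2 * π - x - β) :=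
            le_min (abs_sub_le_iff.2 ⟨by linarith, by linarith⟩)
              (abs_sub_le_iff.2 ⟨by linarith, by linarith⟩)
          rw [heq3, integral_indicator measurableSet_Ioo, ← integral_Ioc_eq_integral_Ioo,
            ← intervalIntegral.integral_of_le hab]
          exact intervalIntegral.integral_const_mul (c * g x * g β) g
        · rw [Set.indicator_of_notMem hβ]
          have hz : ∀ ω : ℝ, Set.indicator {q : ℝ × ℝ | (x, q) ∈ S}
              (fun q => F (x, q)) (β, ω) = 0 :=
            fun ω => Set.indicator_of_notMem (fun h => hβ h.2.1) _
          simp only [hz, integral_zero]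
      calc (∫ β : ℝ, ∫ ω : ℝ, Set.indicator {q : ℝ × ℝ | (x, q) ∈ S}
            (fun q => F (x, q)) (β, ω))
          = ∫ β : ℝ, (Set.Icc (0:ℝ) π).indicator (fun β => c * g x * g β *
              ∫ ω in (|x - β|)..(min (x + β) (2 * π - x - β)), g ω) β :=
            integral_congr_ae (Filter.Eventually.of_forall lev3)
        _ = ∫ β in Set.Icc (0:ℝ) π, c * g x * g β *
              ∫ ω in (|x - β|)..(min (x + β) (2 * π - x - β)), g ω :=
            integral_indicator measurableSet_Icc
        _ = ∫ β in (0:ℝ)..π, c * g x * g β *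
              ∫ ω in (|x - β|)..(min (x + β) (2 * π - x - β)), g ω := by
            rw [integral_Icc_eq_integral_Ioc, ← intervalIntegral.integral_of_le Real.pi_pos.le]
    · rw [Set.indicator_of_notMem hx]
      have hz : ∀ y : ℝ × ℝ, S.indicator F (x, y) = 0 :=
        fun y => Set.indicator_of_notMem (fun h => hx h.1) F
      simp only [hz, integral_zero]
  have hI1 : Integrable (fun p => S.indicator F p)
      ((volume : Measure ℝ).prod (volume : Measure (ℝ × ℝ))) := by
    rw [← Measure.volume_eq_prod]
    exact (integrable_indicator_iff measurableSet_S).2 hIntOn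
  calc (∫ p in S, F p) = ∫ p, S.indicator F p := (integral_indicator measurableSet_S).symm
    _ = ∫ x : ℝ, ∫ y : ℝ × ℝ, S.indicator F (x, y) := by
        rw [Measure.volume_eq_prod, integral_prod _ hI1]
    _ = ∫ x : ℝ, (Set.Icc (0:ℝ) π).indicator (fun α => ∫ β in (0:ℝ)..π,
          c * g α * g β * ∫ ω in (|α - β|)..(min (α + β) (2 * π - α - β)), g ω) x :=
        integral_congr_ae (Filter.Eventually.of_forall lev2)
    _ = ∫ α in Set.Icc (0:ℝ) π, ∫ β in (0:ℝ)..π,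
          c * g α * g β * ∫ ω in (|α - β|)..(min (α + β) (2 * π - α - β)), g ω :=
        integral_indicator measurableSet_Icc
    _ = ∫ α in (0:ℝ)..π, ∫ β in (0:ℝ)..π,
          c * g α * g β * ∫ ω in (|α - β|)..(min (α + β) (2 * π - α - β)), g ω := by
        rw [integral_Icc_eq_integral_Ioc, ← intervalIntegral.integral_of_le Real.pi_pos.le]

lemma m1 : (∫ p in S, 2 * Real.sin p.1 * Real.sin p.2.1 * Real.sin p.2.2) = π ^ 2 := by
  rw [fubini_S Real.sin Real.continuous_sin 2]
  have hinner : ∀ a b : ℝ, (∫ ω in (|a - b|)..(min (a + b) (2 * π - a - b)), Real.sin ω) =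
      2 * (Real.sin a * Real.sin b) := by
    intro a b
    rw [integral_sin, Real.cos_abs]
    rcases min_cases (a + b) (2 * π - a - b) with ⟨h1, -⟩ | ⟨h1, -⟩ <;> rw [h1]
    · rw [Real.cos_sub, Real.cos_add]; ring
    · rw [show 2 * π - a - b = 2 * π - (a + b) by ring, Real.cos_two_pi_sub,
        Real.cos_sub, Real.cos_add]
      ring
  have hβ : ∀ a : ℝ, (∫ β in (0:ℝ)..π, 2 * Real.sin a * Real.sin β *
      ∫ ω in (|a - β|)..(min (a + β) (2 * π - a - β)), Real.sin ω) = 2 * π * Real.sin a ^ 2 := by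
    intro a
    have e1 : ∀ β ∈ Set.uIcc (0:ℝ) π, 2 * Real.sin a * Real.sin β *
        (∫ ω in (|a - β|)..(min (a + β) (2 * π - a - β)), Real.sin ω) =
        (4 * Real.sin a ^ 2) * Real.sin β ^ 2 := by
      intro β _
      rw [hinner a β]; ring
    rw [intervalIntegral.integral_congr e1, intervalIntegral.integral_const_mul,
      integral_sin_sq, Real.sin_zero, Real.sin_pi, Real.cos_zero, Real.cos_pi]
    ring
  rw [intervalIntegral.integral_congr (g := fun a => 2 * π * Real.sin a ^ 2)
    (fun a _ => hβ a), intervalIntegral.integral_const_mul,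
    integral_sin_sq, Real.sin_zero, Real.sin_pi, Real.cos_zero, Real.cos_pi]
  ring

-- PART 2 (generated)

lemma mul_four (x : ℝ) : (4:ℝ) * x = 2 * (2 * x) := by ring

lemma Kform (α : ℝ) (h0 : 0 ≤ α) (h2 : α ≤ π/2) :
    (∫ β in (0:ℝ)..π, Real.sin β ^ 2 * Wfun α β) = Fm α := by
  have hπ : 0 < π := Real.pi_pos
  have hWexp : (fun β : ℝ => Real.sin β ^ 2 * Wfun α β) = fun β : ℝ =>
      Real.sin β ^ 2 * ((Real.sin |α - β| * Real.cos |α - β| -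
        Real.sin (min (α + β) (2 * π - α - β)) * Real.cos (min (α + β) (2 * π - α - β)) +
        min (α + β) (2 * π - α - β) - |α - β|) / 2) := by
    funext β
    simp only [Wfun]
    rw [integral_sin_sq]
  have hc1 : Continuous fun β : ℝ => |α - β| := (continuous_const.sub continuous_id).abs
  have hc2 : Continuous fun β : ℝ => min (α + β) (2 * π - α - β) :=
    (continuous_const.add continuous_id).min (continuous_const.sub continuous_id)
  have hWc : Continuous fun β : ℝ => Real.sin β ^ 2 * Wfun α β := by
    rw [hWexp]
    have hA := (Real.continuous_sin.comp hc1).mul (Real.continuous_cos.comp hc1)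
    have hB := (Real.continuous_sin.comp hc2).mul (Real.continuous_cos.comp hc2)
    exact (Real.continuous_sin.pow 2).mul ((((hA.sub hB).add hc2).sub hc1).div_const 2)
  have hii : ∀ u v : ℝ, IntervalIntegrable (fun β : ℝ => Real.sin β ^ 2 * Wfun α β) volume u v :=
    fun u v => hWc.intervalIntegrable u v
  have hD1 : ∀ β ∈ Set.uIcc (0 : ℝ) (α), HasDerivAt (fun β : ℝ =>
      (-1/8) * Real.cos (2*β) + (-1/64) * Real.cos (2*α - 4*β) + (1/16) * Real.cos (2*α - 2*β) + (1/16) * Real.cos (2*α + 2*β) + (-1/64) * Real.cos (2*α + 4*β) + (-1/4) * (β * Real.sin (2*β)) + (1/4) * β^2)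
      (Real.sin β ^ 2 * Wfun α β) β := by
    intro β hβ
    rw [Set.uIcc_of_le (h0)] at hβ
    obtain ⟨hb0, hb1⟩ := hβ
    have hA_0_p2 : HasDerivAt (fun β : ℝ => 2*β) (2:ℝ) β := by
      simpa using (hasDerivAt_id β).const_mul (2:ℝ)
    have hA_2_m4 : HasDerivAt (fun β : ℝ => 2*α - 4*β) (-4:ℝ) β := by
      exact (((hasDerivAt_id β).const_mul (4:ℝ)).const_sub (2*α)).congr_deriv (by ring)
    have hA_2_m2 : HasDerivAt (fun β : ℝ => 2*α - 2*β) (-2:ℝ) β := by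
      exact (((hasDerivAt_id β).const_mul (2:ℝ)).const_sub (2*α)).congr_deriv (by ring)
    have hA_2_p2 : HasDerivAt (fun β : ℝ => 2*α + 2*β) (2:ℝ) β := by
      simpa using ((hasDerivAt_id β).const_mul (2:ℝ)).const_add (2*α)
    have hA_2_p4 : HasDerivAt (fun β : ℝ => 2*α + 4*β) (4:ℝ) β := by
      simpa using ((hasDerivAt_id β).const_mul (4:ℝ)).const_add (2*α)
    have hd : HasDerivAt (fun β : ℝ =>
        (-1/8) * Real.cos (2*β) + (-1/64) * Real.cos (2*α - 4*β) + (1/16) * Real.cos (2*α - 2*β) + (1/16) * Real.cos (2*α + 2*β) + (-1/64) * Real.cos (2*α + 4*β) + (-1/4) * (β * Real.sin (2*β)) + (1/4) * β^2)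
        ((-1/16) * Real.sin (2*α - 4*β) + (1/8) * Real.sin (2*α - 2*β) + (-1/8) * Real.sin (2*α + 2*β) + (1/16) * Real.sin (2*α + 4*β) + (1/2) * β + (-1/2) * β * Real.cos (2*β)) β := by
      have H := ((((((((hA_0_p2.cos).const_mul ((-1/8))).add ((hA_2_m4.cos).const_mul ((-1/64)))).add ((hA_2_m2.cos).const_mul ((1/16)))).add ((hA_2_p2.cos).const_mul ((1/16)))).add ((hA_2_p4.cos).const_mul ((-1/64)))).add (((hasDerivAt_id β).mul (hA_0_p2.sin)).const_mul ((-1/4)))).add ((hasDerivAt_pow 2 β).const_mul ((1/4))))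
      refine H.congr_deriv ?_
      try simp only [id_eq]
      push_cast
      ring
    have habs : |α - β| = α - β := abs_of_nonneg (by linarith)
    have hmin : min (α + β) (2 * π - α - β) = α + β := min_eq_left (by linarith)
    have hval : Real.sin β ^ 2 * Wfun α β =
        (-1/16) * Real.sin (2*α - 4*β) + (1/8) * Real.sin (2*α - 2*β) + (-1/8) * Real.sin (2*α + 2*β) + (1/16) * Real.sin (2*α + 4*β) + (1/2) * β + (-1/2) * β * Real.cos (2*β) := by
      simp only [Wfun]
      rw [habs, hmin, integral_sin_sq]
      simp only [Real.sin_add, Real.cos_add, Real.sin_sub, Real.cos_sub, Real.sin_two_mul,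
        Real.cos_two_mul', Real.sin_two_pi, Real.cos_two_pi, Real.sin_pi, Real.cos_pi, mul_four]
      linear_combination ((-1/2) * (Real.cos α)^2 * Real.sin β * Real.cos β + (1/2) * (Real.sin α)^2 * Real.sin β * Real.cos β + (1/2) * β) * Real.sin_sq_add_cos_sq β
    rw [hval]
    exact hd

  have hD2 : ∀ β ∈ Set.uIcc (α : ℝ) (π - α), HasDerivAt (fun β : ℝ =>
      (1/64) * Real.cos (2*α - 4*β) + (-1/16) * Real.cos (2*α - 2*β) + (1/16) * Real.cos (2*α + 2*β) + (-1/64) * Real.cos (2*α + 4*β) + (1/8) * Real.sin (2*α) * β + (-1/4) * α * Real.sin (2*β) + (1/2) * α * β)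
      (Real.sin β ^ 2 * Wfun α β) β := by
    intro β hβ
    rw [Set.uIcc_of_le (by linarith)] at hβ
    obtain ⟨hb0, hb1⟩ := hβ
    have hA_0_p2 : HasDerivAt (fun β : ℝ => 2*β) (2:ℝ) β := by
      simpa using (hasDerivAt_id β).const_mul (2:ℝ)
    have hA_2_m4 : HasDerivAt (fun β : ℝ => 2*α - 4*β) (-4:ℝ) β := by
      exact (((hasDerivAt_id β).const_mul (4:ℝ)).const_sub (2*α)).congr_deriv (by ring)
    have hA_2_m2 : HasDerivAt (fun β : ℝ => 2*α - 2*β) (-2:ℝ) β := by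
      exact (((hasDerivAt_id β).const_mul (2:ℝ)).const_sub (2*α)).congr_deriv (by ring)
    have hA_2_p2 : HasDerivAt (fun β : ℝ => 2*α + 2*β) (2:ℝ) β := by
      simpa using ((hasDerivAt_id β).const_mul (2:ℝ)).const_add (2*α)
    have hA_2_p4 : HasDerivAt (fun β : ℝ => 2*α + 4*β) (4:ℝ) β := by
      simpa using ((hasDerivAt_id β).const_mul (4:ℝ)).const_add (2*α)
    have hd : HasDerivAt (fun β : ℝ =>
        (1/64) * Real.cos (2*α - 4*β) + (-1/16) * Real.cos (2*α - 2*β) + (1/16) * Real.cos (2*α + 2*β) + (-1/64) * Real.cos (2*α + 4*β) + (1/8) * Real.sin (2*α) * β + (-1/4) * α * Real.sin (2*β) + (1/2) * α * β)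
        ((1/16) * Real.sin (2*α - 4*β) + (-1/8) * Real.sin (2*α - 2*β) + (1/8) * Real.sin (2*α) + (-1/8) * Real.sin (2*α + 2*β) + (1/16) * Real.sin (2*α + 4*β) + (1/2) * α + (-1/2) * α * Real.cos (2*β)) β := by
      have H := ((((((((hA_2_m4.cos).const_mul ((1/64))).add ((hA_2_m2.cos).const_mul ((-1/16)))).add ((hA_2_p2.cos).const_mul ((1/16)))).add ((hA_2_p4.cos).const_mul ((-1/64)))).add ((hasDerivAt_id β).const_mul ((1/8) * Real.sin (2*α)))).add ((hA_0_p2.sin).const_mul ((-1/4) * α))).add ((hasDerivAt_id β).const_mul ((1/2) * α)))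
      refine H.congr_deriv ?_
      try simp only [id_eq]
      push_cast
      ring
    have habs : |α - β| = β - α := by rw [abs_sub_comm]; exact abs_of_nonneg (by linarith)
    have hmin : min (α + β) (2 * π - α - β) = α + β := min_eq_left (by linarith)
    have hval : Real.sin β ^ 2 * Wfun α β =
        (1/16) * Real.sin (2*α - 4*β) + (-1/8) * Real.sin (2*α - 2*β) + (1/8) * Real.sin (2*α) + (-1/8) * Real.sin (2*α + 2*β) + (1/16) * Real.sin (2*α + 4*β) + (1/2) * α + (-1/2) * α * Real.cos (2*β) := by
      simp only [Wfun]
      rw [habs, hmin, integral_sin_sq]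
      simp only [Real.sin_add, Real.cos_add, Real.sin_sub, Real.cos_sub, Real.sin_two_mul,
        Real.cos_two_mul', Real.sin_two_pi, Real.cos_two_pi, Real.sin_pi, Real.cos_pi, mul_four]
      linear_combination ((1/4) * Real.sin α * Real.cos α + (-1/4) * Real.sin α * Real.cos α * (Real.cos β)^2 + (3/4) * Real.sin α * Real.cos α * (Real.sin β)^2 + (1/2) * α) * Real.sin_sq_add_cos_sq β
    rw [hval]
    exact hd

  have hD3 : ∀ β ∈ Set.uIcc (π - α : ℝ) (π), HasDerivAt (fun β : ℝ =>
      (1/8) * Real.cos (2*β) + (1/64) * Real.cos (2*α - 4*β) + (-1/16) * Real.cos (2*α - 2*β) + (-1/16) * Real.cos (2*α + 2*β) + (1/64) * Real.cos (2*α + 4*β) + (-1/4) * π * Real.sin (2*β) + (1/4) * (β * Real.sin (2*β)) + (1/2) * π * β + (-1/4) * β^2)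
      (Real.sin β ^ 2 * Wfun α β) β := by
    intro β hβ
    rw [Set.uIcc_of_le (by linarith)] at hβ
    obtain ⟨hb0, hb1⟩ := hβ
    have hA_0_p2 : HasDerivAt (fun β : ℝ => 2*β) (2:ℝ) β := by
      simpa using (hasDerivAt_id β).const_mul (2:ℝ)
    have hA_2_m4 : HasDerivAt (fun β : ℝ => 2*α - 4*β) (-4:ℝ) β := by
      exact (((hasDerivAt_id β).const_mul (4:ℝ)).const_sub (2*α)).congr_deriv (by ring)
    have hA_2_m2 : HasDerivAt (fun β : ℝ => 2*α - 2*β) (-2:ℝ) β := by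
      exact (((hasDerivAt_id β).const_mul (2:ℝ)).const_sub (2*α)).congr_deriv (by ring)
    have hA_2_p2 : HasDerivAt (fun β : ℝ => 2*α + 2*β) (2:ℝ) β := by
      simpa using ((hasDerivAt_id β).const_mul (2:ℝ)).const_add (2*α)
    have hA_2_p4 : HasDerivAt (fun β : ℝ => 2*α + 4*β) (4:ℝ) β := by
      simpa using ((hasDerivAt_id β).const_mul (4:ℝ)).const_add (2*α)
    have hd : HasDerivAt (fun β : ℝ =>
        (1/8) * Real.cos (2*β) + (1/64) * Real.cos (2*α - 4*β) + (-1/16) * Real.cos (2*α - 2*β) + (-1/16) * Real.cos (2*α + 2*β) + (1/64) * Real.cos (2*α + 4*β) + (-1/4) * π * Real.sin (2*β) + (1/4) * (β * Real.sin (2*β)) + (1/2) * π * β + (-1/4) * β^2)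
        ((1/16) * Real.sin (2*α - 4*β) + (-1/8) * Real.sin (2*α - 2*β) + (1/8) * Real.sin (2*α + 2*β) + (-1/16) * Real.sin (2*α + 4*β) + (1/2) * π + (-1/2) * π * Real.cos (2*β) + (-1/2) * β + (1/2) * β * Real.cos (2*β)) β := by
      have H := ((((((((((hA_0_p2.cos).const_mul ((1/8))).add ((hA_2_m4.cos).const_mul ((1/64)))).add ((hA_2_m2.cos).const_mul ((-1/16)))).add ((hA_2_p2.cos).const_mul ((-1/16)))).add ((hA_2_p4.cos).const_mul ((1/64)))).add ((hA_0_p2.sin).const_mul ((-1/4) * π))).add (((hasDerivAt_id β).mul (hA_0_p2.sin)).const_mul ((1/4)))).add ((hasDerivAt_id β).const_mul ((1/2) * π))).add ((hasDerivAt_pow 2 β).const_mul ((-1/4))))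
      refine H.congr_deriv ?_
      try simp only [id_eq]
      push_cast
      ring
    have habs : |α - β| = β - α := by rw [abs_sub_comm]; exact abs_of_nonneg (by linarith)
    have hmin : min (α + β) (2 * π - α - β) = 2 * π - α - β := min_eq_right (by linarith)
    have hval : Real.sin β ^ 2 * Wfun α β =
        (1/16) * Real.sin (2*α - 4*β) + (-1/8) * Real.sin (2*α - 2*β) + (1/8) * Real.sin (2*α + 2*β) + (-1/16) * Real.sin (2*α + 4*β) + (1/2) * π + (-1/2) * π * Real.cos (2*β) + (-1/2) * β + (1/2) * β * Real.cos (2*β) := by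
      simp only [Wfun]
      rw [habs, hmin, integral_sin_sq]
      simp only [Real.sin_add, Real.cos_add, Real.sin_sub, Real.cos_sub, Real.sin_two_mul,
        Real.cos_two_mul', Real.sin_two_pi, Real.cos_two_pi, Real.sin_pi, Real.cos_pi, mul_four]
      linear_combination ((1/2) * (Real.cos α)^2 * Real.sin β * Real.cos β + (-1/2) * (Real.sin α)^2 * Real.sin β * Real.cos β + (1/2) * π + (-1/2) * β) * Real.sin_sq_add_cos_sq β
    rw [hval]
    exact hd

  have E1 := intervalIntegral.integral_eq_sub_of_hasDerivAt hD1 (hii 0 α)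
  have E2 := intervalIntegral.integral_eq_sub_of_hasDerivAt hD2 (hii α (π - α))
  have E3 := intervalIntegral.integral_eq_sub_of_hasDerivAt hD3 (hii (π - α) π)
  rw [← intervalIntegral.integral_add_adjacent_intervals (hii 0 α) (hii α π),
    ← intervalIntegral.integral_add_adjacent_intervals (hii α (π - α)) (hii (π - α) π),
    E1, E2, E3]
  simp only [Fm]
  rw [show (2*α - 2*(π - α) : ℝ) = 2*(2*α) - 2*π by ring]
  rw [show (2*α + 4*(π - α) : ℝ) = -(2*α) + 2*π + 2*π by ring]
  rw [show (2*α - 4*(π - α) : ℝ) = 2*(3*α) - 2*π - 2*π by ring]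
  rw [show (2*α + 2*(π - α) : ℝ) = 2*π by ring]
  rw [show (2*α - 2*α : ℝ) = 0 by ring]
  rw [show (2*α + 4*α : ℝ) = 2*(3*α) by ring]
  rw [show (2*α - 4*α : ℝ) = -(2*α) by ring]
  rw [show (2*α + 2*α : ℝ) = 2*(2*α) by ring]
  rw [show (2*α - 2*0 : ℝ) = 2*α by ring]
  rw [show (2*α + 4*0 : ℝ) = 2*α by ring]
  rw [show (2*α - 4*0 : ℝ) = 2*α by ring]
  rw [show (2*α + 2*0 : ℝ) = 2*α by ring]
  rw [show (2*(π - α) : ℝ) = -(2*α) + 2*π by ring]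
  rw [show (2*α + 4*π : ℝ) = 2*α + 2*π + 2*π by ring]
  rw [show (2*α - 4*π : ℝ) = 2*α - 2*π - 2*π by ring]
  rw [show (2*0 : ℝ) = 0 by ring]
  simp only [Real.sin_add_two_pi, Real.cos_add_two_pi, Real.sin_sub_two_pi, Real.cos_sub_two_pi,
    Real.sin_two_pi, Real.cos_two_pi, Real.sin_neg, Real.cos_neg, Real.sin_zero, Real.cos_zero]
  simp only [Real.sin_two_mul, Real.cos_two_mul', Real.sin_three_mul, Real.cos_three_mul, Real.sin_pi, Real.cos_pi]
  ring

lemma Ksymm (α : ℝ) :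
    (∫ β in (0:ℝ)..π, Real.sin β ^ 2 * Wfun α β) =
      ∫ β in (0:ℝ)..π, Real.sin β ^ 2 * Wfun (π - α) β := by
  have h := intervalIntegral.integral_comp_sub_left (a := (0:ℝ)) (b := π)
    (fun β => Real.sin β ^ 2 * Wfun α β) π
  rw [show π - π = (0:ℝ) by ring, show π - (0:ℝ) = π by ring] at h
  rw [← h]
  apply intervalIntegral.integral_congr
  intro x _
  try simp only []
  rw [Real.sin_pi_sub]
  congr 1
  simp only [Wfun]
  congr 1
  · rw [abs_sub_comm]
    congr 1
    ring
  · rw [min_comm]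
    congr 1 <;> ring

lemma Fm_symm (α : ℝ) : Fm (π - α) = Fm α := by
  simp only [Fm]
  rw [show (2:ℝ) * (π - α) = 2*π - 2*α by ring]
  simp only [Real.sin_sub, Real.cos_sub, Real.sin_two_pi, Real.cos_two_pi]
  ring

lemma Kfull (α : ℝ) (hα : α ∈ Set.Icc 0 π) :
    (∫ β in (0:ℝ)..π, Real.sin β ^ 2 * Wfun α β) = Fm α := by
  obtain ⟨ha0, ha1⟩ := hα
  rcases le_total α (π/2) with h | h
  · exact Kform α ha0 h
  · rw [Ksymm α, Kform (π - α) (by linarith) (by linarith), Fm_symm]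

lemma outer_integral :
    (∫ a in (0:ℝ)..π, 4 * Real.sin a ^ 2 * Fm a) = π^3/6 + 35*π/16 := by
  have hD : ∀ α ∈ Set.uIcc (0:ℝ) π, HasDerivAt (fun α : ℝ =>
      (-11/8) * Real.sin (2*α) + (9/64) * Real.sin (4*α) + (-3/8) * π * Real.cos (2*α) + (1/32) * π * Real.cos (4*α) + (3/2) * α + (3/4) * (α * Real.cos (2*α)) + (-1/16) * (α * Real.cos (4*α)) + (-1/2) * π * (α * Real.sin (2*α)) + (1/2) * (α^2 * Real.sin (2*α)) + (1/2) * π * α^2 + (-1/3) * α^3)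
      (4 * Real.sin α ^ 2 * Fm α) α := by
    intro α _
    have hA_0_p2 : HasDerivAt (fun α : ℝ => 2*α) (2:ℝ) α := by
      simpa using (hasDerivAt_id α).const_mul (2:ℝ)
    have hA_0_p4 : HasDerivAt (fun α : ℝ => 4*α) (4:ℝ) α := by
      simpa using (hasDerivAt_id α).const_mul (4:ℝ)
    have hd : HasDerivAt (fun α : ℝ =>
        (-11/8) * Real.sin (2*α) + (9/64) * Real.sin (4*α) + (-3/8) * π * Real.cos (2*α) + (1/32) * π * Real.cos (4*α) + (3/2) * α + (3/4) * (α * Real.cos (2*α)) + (-1/16) * (α * Real.cos (4*α)) + (-1/2) * π * (α * Real.sin (2*α)) + (1/2) * (α^2 * Real.sin (2*α)) + (1/2) * π * α^2 + (-1/3) * α^3)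
        ((3/2) + (-2) * Real.cos (2*α) + (1/2) * Real.cos (4*α) + (1/4) * π * Real.sin (2*α) + (-1/8) * π * Real.sin (4*α) + (-1/2) * α * Real.sin (2*α) + (1/4) * α * Real.sin (4*α) + (1) * α * π + (-1) * α * π * Real.cos (2*α) + (-1) * α^2 + (1) * α^2 * Real.cos (2*α)) α := by
      have H := ((((((((((((hA_0_p2.sin).const_mul ((-11/8))).add ((hA_0_p4.sin).const_mul ((9/64)))).add ((hA_0_p2.cos).const_mul ((-3/8) * π))).add ((hA_0_p4.cos).const_mul ((1/32) * π))).add ((hasDerivAt_id α).const_mul ((3/2)))).add (((hasDerivAt_id α).mul (hA_0_p2.cos)).const_mul ((3/4)))).add (((hasDerivAt_id α).mul (hA_0_p4.cos)).const_mul ((-1/16)))).add (((hasDerivAt_id α).mul (hA_0_p2.sin)).const_mul ((-1/2) * π))).add (((hasDerivAt_pow 2 α).mul (hA_0_p2.sin)).const_mul ((1/2)))).add ((hasDerivAt_pow 2 α).const_mul ((1/2) * π))).add ((hasDerivAt_pow 3 α).const_mul ((-1/3))))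
      refine H.congr_deriv ?_
      try simp only [id_eq]
      push_cast
      ring
    have hval : 4 * Real.sin α ^ 2 * Fm α =
        (3/2) + (-2) * Real.cos (2*α) + (1/2) * Real.cos (4*α) + (1/4) * π * Real.sin (2*α) + (-1/8) * π * Real.sin (4*α) + (-1/2) * α * Real.sin (2*α) + (1/4) * α * Real.sin (4*α) + (1) * α * π + (-1) * α * π * Real.cos (2*α) + (-1) * α^2 + (1) * α^2 * Real.cos (2*α) := by
      simp only [Fm]
      simp only [mul_four, Real.sin_two_mul, Real.cos_two_mul']
      linear_combination ((3/2) + (-1/2) * (Real.cos α)^2 + (3/2) * (Real.sin α)^2 + (1/2) * π * Real.sin α * Real.cos α + (-1) * α * Real.sin α * Real.cos α + (1) * α * π + (-1) * α^2) * Real.sin_sq_add_cos_sq α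
    rw [hval]
    exact hd
  have hcont : Continuous fun α : ℝ => 4 * Real.sin α ^ 2 * Fm α := by
    simp only [Fm]
    fun_prop
  rw [intervalIntegral.integral_eq_sub_of_hasDerivAt hD (hcont.intervalIntegrable 0 π)]
  try simp only []
  rw [show (4*π : ℝ) = 2*π + 2*π by ring]
  rw [show (2*0 : ℝ) = 0 by ring]
  rw [show (4*0 : ℝ) = 0 by ring]
  simp only [Real.sin_add_two_pi, Real.cos_add_two_pi, Real.sin_two_pi, Real.cos_two_pi,
    Real.sin_zero, Real.cos_zero]
  ring

lemma m2 : (∫ p in S, 4 * Real.sin p.1 ^ 2 * Real.sin p.2.1 ^ 2 * Real.sin p.2.2 ^ 2) =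
    π^3/6 + 35*π/16 := by
  have h := fubini_S (fun x => Real.sin x ^ 2) (Real.continuous_sin.pow 2) 4
  try simp only [] at h
  rw [h]
  have key : ∀ a ∈ Set.uIcc (0:ℝ) π, (∫ β in (0:ℝ)..π, 4 * Real.sin a ^ 2 * Real.sin β ^ 2 *
      ∫ ω in (|a - β|)..(min (a + β) (2 * π - a - β)), Real.sin ω ^ 2) =
      4 * Real.sin a ^ 2 * Fm a := by
    intro a ha
    rw [Set.uIcc_of_le Real.pi_pos.le] at ha
    have e1 : ∀ β ∈ Set.uIcc (0:ℝ) π, 4 * Real.sin a ^ 2 * Real.sin β ^ 2 *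
        (∫ ω in (|a - β|)..(min (a + β) (2 * π - a - β)), Real.sin ω ^ 2) =
        (4 * Real.sin a ^ 2) * (Real.sin β ^ 2 * Wfun a β) := by
      intro β _
      simp only [Wfun]
      ring
    rw [intervalIntegral.integral_congr e1, intervalIntegral.integral_const_mul, Kfull a ha]
  rw [intervalIntegral.integral_congr key]
  exact outer_integral

end QuadMomentsAux

theorem quadrilateral_area_moments :
    ((3 / π ^ 3) * ∫ p in {p : ℝ × ℝ × ℝ |
        p.1 ∈ Set.Icc 0 π ∧ p.2.1 ∈ Set.Icc 0 π ∧ p.2.2 ∈ Set.Icc 0 π ∧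
        p.1 + p.2.1 > p.2.2 ∧ p.1 + p.2.2 > p.2.1 ∧ p.2.1 + p.2.2 > p.1 ∧
        p.1 + p.2.1 + p.2.2 < 2 * π},
      2 * Real.sin p.1 * Real.sin p.2.1 * Real.sin p.2.2 = 3 / π) ∧
    ((3 / π ^ 3) * ∫ p in {p : ℝ × ℝ × ℝ |
        p.1 ∈ Set.Icc 0 π ∧ p.2.1 ∈ Set.Icc 0 π ∧ p.2.2 ∈ Set.Icc 0 π ∧
        p.1 + p.2.1 > p.2.2 ∧ p.1 + p.2.2 > p.2.1 ∧ p.2.1 + p.2.2 > p.1 ∧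
        p.1 + p.2.1 + p.2.2 < 2 * π},
      4 * Real.sin p.1 ^ 2 * Real.sin p.2.1 ^ 2 * Real.sin p.2.2 ^ 2 =
      1 / 2 + 105 / (16 * π ^ 2)) := by
  constructor
  · have h1 : (3 / π ^ 3) * (∫ p in QuadMomentsAux.S,
        2 * Real.sin p.1 * Real.sin p.2.1 * Real.sin p.2.2) = 3 / π := by
      rw [QuadMomentsAux.m1]
      have hπ : (π : ℝ) ≠ 0 := Real.pi_ne_zero
      field_simp
    exact h1
  · have h2 : (3 / π ^ 3) * (∫ p in QuadMomentsAux.S,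
        4 * Real.sin p.1 ^ 2 * Real.sin p.2.1 ^ 2 * Real.sin p.2.2 ^ 2) =
        1 / 2 + 105 / (16 * π ^ 2) := by
      rw [QuadMomentsAux.m2]
      have hπ : (π : ℝ) ≠ 0 := Real.pi_ne_zero
      field_simp
      ring
    exact h2
end
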